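/- arXiv:2302.12659 — 5 statements merged into one kernel-verified Lean document; each statement's English description precedes it below -/
import Mathlib

section
/- The monomials τ^E ξ^R, where E = (e₀, e₁, …) and R = (r₁, r₂, …) range over all finitely supported integer sequences with every e_s ∈ {0, 1} and every r_s ≥ 0, form a basis of 𝒜 as a k-module. (Paper's Lemma 'left H-basis of 𝒜_{∗,∗}', in its substantive case ℓ = 2; for odd ℓ the statement is the standard exterior–polynomial basis.) -/
open MvPolynomial TensorProduct

noncomputable section

/-- Variables of the dual motivic Steenrod algebra: `.inl i` is `τᵢ`, `.inr i` is `ξ_{i+1}`. -/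
abbrev MotVar : Type := ℕ ⊕ ℕ

variable (k : Type) [CommRing k]

/-- `τᵢ` as a polynomial generator. -/
def tP (i : ℕ) : MvPolynomial MotVar k := X (Sum.inl i)

/-- `ξᵢ` as a polynomial generator, with the convention `ξ₀ = 1`. -/
def xP : ℕ → MvPolynomial MotVar k
  | 0 => 1
  | i + 1 => X (Sum.inr i)

variable (τ ρ : k)

/-- The ideal of defining relations `τᵢ² = τ·ξ_{i+1} + ρ·τ_{i+1} + ρ·τ₀·ξ_{i+1}`. -/
def relIdeal : Ideal (MvPolynomial MotVar k) :=
  Ideal.span (Set.range fun i : ℕ =>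
    tP k i ^ 2 - (C τ * xP k (i + 1) + C ρ * tP k (i + 1) + C ρ * tP k 0 * xP k (i + 1)))

/-- The mod 2 dual motivic Steenrod algebra over `k` (with `H_{*,*}` replaced by `k`). -/
abbrev DSA : Type := MvPolynomial MotVar k ⧸ relIdeal k τ ρ

/-- The canonical projection onto the dual Steenrod algebra. -/
def mkDSA : MvPolynomial MotVar k →+* DSA k τ ρ := Ideal.Quotient.mk _

/-- The monomial `τ^E ξ^R`, where `R i` records the exponent `r_{i+1}` of `ξ_{i+1}`. -/
def monP (E R : ℕ →₀ ℕ) : MvPolynomial MotVar k :=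
  (E.prod fun i e => tP k i ^ e) * (R.prod fun i r => xP k (i + 1) ^ r)

namespace Stmt0Aux

abbrev BIdx : Type := {p : (ℕ →₀ ℕ) × (ℕ →₀ ℕ) // ∀ s, p.1 s ≤ 1}

def sl (i : ℕ) : MotVar →₀ ℕ := Finsupp.single (Sum.inl i) 1
def sr (i : ℕ) : MotVar →₀ ℕ := Finsupp.single (Sum.inr i) 1
def dbl (i : ℕ) : MotVar →₀ ℕ := Finsupp.single (Sum.inl i) 2

def tdeg (d : MotVar →₀ ℕ) : ℕ := d.sum fun v n => Sum.elim (fun _ => n) (fun _ => 0) v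

lemma tdeg_add (a b : MotVar →₀ ℕ) : tdeg (a + b) = tdeg a + tdeg b :=
  Finsupp.sum_add_index' (fun v => by cases v <;> simp) (fun v m n => by cases v <;> simp)

lemma tdeg_single_inl (i n : ℕ) : tdeg (Finsupp.single (Sum.inl i) n) = n := by
  rw [tdeg, Finsupp.sum_single_index] <;> rfl

lemma tdeg_single_inr (i n : ℕ) : tdeg (Finsupp.single (Sum.inr i) n) = 0 := by
  rw [tdeg, Finsupp.sum_single_index] <;> rfl

lemma tdeg_sl (i : ℕ) : tdeg (sl i) = 1 := tdeg_single_inl i 1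
lemma tdeg_sr (i : ℕ) : tdeg (sr i) = 0 := tdeg_single_inr i 1
lemma tdeg_dbl (i : ℕ) : tdeg (dbl i) = 2 := tdeg_single_inl i 2

def splitP (d : MotVar →₀ ℕ) : (ℕ →₀ ℕ) × (ℕ →₀ ℕ) := Finsupp.sumFinsuppEquivProdFinsupp d

lemma splitP_fst (d : MotVar →₀ ℕ) (s : ℕ) : (splitP d).1 s = d (Sum.inl s) :=
  Finsupp.fst_sumFinsuppEquivProdFinsupp d s

lemma splitP_snd (d : MotVar →₀ ℕ) (s : ℕ) : (splitP d).2 s = d (Sum.inr s) :=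
  Finsupp.snd_sumFinsuppEquivProdFinsupp d s

variable {k}

open Classical in
/-- normal form of a monomial -/
def N (τ ρ : k) (d : MotVar →₀ ℕ) : BIdx →₀ k :=
  if h : ∃ j, 2 ≤ d (Sum.inl j) then
    τ • N τ ρ (d - dbl (Nat.find h) + sr (Nat.find h))
      + ρ • N τ ρ (d - dbl (Nat.find h) + sl (Nat.find h + 1))
      + ρ • N τ ρ (d - dbl (Nat.find h) + sl 0 + sr (Nat.find h))
  else Finsupp.single ⟨splitP d, fun s => by
      rw [splitP_fst]
      exact Nat.lt_succ_iff.mp (lt_of_not_ge fun hc => h ⟨s, hc⟩)⟩ 1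
termination_by tdeg d
decreasing_by
  all_goals {
    have hle : dbl (Nat.find h) ≤ d := Finsupp.single_le_iff.mpr (Nat.find_spec h)
    have hd : d - dbl (Nat.find h) + dbl (Nat.find h) = d := tsub_add_cancel_of_le hle
    have h2 : tdeg (d - dbl (Nat.find h)) + 2 = tdeg d := by
      conv_rhs => rw [← hd]
      rw [tdeg_add, tdeg_dbl]
    simp only [tdeg_add, tdeg_sl, tdeg_sr]
    omega }


lemma N_card2 (τ ρ : k) (d : MotVar →₀ ℕ) (h : ∃ j, 2 ≤ d (Sum.inl j)) :
    N τ ρ d =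
      τ • N τ ρ (d - dbl (Nat.find h) + sr (Nat.find h))
      + ρ • N τ ρ (d - dbl (Nat.find h) + sl (Nat.find h + 1))
      + ρ • N τ ρ (d - dbl (Nat.find h) + sl 0 + sr (Nat.find h)) := by
  rw [N]
  rw [dif_pos h]

lemma keyA (τ ρ : k) : ∀ n (m : MotVar →₀ ℕ), tdeg m + 2 ≤ n → ∀ i,
    N τ ρ (dbl i + m) =
      τ • N τ ρ (m + sr i) + ρ • N τ ρ (m + sl (i + 1)) + ρ • N τ ρ (m + sl 0 + sr i) := by
  intro n
  induction n using Nat.strong_induction_on with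
  | _ n IH =>
  intro m hn i
  set D := dbl i + m with hD
  have hDi : 2 ≤ D (Sum.inl i) := by
    simp [hD, dbl, Finsupp.add_apply, Finsupp.single_apply]
  have h : ∃ j, 2 ≤ D (Sum.inl j) := ⟨i, hDi⟩
  rw [N_card2 τ ρ D h]
  set j := Nat.find h with hj
  have hj2 : 2 ≤ D (Sum.inl j) := Nat.find_spec h
  by_cases hji : j = i
  · rw [hji, show D - dbl i = m from by rw [hD]; exact add_tsub_cancel_left _ _]
  · -- j ≠ i
    have hmj : 2 ≤ m (Sum.inl j) := by
      have : D (Sum.inl j) = m (Sum.inl j) := by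
        simp [hD, dbl, Finsupp.add_apply, Finsupp.single_apply, Sum.inl.injEq,
          (Ne.symm hji : i ≠ j)]
      omega
    have hlej : dbl j ≤ m := Finsupp.single_le_iff.mpr hmj
    set m₀ := m - dbl j with hm₀
    have hm : dbl j + m₀ = m := by
      rw [hm₀, add_comm]; exact tsub_add_cancel_of_le hlej
    have hDj : D - dbl j = dbl i + m₀ := by
      rw [hD, hm₀]; exact add_tsub_assoc_of_le hlej _
    have htm : tdeg m = tdeg m₀ + 2 := by
      rw [← hm, tdeg_add, tdeg_dbl]; ring
    have hIH : ∀ (m' : MotVar →₀ ℕ), tdeg m' ≤ tdeg m₀ + 1 → ∀ i',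
        N τ ρ (dbl i' + m') =
          τ • N τ ρ (m' + sr i') + ρ • N τ ρ (m' + sl (i' + 1))
            + ρ • N τ ρ (m' + sl 0 + sr i') := by
      intro m' hm' i'
      exact IH (tdeg m₀ + 3) (by omega) m' (by omega) i'
    rw [hDj]
    rw [show dbl i + m₀ + sr j = dbl i + (m₀ + sr j) from by rw [add_assoc],
        show dbl i + m₀ + sl (j + 1) = dbl i + (m₀ + sl (j + 1)) from by rw [add_assoc],
        show dbl i + m₀ + sl 0 + sr j = dbl i + (m₀ + sl 0 + sr j) from by
          rw [add_assoc, add_assoc, add_assoc]]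
    rw [hIH (m₀ + sr j) (by simp [tdeg_add, tdeg_sr]; try omega) i,
        hIH (m₀ + sl (j + 1)) (by simp [tdeg_add, tdeg_sl]; try omega) i,
        hIH (m₀ + sl 0 + sr j) (by simp [tdeg_add, tdeg_sl, tdeg_sr]; try omega) i]
    rw [show m + sr i = dbl j + (m₀ + sr i) from by rw [← hm, add_assoc],
        show m + sl (i + 1) = dbl j + (m₀ + sl (i + 1)) from by rw [← hm, add_assoc],
        show m + sl 0 + sr i = dbl j + (m₀ + sl 0 + sr i) from by
          rw [← hm, add_assoc, add_assoc, add_assoc]]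
    rw [hIH (m₀ + sr i) (by simp [tdeg_add, tdeg_sr]; try omega) j,
        hIH (m₀ + sl (i + 1)) (by simp [tdeg_add, tdeg_sl]; try omega) j,
        hIH (m₀ + sl 0 + sr i) (by simp [tdeg_add, tdeg_sl, tdeg_sr]; try omega) j]
    rw [show m₀ + sr i + sr j = m₀ + sr j + sr i from by abel,
        show m₀ + sr i + sl (j + 1) = m₀ + sl (j + 1) + sr i from by abel,
        show m₀ + sr i + sl 0 + sr j = m₀ + sl 0 + sr j + sr i from by abel,
        show m₀ + sl (i + 1) + sr j = m₀ + sr j + sl (i + 1) from by abel,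
        show m₀ + sl (i + 1) + sl (j + 1) = m₀ + sl (j + 1) + sl (i + 1) from by abel,
        show m₀ + sl (i + 1) + sl 0 + sr j = m₀ + sl 0 + sr j + sl (i + 1) from by abel,
        show m₀ + sl 0 + sr i + sr j = m₀ + sr j + sl 0 + sr i from by abel,
        show m₀ + sl 0 + sr i + sl (j + 1) = m₀ + sl (j + 1) + sl 0 + sr i from by abel,
        show m₀ + sl 0 + sr i + sl 0 + sr j = m₀ + sl 0 + sr j + sl 0 + sr i from by abel]
    module


variable (k)

/-- combine exponent pair into one exponent vector -/
def cmb (E R : ℕ →₀ ℕ) : MotVar →₀ ℕ := E.mapDomain Sum.inl + R.mapDomain Sum.inr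

lemma cmb_inl (E R : ℕ →₀ ℕ) (s : ℕ) : cmb E R (Sum.inl s) = E s := by
  rw [cmb, Finsupp.add_apply, Finsupp.mapDomain_apply Sum.inl_injective,
    Finsupp.mapDomain_notin_range _ _ (by simp), add_zero]

lemma cmb_inr (E R : ℕ →₀ ℕ) (s : ℕ) : cmb E R (Sum.inr s) = R s := by
  rw [cmb, Finsupp.add_apply, Finsupp.mapDomain_apply Sum.inr_injective,
    Finsupp.mapDomain_notin_range _ _ (by simp), zero_add]

lemma monP_eq (E R : ℕ →₀ ℕ) : monP k E R = monomial (cmb E R) 1 := by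
  rw [monomial_eq, map_one, one_mul, cmb,
    Finsupp.prod_add_index (by intros; simp) (by intros; simp [pow_add]),
    Finsupp.prod_mapDomain_index_inj Sum.inl_injective,
    Finsupp.prod_mapDomain_index_inj Sum.inr_injective]
  rfl

variable {k}

lemma N_reduced (τ ρ : k) (d : MotVar →₀ ℕ) (h : ¬ ∃ j, 2 ≤ d (Sum.inl j))
    (hp : ∀ s, (splitP d).1 s ≤ 1) :
    N τ ρ d = Finsupp.single ⟨splitP d, hp⟩ 1 := by
  rw [N, dif_neg h]

lemma N_cmb (τ ρ : k) (p : BIdx) : N τ ρ (cmb p.1.1 p.1.2) = Finsupp.single p 1 := by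
  have h : ¬ ∃ j, 2 ≤ (cmb p.1.1 p.1.2) (Sum.inl j) := by
    rintro ⟨j, hj⟩
    rw [cmb_inl] at hj
    exact absurd (p.2 j) (by omega)
  have hsp : splitP (cmb p.1.1 p.1.2) = p.1 := by
    apply Prod.ext
    · ext s; rw [splitP_fst, cmb_inl]
    · ext s; rw [splitP_snd, cmb_inr]
  have hp : ∀ s, (splitP (cmb p.1.1 p.1.2)).1 s ≤ 1 := fun s => by
    rw [splitP_fst, cmb_inl]; exact p.2 s
  rw [N_reduced τ ρ _ h hp]
  congr 1
  exact Subtype.ext hsp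

/-- the normal form linear map -/
def piL (τ ρ : k) : MvPolynomial MotVar k →ₗ[k] (BIdx →₀ k) :=
  (MvPolynomial.basisMonomials MotVar k).constr k (N τ ρ)

lemma piL_monomial (τ ρ : k) (d : MotVar →₀ ℕ) :
    piL τ ρ (monomial d 1) = N τ ρ d := by
  have h := (MvPolynomial.basisMonomials MotVar k).constr_basis k (N τ ρ) d
  rwa [show (MvPolynomial.basisMonomials MotVar k) d = monomial d 1 from
    congrFun (MvPolynomial.coe_basisMonomials MotVar k) d] at h

lemma mono_mul_rel (τ ρ : k) (d : MotVar →₀ ℕ) (i : ℕ) :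
    monomial d 1 * (tP k i ^ 2 -
        (C τ * xP k (i + 1) + C ρ * tP k (i + 1) + C ρ * tP k 0 * xP k (i + 1)))
      = monomial (d + dbl i) 1 - (τ • monomial (d + sr i) (1 : k)
          + ρ • monomial (d + sl (i + 1)) (1 : k)
          + ρ • monomial (d + sl 0 + sr i) (1 : k)) := by
  have hX : ∀ v : MotVar, (X v : MvPolynomial MotVar k) = monomial (Finsupp.single v 1) 1 :=
    fun v => rfl
  simp only [tP, xP, hX, monomial_pow, Finsupp.smul_single, smul_eq_mul, mul_one, one_pow,
    mul_sub, mul_add, monomial_mul, C_mul_monomial, smul_monomial,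
    one_mul, dbl, sl, sr, add_assoc, Finsupp.single_add]


lemma piL_mono_mul_rel (τ ρ : k) (d : MotVar →₀ ℕ) (i : ℕ) :
    piL τ ρ (monomial d 1 * (tP k i ^ 2 -
        (C τ * xP k (i + 1) + C ρ * tP k (i + 1) + C ρ * tP k 0 * xP k (i + 1)))) = 0 := by
  rw [mono_mul_rel, map_sub, map_add, map_add, map_smul, map_smul, map_smul,
    piL_monomial, piL_monomial, piL_monomial, piL_monomial]
  rw [show d + dbl i = dbl i + d from add_comm _ _,
    keyA τ ρ (tdeg d + 2) d le_rfl i]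
  abel

lemma piL_mul_rel (τ ρ : k) (g : MvPolynomial MotVar k) (i : ℕ) :
    piL τ ρ (g * (tP k i ^ 2 -
        (C τ * xP k (i + 1) + C ρ * tP k (i + 1) + C ρ * tP k 0 * xP k (i + 1)))) = 0 := by
  induction g using MvPolynomial.induction_on' with
  | monomial d c =>
    rw [show (monomial d c : MvPolynomial MotVar k) = c • monomial d 1 from by
        rw [smul_monomial, smul_eq_mul, mul_one],
      smul_mul_assoc, map_smul, piL_mono_mul_rel, smul_zero]
  | add p q hp hq => rw [add_mul, map_add, hp, hq, add_zero]

lemma piL_ideal (τ ρ : k) {x : MvPolynomial MotVar k} (hx : x ∈ relIdeal k τ ρ) :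
    piL τ ρ x = 0 := by
  have H : ∀ g, piL τ ρ (g * x) = 0 := by
    refine Submodule.span_induction (p := fun y _ => ∀ g, piL τ ρ (g * y) = 0)
      ?_ ?_ ?_ ?_ hx
    · rintro y ⟨i, rfl⟩ g
      exact piL_mul_rel τ ρ g i
    · intro g; rw [mul_zero, map_zero]
    · intro a b _ _ ha hb g
      rw [mul_add, map_add, ha g, hb g, add_zero]
    · intro a y _ hy g
      rw [smul_eq_mul, ← mul_assoc, hy (g * a)]
  simpa using H 1

lemma hli (τ ρ : k) :
    LinearIndependent k (fun p : BIdx => mkDSA k τ ρ (monP k p.1.1 p.1.2)) := by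
  rw [linearIndependent_iff]
  intro l hl
  set w := Finsupp.linearCombination k (fun p : BIdx => monP k p.1.1 p.1.2) l with hw
  have hmem : w ∈ relIdeal k τ ρ := by
    rw [← Ideal.Quotient.eq_zero_iff_mem]
    have : (Ideal.Quotient.mk (relIdeal k τ ρ)) w
        = (Ideal.Quotient.mkₐ k (relIdeal k τ ρ)).toLinearMap w := rfl
    rw [this, hw, Finsupp.apply_linearCombination]
    exact hl
  have h0 := piL_ideal τ ρ hmem
  rw [hw, Finsupp.apply_linearCombination] at h0
  have hc : (⇑(piL τ ρ) ∘ fun p : BIdx => monP k p.1.1 p.1.2)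
      = fun p : BIdx => Finsupp.single p (1 : k) := by
    funext p
    simp only [Function.comp_apply, monP_eq, piL_monomial, N_cmb]
  rw [hc] at h0
  rw [Finsupp.linearCombination_apply] at h0
  have : (l.sum fun p c => c • Finsupp.single p (1 : k)) = l := by
    rw [show (fun (p : BIdx) (c : k) => c • Finsupp.single p (1 : k))
        = fun p c => Finsupp.single p c from by
      funext p c; rw [Finsupp.smul_single, smul_eq_mul, mul_one]]
    exact Finsupp.sum_single l
  rwa [this] at h0

lemma span_mono (τ ρ : k) : ∀ (n : ℕ) (d : MotVar →₀ ℕ), tdeg d ≤ n →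
    mkDSA k τ ρ (monomial d 1) ∈ Submodule.span k
      (Set.range fun p : BIdx => mkDSA k τ ρ (monP k p.1.1 p.1.2)) := by
  intro n
  induction n using Nat.strong_induction_on with
  | _ n IH =>
  intro d hd
  by_cases h : ∃ j, 2 ≤ d (Sum.inl j)
  · obtain ⟨j, hj⟩ := h
    have hle : dbl j ≤ d := Finsupp.single_le_iff.mpr hj
    set m := d - dbl j with hm
    have hdm : m + dbl j = d := tsub_add_cancel_of_le hle
    have htd : tdeg m + 2 = tdeg d := by
      conv_rhs => rw [← hdm]
      rw [tdeg_add, tdeg_dbl]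
    have hrel : (tP k j ^ 2 - (C τ * xP k (j + 1) + C ρ * tP k (j + 1)
        + C ρ * tP k 0 * xP k (j + 1))) ∈ relIdeal k τ ρ :=
      Ideal.subset_span ⟨j, rfl⟩
    have h0 : mkDSA k τ ρ (monomial m 1 * (tP k j ^ 2 - (C τ * xP k (j + 1)
        + C ρ * tP k (j + 1) + C ρ * tP k 0 * xP k (j + 1)))) = 0 :=
      Ideal.Quotient.eq_zero_iff_mem.mpr (Ideal.mul_mem_left _ _ hrel)
    have hsplit : (monomial d 1 : MvPolynomial MotVar k)
        = τ • monomial (m + sr j) 1 + ρ • monomial (m + sl (j + 1)) 1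
          + ρ • monomial (m + sl 0 + sr j) 1
          + monomial m 1 * (tP k j ^ 2 - (C τ * xP k (j + 1) + C ρ * tP k (j + 1)
            + C ρ * tP k 0 * xP k (j + 1))) := by
      rw [mono_mul_rel, hdm]
      module
    have hφ : ∀ f : MvPolynomial MotVar k, mkDSA k τ ρ f
        = (Ideal.Quotient.mkₐ k (relIdeal k τ ρ)).toLinearMap f := fun f => rfl
    rw [hsplit, hφ, map_add, map_add, map_add, map_smul, map_smul, map_smul, ← hφ _, ← hφ _,
      ← hφ _, ← hφ _, h0, add_zero]
    have hIH : ∀ m' : MotVar →₀ ℕ, tdeg m' ≤ tdeg m + 1 →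
        mkDSA k τ ρ (monomial m' 1) ∈ Submodule.span k
          (Set.range fun p : BIdx => mkDSA k τ ρ (monP k p.1.1 p.1.2)) := by
      intro m' hm'
      exact IH (tdeg m + 1) (by omega) m' hm'
    refine Submodule.add_mem _ (Submodule.add_mem _ ?_ ?_) ?_
    · exact Submodule.smul_mem _ _ (hIH _ (by simp [tdeg_add, tdeg_sr]))
    · exact Submodule.smul_mem _ _ (hIH _ (by simp [tdeg_add, tdeg_sl]))
    · exact Submodule.smul_mem _ _ (hIH _ (by simp [tdeg_add, tdeg_sl, tdeg_sr]))
  · have hp : ∀ s, (splitP d).1 s ≤ 1 := fun s => by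
      rw [splitP_fst]
      exact Nat.lt_succ_iff.mp (lt_of_not_ge fun hc => h ⟨s, hc⟩)
    have hcmb : cmb (splitP d).1 (splitP d).2 = d := by
      ext v
      cases v with
      | inl s => rw [cmb_inl, splitP_fst]
      | inr s => rw [cmb_inr, splitP_snd]
    have hmon : (monomial d 1 : MvPolynomial MotVar k)
        = monP k (splitP d).1 (splitP d).2 := by
      rw [monP_eq, hcmb]
    exact Submodule.subset_span ⟨⟨splitP d, hp⟩, by rw [hmon]⟩

lemma hsp (τ ρ : k) : ⊤ ≤ Submodule.span k
    (Set.range fun p : BIdx => mkDSA k τ ρ (monP k p.1.1 p.1.2)) := by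
  intro x hx
  obtain ⟨f, rfl⟩ := Ideal.Quotient.mk_surjective (I := relIdeal k τ ρ) x
  clear hx
  show mkDSA k τ ρ f ∈ _
  induction f using MvPolynomial.induction_on' with
  | monomial d c =>
    rw [show (monomial d c : MvPolynomial MotVar k) = c • monomial d 1 from by
        rw [smul_monomial, smul_eq_mul, mul_one],
      show mkDSA k τ ρ (c • monomial d 1)
        = c • mkDSA k τ ρ (monomial d 1) from
        map_smul (Ideal.Quotient.mkₐ k (relIdeal k τ ρ)).toLinearMap c _]
    exact Submodule.smul_mem _ _ (span_mono τ ρ (tdeg d) d le_rfl)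
  | add p q hp hq =>
    rw [show mkDSA k τ ρ (p + q) = mkDSA k τ ρ p + mkDSA k τ ρ q from map_add _ _ _]
    exact Submodule.add_mem _ hp hq

end Stmt0Aux

/-- The monomials `τ^E ξ^R`, where `E` and `R` range over finitely
supported sequences with every `e_s ∈ {0,1}` and every `r_s ≥ 0`, form a basis of the
mod 2 dual motivic Steenrod algebra `𝒜` as a `k`-module. -/
theorem statement0 (k : Type) [CommRing k] (h2 : (2 : k) = 0) (τ ρ : k) :
    ∃ b : Module.Basis {p : (ℕ →₀ ℕ) × (ℕ →₀ ℕ) // ∀ s, p.1 s ≤ 1} k (DSA k τ ρ),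
      ∀ p, b p = mkDSA k τ ρ (monP k p.1.1 p.1.2) := by
  refine ⟨Module.Basis.mk (Stmt0Aux.hli τ ρ) (Stmt0Aux.hsp τ ρ), fun p => ?_⟩
  rw [Module.Basis.mk_apply]

end
end

section
/- Define the topological degree of a monomial by deg(τᵢ) = 2^{i+1} − 1 and deg(ξᵢ) = 2^{i+1} − 2, extended additively, and for t ≥ 0 let F^t ⊆ 𝒜 be the k-submodule spanned by the basis monomials τ^E ξ^R (all e_s ∈ {0,1}) of topological degree ≥ t. Let ε : 𝒜 → k be the k-algebra homomorphism sending every τᵢ and every ξᵢ to 0. Then F^1 = ker(ε), and F^t · F^1 ⊆ F^{t+1} for every t ≥ 0. (The key step in the paper's proof that the monomials also form a right H-module basis.) -/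
open MvPolynomial TensorProduct

noncomputable section

variable (k : Type) [CommRing k]

variable (τ ρ : k)

/-- The topological degree of the monomial `τ^E ξ^R`:
`deg τᵢ = 2^(i+1) - 1` and `deg ξ_{i+1} = 2^(i+2) - 2`. -/
def mdeg (E R : ℕ →₀ ℕ) : ℕ :=
  E.sum (fun i e => e * (2 ^ (i + 1) - 1)) + R.sum (fun i r => r * (2 ^ (i + 2) - 2))

/-- The filtration `F^t ⊆ 𝒜`: the `k`-span of the basis monomials of topological
degree at least `t`. -/
def Filt (t : ℕ) : Submodule k (DSA k τ ρ) :=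
  Submodule.span k {x | ∃ E R : ℕ →₀ ℕ, (∀ s, E s ≤ 1) ∧ t ≤ mdeg E R ∧
    x = mkDSA k τ ρ (monP k E R)}

lemma monP_mul (E R E' R' : ℕ →₀ ℕ) :
    monP k (E + E') (R + R') = monP k E R * monP k E' R' := by
  unfold monP
  rw [Finsupp.prod_add_index' (fun _ => pow_zero _) (fun _ _ _ => pow_add _ _ _),
      Finsupp.prod_add_index' (fun _ => pow_zero _) (fun _ _ _ => pow_add _ _ _)]
  ring

lemma mdeg_add (E R E' R' : ℕ →₀ ℕ) :
    mdeg (E + E') (R + R') = mdeg E R + mdeg E' R' := by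
  unfold mdeg
  rw [Finsupp.sum_add_index' (h := fun i e => e * (2 ^ (i + 1) - 1))
        (fun _ => zero_mul _) (fun _ b c => add_mul b c _),
      Finsupp.sum_add_index' (h := fun i r => r * (2 ^ (i + 2) - 2))
        (fun _ => zero_mul _) (fun _ b c => add_mul b c _)]
  ring

lemma monP_zero : monP k 0 0 = 1 := by
  unfold monP; rw [Finsupp.prod_zero_index, Finsupp.prod_zero_index, mul_one]

lemma monP_single_left (j m : ℕ) : monP k (Finsupp.single j m) 0 = tP k j ^ m := by
  unfold monP
  rw [Finsupp.prod_single_index (h := fun i e => tP k i ^ e) (pow_zero _),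
      Finsupp.prod_zero_index, mul_one]

lemma monP_single_right (j m : ℕ) : monP k 0 (Finsupp.single j m) = xP k (j + 1) ^ m := by
  unfold monP
  rw [Finsupp.prod_single_index (h := fun i r => xP k (i + 1) ^ r) (pow_zero _),
      Finsupp.prod_zero_index, one_mul]

lemma mdeg_single_left (j m : ℕ) : mdeg (Finsupp.single j m) 0 = m * (2 ^ (j + 1) - 1) := by
  unfold mdeg
  rw [Finsupp.sum_single_index (h := fun i e => e * (2 ^ (i + 1) - 1)) (zero_mul _),
      Finsupp.sum_zero_index, add_zero]

lemma mdeg_single_right (j m : ℕ) : mdeg 0 (Finsupp.single j m) = m * (2 ^ (j + 2) - 2) := by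
  unfold mdeg
  rw [Finsupp.sum_single_index (h := fun i r => r * (2 ^ (i + 2) - 2)) (zero_mul _),
      Finsupp.sum_zero_index, zero_add]

lemma mdeg_zero : mdeg 0 0 = 0 := by
  simp [mdeg]

lemma Filt_mono {t t' : ℕ} (h : t ≤ t') : Filt k τ ρ t' ≤ Filt k τ ρ t := by
  apply Submodule.span_mono
  rintro x ⟨E, R, hE, ht, rfl⟩
  exact ⟨E, R, hE, le_trans h ht, rfl⟩

lemma mk_C_mul (a : k) (p : MvPolynomial MotVar k) :
    mkDSA k τ ρ (C a * p) = a • mkDSA k τ ρ p := by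
  rw [← MvPolynomial.smul_eq_C_mul]
  show Ideal.Quotient.mk _ (a • p) = _
  rw [← Ideal.Quotient.mkₐ_eq_mk k, map_smul]
  rfl

/-- Measure for the rewriting induction: total τ-exponent. -/
def muE (E : ℕ →₀ ℕ) : ℕ := E.sum fun _ e => e

lemma muE_add (E E' : ℕ →₀ ℕ) : muE (E + E') = muE E + muE E' := by
  unfold muE
  exact Finsupp.sum_add_index' (fun _ => rfl) (fun _ _ _ => rfl)

lemma muE_single (j m : ℕ) : muE (Finsupp.single j m) = m :=
  Finsupp.sum_single_index rfl

/-- Key lemma: every (unrestricted) monomial lies in the filtration piece of its degree. -/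
lemma mem_filt : ∀ n (E R : ℕ →₀ ℕ), muE E = n →
    mkDSA k τ ρ (monP k E R) ∈ Filt k τ ρ (mdeg E R) := by
  intro n
  induction n using Nat.strong_induction_on with
  | _ n ih =>
    intro E R hn
    by_cases hres : ∀ s, E s ≤ 1
    · exact Submodule.subset_span ⟨E, R, hres, le_refl _, rfl⟩
    · push_neg at hres
      obtain ⟨i, hi⟩ := hres
      have hi : 2 ≤ E i := hi
      set E' := E - Finsupp.single i 2 with hE'def
      have hE : E = E' + Finsupp.single i 2 := by
        rw [hE'def, tsub_add_cancel_of_le (Finsupp.single_le_iff.mpr hi)]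
      have hmon : monP k E R = monP k E' R * tP k i ^ 2 := by
        calc monP k E R = monP k (E' + Finsupp.single i 2) (R + 0) := by rw [← hE, add_zero]
          _ = monP k E' R * monP k (Finsupp.single i 2) 0 := monP_mul k _ _ _ _
          _ = monP k E' R * tP k i ^ 2 := by rw [monP_single_left]
      have hmdeg : mdeg E R = mdeg E' R + 2 * (2 ^ (i + 1) - 1) := by
        calc mdeg E R = mdeg (E' + Finsupp.single i 2) (R + 0) := by rw [← hE, add_zero]
          _ = mdeg E' R + mdeg (Finsupp.single i 2) 0 := mdeg_add _ _ _ _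
          _ = mdeg E' R + 2 * (2 ^ (i + 1) - 1) := by rw [mdeg_single_left]
      have hrel : mkDSA k τ ρ (tP k i ^ 2) = mkDSA k τ ρ
          (C τ * xP k (i + 1) + C ρ * tP k (i + 1) + C ρ * tP k 0 * xP k (i + 1)) := by
        show Ideal.Quotient.mk _ _ = Ideal.Quotient.mk _ _
        rw [Ideal.Quotient.eq]
        exact Ideal.subset_span ⟨i, rfl⟩
      have hA : monP k E' R * xP k (i + 1) = monP k E' (R + Finsupp.single i 1) := by
        have h := monP_mul k E' R 0 (Finsupp.single i 1)
        rw [add_zero, monP_single_right, pow_one] at h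
        exact h.symm
      have hB : monP k E' R * tP k (i + 1) = monP k (E' + Finsupp.single (i + 1) 1) R := by
        have h := monP_mul k E' R (Finsupp.single (i + 1) 1) 0
        rw [add_zero, monP_single_left, pow_one] at h
        exact h.symm
      have hC : monP k E' R * (tP k 0 * xP k (i + 1))
          = monP k (E' + Finsupp.single 0 1) (R + Finsupp.single i 1) := by
        have h := monP_mul k E' R (Finsupp.single 0 1) (Finsupp.single i 1)
        have h2 : monP k (Finsupp.single 0 1) (Finsupp.single i 1)
            = tP k 0 * xP k (i + 1) := by
          have h3 := monP_mul k (Finsupp.single 0 1) 0 0 (Finsupp.single i 1)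
          rw [add_zero, zero_add, monP_single_left, monP_single_right, pow_one, pow_one] at h3
          exact h3
        rw [h2] at h
        exact h.symm
      have expand : monP k E' R *
            (C τ * xP k (i + 1) + C ρ * tP k (i + 1) + C ρ * tP k 0 * xP k (i + 1))
          = C τ * monP k E' (R + Finsupp.single i 1)
            + C ρ * monP k (E' + Finsupp.single (i + 1) 1) R
            + C ρ * monP k (E' + Finsupp.single 0 1) (R + Finsupp.single i 1) := by
        rw [← hA, ← hB, ← hC]; ring
      have key : mkDSA k τ ρ (monP k E R)
          = τ • mkDSA k τ ρ (monP k E' (R + Finsupp.single i 1))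
            + ρ • mkDSA k τ ρ (monP k (E' + Finsupp.single (i + 1) 1) R)
            + ρ • mkDSA k τ ρ (monP k (E' + Finsupp.single 0 1) (R + Finsupp.single i 1)) := by
        rw [hmon, map_mul, hrel, ← map_mul, expand, map_add, map_add,
          mk_C_mul, mk_C_mul, mk_C_mul]
      -- measure bookkeeping
      have hmu : muE E = muE E' + 2 := by
        rw [hE, muE_add, muE_single]
      have hp1 : (1 : ℕ) ≤ 2 ^ (i + 1) := Nat.one_le_two_pow
      have hpp : (2 : ℕ) ^ (i + 2) = 2 * 2 ^ (i + 1) := by ring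
      -- degrees of the three terms
      have hd1 : mdeg E' (R + Finsupp.single i 1) = mdeg E' R + (2 ^ (i + 2) - 2) := by
        have h := mdeg_add E' R 0 (Finsupp.single i 1)
        rw [add_zero, mdeg_single_right, one_mul] at h
        exact h
      have hd2 : mdeg (E' + Finsupp.single (i + 1) 1) R = mdeg E' R + (2 ^ (i + 2) - 1) := by
        have h := mdeg_add E' R (Finsupp.single (i + 1) 1) 0
        rw [add_zero, mdeg_single_left, one_mul] at h
        exact h
      have hd3 : mdeg (E' + Finsupp.single 0 1) (R + Finsupp.single i 1)
          = mdeg E' R + (1 + (2 ^ (i + 2) - 2)) := by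
        have h := mdeg_add E' R (Finsupp.single 0 1) (Finsupp.single i 1)
        have h4 := mdeg_add (Finsupp.single 0 1) 0 0 (Finsupp.single i 1)
        rw [add_zero, zero_add, mdeg_single_left, mdeg_single_right, one_mul, one_mul] at h4
        rw [h4] at h
        rw [h]
        norm_num
      rw [key]
      refine add_mem (add_mem ?_ ?_) ?_
      · refine Submodule.smul_mem _ _ (Filt_mono k τ ρ ?_ (ih (muE E') (by omega) _ _ rfl))
        rw [hd1, hmdeg]; omega
      · refine Submodule.smul_mem _ _ (Filt_mono k τ ρ ?_
          (ih (muE E' + 1) (by omega) _ _ (by rw [muE_add, muE_single])))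
        rw [hd2, hmdeg]; omega
      · refine Submodule.smul_mem _ _ (Filt_mono k τ ρ ?_
          (ih (muE E' + 1) (by omega) _ _ (by rw [muE_add, muE_single])))
        rw [hd3, hmdeg]; omega

lemma mem_filt' (E R : ℕ →₀ ℕ) :
    mkDSA k τ ρ (monP k E R) ∈ Filt k τ ρ (mdeg E R) :=
  mem_filt k τ ρ (muE E) E R rfl

lemma mul_monP_mem (t : ℕ) (x : DSA k τ ρ) (hx : x ∈ Filt k τ ρ t) (E₀ R₀ : ℕ →₀ ℕ) :
    x * mkDSA k τ ρ (monP k E₀ R₀) ∈ Filt k τ ρ (t + mdeg E₀ R₀) := by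
  have h := Submodule.apply_mem_span_image_of_mem_span
    (f := LinearMap.mulRight k (mkDSA k τ ρ (monP k E₀ R₀))) hx
  refine Submodule.span_le.mpr ?_ h
  rintro y ⟨z, ⟨E, R, hE, ht, rfl⟩, rfl⟩
  show mkDSA k τ ρ (monP k E R) * mkDSA k τ ρ (monP k E₀ R₀) ∈ _
  rw [← map_mul, ← monP_mul]
  refine Filt_mono k τ ρ ?_ (mem_filt' k τ ρ _ _)
  rw [mdeg_add]
  exact Nat.add_le_add ht (le_refl _)

lemma filt_zero_top : Filt k τ ρ 0 = ⊤ := by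
  have key : ∀ p : MvPolynomial MotVar k, mkDSA k τ ρ p ∈ Filt k τ ρ 0 := by
    intro p
    induction p using MvPolynomial.induction_on with
    | C a =>
      have h1 : mkDSA k τ ρ (monP k 0 0) ∈ Filt k τ ρ 0 :=
        Submodule.subset_span ⟨0, 0, fun s => by simp, Nat.zero_le _, rfl⟩
      have h2 : (C a : MvPolynomial MotVar k) = C a * monP k 0 0 := by
        rw [monP_zero, mul_one]
      rw [h2, mk_C_mul]
      exact Submodule.smul_mem _ _ h1
    | add p q hp hq =>
      rw [map_add]; exact add_mem hp hq
    | mul_X p v hp =>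
      cases v with
      | inl i =>
        have h1 : (X (Sum.inl i) : MvPolynomial MotVar k) = monP k (Finsupp.single i 1) 0 := by
          rw [monP_single_left, pow_one, tP]
        rw [h1, map_mul]
        exact Filt_mono k τ ρ (Nat.zero_le _) (mul_monP_mem k τ ρ 0 _ hp _ _)
      | inr i =>
        have h1 : (X (Sum.inr i) : MvPolynomial MotVar k) = monP k 0 (Finsupp.single i 1) := by
          rw [monP_single_right, pow_one, xP]
        rw [h1, map_mul]
        exact Filt_mono k τ ρ (Nat.zero_le _) (mul_monP_mem k τ ρ 0 _ hp _ _)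
  rw [eq_top_iff]
  intro x _
  obtain ⟨p, rfl⟩ := Ideal.Quotient.mk_surjective x
  exact key p

lemma one_le_mdeg {E R : ℕ →₀ ℕ} (h : E ≠ 0 ∨ R ≠ 0) : 1 ≤ mdeg E R := by
  rcases h with h | h
  · obtain ⟨j, hj⟩ := Finsupp.ne_iff.mp h
    have hj : E j ≠ 0 := hj
    have hmem : j ∈ E.support := Finsupp.mem_support_iff.mpr hj
    have hle0 : E j * (2 ^ (j + 1) - 1) ≤
        E.support.sum fun i => E i * (2 ^ (i + 1) - 1) :=
      Finset.single_le_sum (f := fun i => E i * (2 ^ (i + 1) - 1))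
        (fun i _ => Nat.zero_le _) hmem
    have hle : E j * (2 ^ (j + 1) - 1) ≤ E.sum fun i e => e * (2 ^ (i + 1) - 1) := by
      rw [Finsupp.sum]; exact hle0
    have h1 : 1 ≤ E j * (2 ^ (j + 1) - 1) := by
      have : (1 : ℕ) ≤ 2 ^ (j + 1) := Nat.one_le_two_pow
      have h2 : (2:ℕ) ≤ 2 ^ (j + 1) := by
        calc (2:ℕ) = 2 ^ 1 := rfl
        _ ≤ 2 ^ (j + 1) := Nat.pow_le_pow_right (by norm_num) (by omega)
      have : 1 ≤ E j := Nat.one_le_iff_ne_zero.mpr hj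
      exact Nat.one_le_iff_ne_zero.mpr (Nat.mul_ne_zero (by omega) (by omega))
    unfold mdeg; omega
  · obtain ⟨j, hj⟩ := Finsupp.ne_iff.mp h
    have hj : R j ≠ 0 := hj
    have hmem : j ∈ R.support := Finsupp.mem_support_iff.mpr hj
    have hle0 : R j * (2 ^ (j + 2) - 2) ≤
        R.support.sum fun i => R i * (2 ^ (i + 2) - 2) :=
      Finset.single_le_sum (f := fun i => R i * (2 ^ (i + 2) - 2))
        (fun i _ => Nat.zero_le _) hmem
    have hle : R j * (2 ^ (j + 2) - 2) ≤ R.sum fun i r => r * (2 ^ (i + 2) - 2) := by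
      rw [Finsupp.sum]; exact hle0
    have h1 : 1 ≤ R j * (2 ^ (j + 2) - 2) := by
      have h2 : (4:ℕ) ≤ 2 ^ (j + 2) := by
        calc (4:ℕ) = 2 ^ 2 := rfl
        _ ≤ 2 ^ (j + 2) := Nat.pow_le_pow_right (by norm_num) (by omega)
      have : 1 ≤ R j := Nat.one_le_iff_ne_zero.mpr hj
      exact Nat.one_le_iff_ne_zero.mpr (Nat.mul_ne_zero (by omega) (by omega))
    unfold mdeg; omega

/-- For the `k`-algebra homomorphism `ε : 𝒜 → k` sending every `τᵢ` and
every `ξᵢ` to `0`, one has `F^1 = ker ε`, and `F^t · F^1 ⊆ F^{t+1}` for every `t ≥ 0`. -/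
theorem statement1 (k : Type) [CommRing k] (h2 : (2 : k) = 0) (τ ρ : k)
    (ε : DSA k τ ρ →ₐ[k] k)
    (hτ : ∀ i : ℕ, ε (mkDSA k τ ρ (tP k i)) = 0)
    (hξ : ∀ i : ℕ, 1 ≤ i → ε (mkDSA k τ ρ (xP k i)) = 0) :
    (∀ x : DSA k τ ρ, x ∈ Filt k τ ρ 1 ↔ ε x = 0) ∧
      (∀ t : ℕ, Filt k τ ρ t * Filt k τ ρ 1 ≤ Filt k τ ρ (t + 1)) := by
  -- ε kills every nontrivial monomial
  have heps : ∀ E R : ℕ →₀ ℕ, E ≠ 0 ∨ R ≠ 0 → ε (mkDSA k τ ρ (monP k E R)) = 0 := by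
    intro E R h
    set φ : MvPolynomial MotVar k →+* k := (ε : DSA k τ ρ →+* k).comp (mkDSA k τ ρ) with hφ
    have hφτ : ∀ i, φ (tP k i) = 0 := fun i => hτ i
    have hφξ : ∀ i, φ (xP k (i + 1)) = 0 := fun i => hξ (i + 1) (by omega)
    have hmon : φ (monP k E R)
        = (E.prod fun i e => φ (tP k i) ^ e) * (R.prod fun i r => φ (xP k (i + 1)) ^ r) := by
      unfold monP
      rw [map_mul, map_finsuppProd, map_finsuppProd]
      simp only [map_pow]
    show φ (monP k E R) = 0
    rw [hmon]
    rcases h with h | h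
    · obtain ⟨j, hj⟩ := Finsupp.ne_iff.mp h
      have hj : E j ≠ 0 := hj
      have : (E.prod fun i e => φ (tP k i) ^ e) = 0 := by
        refine Finset.prod_eq_zero (Finsupp.mem_support_iff.mpr hj) ?_
        show φ (tP k j) ^ E j = 0
        rw [hφτ, zero_pow hj]
      rw [this, zero_mul]
    · obtain ⟨j, hj⟩ := Finsupp.ne_iff.mp h
      have hj : R j ≠ 0 := hj
      have : (R.prod fun i r => φ (xP k (i + 1)) ^ r) = 0 := by
        refine Finset.prod_eq_zero (Finsupp.mem_support_iff.mpr hj) ?_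
        show φ (xP k (j + 1)) ^ R j = 0
        rw [hφξ, zero_pow hj]
      rw [this, mul_zero]
  constructor
  · intro x
    constructor
    · -- F¹ ⊆ ker ε
      intro hx
      have hsub : Filt k τ ρ 1 ≤ LinearMap.ker ε.toLinearMap := by
        refine Submodule.span_le.mpr ?_
        rintro y ⟨E, R, hE, ht, rfl⟩
        have hne : E ≠ 0 ∨ R ≠ 0 := by
          by_contra hc
          push_neg at hc
          rw [hc.1, hc.2, mdeg_zero] at ht
          omega
        exact LinearMap.mem_ker.mpr (heps E R hne)
      exact hsub hx
    · -- ker ε ⊆ F¹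
      intro hx
      set L : DSA k τ ρ →ₗ[k] DSA k τ ρ :=
        LinearMap.id - (Algebra.linearMap k (DSA k τ ρ)).comp ε.toLinearMap with hL
      have hx0 : x ∈ Filt k τ ρ 0 := by rw [filt_zero_top]; trivial
      have himg := Submodule.apply_mem_span_image_of_mem_span (f := L) hx0
      have hLx : L x = x := by
        simp only [hL, LinearMap.sub_apply, LinearMap.id_apply, LinearMap.comp_apply,
          Algebra.linearMap_apply, AlgHom.toLinearMap_apply, hx, map_zero, sub_zero]
      have hspan : Submodule.span k
          (L '' {y | ∃ E R : ℕ →₀ ℕ, (∀ s, E s ≤ 1) ∧ 0 ≤ mdeg E R ∧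
            y = mkDSA k τ ρ (monP k E R)}) ≤ Filt k τ ρ 1 := by
        refine Submodule.span_le.mpr ?_
        rintro y ⟨z, ⟨E, R, hE, -, rfl⟩, rfl⟩
        by_cases hzero : E = 0 ∧ R = 0
        · have h1 : mkDSA k τ ρ (monP k E R) = 1 := by
            rw [hzero.1, hzero.2, monP_zero, map_one]
          have : L (mkDSA k τ ρ (monP k E R)) = 0 := by
            simp only [hL, LinearMap.sub_apply, LinearMap.id_apply, LinearMap.comp_apply,
              Algebra.linearMap_apply, AlgHom.toLinearMap_apply, h1, map_one, map_one,
              sub_self]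
          rw [this]
          exact zero_mem _
        · have hne : E ≠ 0 ∨ R ≠ 0 := by tauto
          have h0 : ε (mkDSA k τ ρ (monP k E R)) = 0 := heps E R hne
          have : L (mkDSA k τ ρ (monP k E R)) = mkDSA k τ ρ (monP k E R) := by
            simp only [hL, LinearMap.sub_apply, LinearMap.id_apply, LinearMap.comp_apply,
              Algebra.linearMap_apply, AlgHom.toLinearMap_apply, h0, map_zero, sub_zero]
          rw [this]
          exact Submodule.subset_span ⟨E, R, hE, one_le_mdeg hne, rfl⟩
      have := hspan himg
      rwa [hLx] at this
  · -- multiplicativity of the filtration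
    intro t
    refine Submodule.mul_le.mpr ?_
    intro m hm n hn
    have himg := Submodule.apply_mem_span_image_of_mem_span
      (f := LinearMap.mulLeft k m) hn
    have hspan : Submodule.span k
        ((LinearMap.mulLeft k m) '' {y | ∃ E R : ℕ →₀ ℕ, (∀ s, E s ≤ 1) ∧ 1 ≤ mdeg E R ∧
          y = mkDSA k τ ρ (monP k E R)}) ≤ Filt k τ ρ (t + 1) := by
      refine Submodule.span_le.mpr ?_
      rintro y ⟨z, ⟨E, R, hE, ht1, rfl⟩, rfl⟩
      show m * mkDSA k τ ρ (monP k E R) ∈ _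
      refine Filt_mono k τ ρ ?_ (mul_monP_mem k τ ρ t m hm E R)
      omega
    exact hspan himg

end
end

section
/- 𝒜, regarded as a k-module via the right unit η_R (i.e. with action h · x := η_R(h)·x), is free with basis the monomials τ^E ξ^R with all e_s ∈ {0,1}: every element of 𝒜 is uniquely a finite sum Σ τ^E ξ^R · η_R(h_{E,R}) with h_{E,R} ∈ k. (Paper's Lemma 'right H-basis of 𝒜_{∗,∗}', case ℓ = 2.) -/
open MvPolynomial TensorProduct

noncomputable section

variable (k : Type) [CommRing k]

variable (τ ρ : k)

/-- `k = F₂[τ, ρ]`, the mod 2 motivic cohomology ring of the base in the paper's model. -/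
abbrev kk : Type := MvPolynomial (Fin 2) (ZMod 2)

/-- The element `τ ∈ k`. -/
def τ₂ : kk := X 0

/-- The element `ρ ∈ k`. -/
def ρ₂ : kk := X 1


namespace S2
abbrev Idx : Type := {p : (ℕ →₀ ℕ) × (ℕ →₀ ℕ) // ∀ s, p.1 s ≤ 1}
abbrev M : Type := Idx →₀ kk

/-- single exponent at `τⱼ`. -/
def dl (j n : ℕ) : MotVar →₀ ℕ := Finsupp.single (Sum.inl j) n
/-- single exponent at `ξ_{j+1}`. -/
def dr (j : ℕ) : MotVar →₀ ℕ := Finsupp.single (Sum.inr j) 1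

def wt : (MotVar →₀ ℕ) →+ ℕ := Finsupp.weight (Sum.elim (fun _ => 1) (fun _ => 0))

@[simp] lemma wt_dl (j n : ℕ) : wt (dl j n) = n := by
  simp [wt, dl, Finsupp.weight_apply, Finsupp.sum_single_index]

@[simp] lemma wt_dr (j : ℕ) : wt (dr j) = 0 := by
  simp [wt, dr, Finsupp.weight_apply, Finsupp.sum_single_index]

@[simp] lemma dl_apply_inl (j n m : ℕ) : dl j n (Sum.inl m) = if j = m then n else 0 := by
  simp [dl, Finsupp.single_apply]

@[simp] lemma dl_apply_inr (j n m : ℕ) : dl j n (Sum.inr m) = 0 := by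
  simp [dl, Finsupp.single_apply]

def El (d : MotVar →₀ ℕ) : ℕ →₀ ℕ := d.comapDomain Sum.inl Sum.inl_injective.injOn
def Xr (d : MotVar →₀ ℕ) : ℕ →₀ ℕ := d.comapDomain Sum.inr Sum.inr_injective.injOn

@[simp] lemma El_apply (d : MotVar →₀ ℕ) (j : ℕ) : El d j = d (Sum.inl j) := rfl
@[simp] lemma Xr_apply (d : MotVar →₀ ℕ) (j : ℕ) : Xr d j = d (Sum.inr j) := rfl

lemma sub_dl_add (d : MotVar →₀ ℕ) (j : ℕ) (hj : 2 ≤ d (Sum.inl j)) :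
    (d - dl j 2) + dl j 2 = d := by
  ext v
  rcases eq_or_ne v (Sum.inl j) with rfl | hv
  · simp only [Finsupp.add_apply, Finsupp.tsub_apply, dl, Finsupp.single_eq_same]; omega
  · simp only [Finsupp.add_apply, Finsupp.tsub_apply, dl,
      Finsupp.single_eq_of_ne' (fun hh => absurd hh hv.symm)]
    omega

lemma wt_sub (d : MotVar →₀ ℕ) (j : ℕ) (hj : 2 ≤ d (Sum.inl j)) :
    wt (d - dl j 2) + 2 = wt d := by
  conv_rhs => rw [← sub_dl_add d j hj]
  simp [map_add]

open scoped Classical in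
def nu : ℕ → ℕ → (MotVar →₀ ℕ) → M
  | a+1, b, d => τ₂ • nu a b d + nu a (b+1) (d + dl 0 1)
  | 0, b, d =>
    if h : ∃ j, 2 ≤ d (Sum.inl j) then
      nu 1 b (d - dl (Nat.find h) 2 + dr (Nat.find h))
      + nu 0 (b+1) (d - dl (Nat.find h) 2 + dl (Nat.find h + 1) 1)
      + nu 0 (b+1) (d - dl (Nat.find h) 2 + dl 0 1 + dr (Nat.find h))
    else Finsupp.single ⟨(El d, Xr d), fun s => by
      have := h; push_neg at this; exact Nat.lt_succ_iff.mp (this s)⟩ (ρ₂ ^ b)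
termination_by a _ d => 3*a + 2 * wt d
decreasing_by
  all_goals try simp only [map_add, wt_dl, wt_dr]
  · omega
  · omega
  all_goals {
    have key := wt_sub d (Nat.find h) (Nat.find_spec h)
    omega
  }

lemma nu_succ (a b : ℕ) (d : MotVar →₀ ℕ) :
    nu (a+1) b d = τ₂ • nu a b d + nu a (b+1) (d + dl 0 1) := by
  rw [nu]

lemma nu_base (b : ℕ) (d : MotVar →₀ ℕ) (h : ∀ j, d (Sum.inl j) ≤ 1) :
    nu 0 b d = Finsupp.single ⟨(El d, Xr d), fun s => h s⟩ (ρ₂ ^ b) := by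
  rw [nu, dif_neg]
  push_neg
  exact fun j => Nat.lt_succ_iff.mpr (h j)

lemma nu_min (b : ℕ) (d : MotVar →₀ ℕ) (j : ℕ) (hj : 2 ≤ d (Sum.inl j))
    (hmin : ∀ m < j, d (Sum.inl m) ≤ 1) :
    nu 0 b d = nu 1 b (d - dl j 2 + dr j) + nu 0 (b+1) (d - dl j 2 + dl (j+1) 1)
      + nu 0 (b+1) (d - dl j 2 + dl 0 1 + dr j) := by
  have hex : ∃ m, 2 ≤ d (Sum.inl m) := ⟨j, hj⟩
  have hfind : Nat.find hex = j :=
    (Nat.find_eq_iff hex).2 ⟨hj, fun m hm => by have := hmin m hm; omega⟩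
  conv_lhs => rw [nu]
  rw [dif_pos hex, hfind]


set_option maxHeartbeats 2000000 in
lemma nuL : ∀ (n a b : ℕ) (d : MotVar →₀ ℕ) (i : ℕ), 3*a + 2*wt d = n →
    nu a b (d + dl i 2) =
      nu (a+1) b (d + dr i) + nu a (b+1) (d + dl (i+1) 1) + nu a (b+1) (d + dl 0 1 + dr i) := by
  intro n
  induction n using Nat.strong_induction_on with
  | _ n IH =>
  have IH' : ∀ (a' b' : ℕ) (d' : MotVar →₀ ℕ) (i' : ℕ), 3*a' + 2*wt d' < n →
      nu a' b' (d' + dl i' 2) =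
        nu (a'+1) b' (d' + dr i') + nu a' (b'+1) (d' + dl (i'+1) 1)
          + nu a' (b'+1) (d' + dl 0 1 + dr i') :=
    fun a' b' d' i' h => IH _ h a' b' d' i' rfl
  intro a b d i hn
  match a, hn with
  | a+1, hn =>
    rw [nu_succ a b (d + dl i 2)]
    rw [add_right_comm d (dl i 2) (dl 0 1)]
    rw [IH' a b d i (by omega), IH' a (b+1) (d + dl 0 1) i (by simp [map_add] at hn ⊢; omega)]
    rw [nu_succ (a+1) b (d + dr i)]
    rw [show d + dr i + dl 0 1 = d + dl 0 1 + dr i by abel]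
    rw [nu_succ a (b+1) (d + dl 0 1 + dr i), nu_succ a (b+1) (d + dl (i+1) 1)]
    simp only [smul_add]
    rw [add_right_comm d (dl 0 1) (dl (i+1) 1), add_right_comm (d + dl 0 1) (dl 0 1) (dr i)]
    abel
  | 0, hn =>
    have hex2 : 2 ≤ (d + dl i 2) (Sum.inl i) := by simp
    rcases Classical.em (∀ m < i, d (Sum.inl m) ≤ 1) with hminI | hNI
    · -- i is itself minimal
      have hmin : ∀ m < i, (d + dl i 2) (Sum.inl m) ≤ 1 := by
        intro m hm
        have := hminI m hm
        simp [Finsupp.add_apply, Nat.ne_of_gt hm]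
        omega
      rw [nu_min b (d + dl i 2) i hex2 hmin, add_tsub_cancel_right]
    · -- there is a smaller index with exponent ≥ 2
      push_neg at hNI
      obtain ⟨m₀, hm₀i, hm₀2⟩ := hNI
      have hexd : ∃ m, 2 ≤ d (Sum.inl m) := ⟨m₀, by omega⟩
      set j := Nat.find hexd with hjdef
      have hj2 : 2 ≤ d (Sum.inl j) := Nat.find_spec hexd
      have hji : j < i := lt_of_le_of_lt (Nat.find_le (by omega)) hm₀i
      have hminj : ∀ m < j, d (Sum.inl m) ≤ 1 := by
        intro m hm
        have := Nat.find_min hexd hm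
        omega
      set d' := d - dl j 2 with hd'def
      have hd : d' + dl j 2 = d := sub_dl_add d j hj2
      have hwt : wt d = wt d' + 2 := (wt_sub d j hj2).symm
      -- LHS reduction at j (the minimal index of d + dl i 2)
      have hjne : j ≠ i := Nat.ne_of_lt hji
      have hex2' : 2 ≤ (d + dl i 2) (Sum.inl j) := by
        simp [Finsupp.add_apply, hjne]; omega
      have hmin' : ∀ m < j, (d + dl i 2) (Sum.inl m) ≤ 1 := by
        intro m hm
        have h1 := hminj m hm
        have h2 : i ≠ m := by omega
        simp [Finsupp.add_apply, h2]
        omega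
      have hsub : d + dl i 2 - dl j 2 = d' + dl i 2 := by
        rw [← hd, add_right_comm, add_tsub_cancel_right]
      rw [nu_min b (d + dl i 2) j hex2' hmin', hsub]
      -- expand LHS terms by IH at i
      rw [add_right_comm d' (dl i 2) (dr j),
          add_right_comm d' (dl i 2) (dl (j+1) 1),
          show d' + dl i 2 + dl 0 1 + dr j = d' + dl 0 1 + dr j + dl i 2 by abel]
      rw [IH' 1 b (d' + dr j) i (by simp [map_add]; omega),
          IH' 0 (b+1) (d' + dl (j+1) 1) i (by simp [map_add]; omega),
          IH' 0 (b+1) (d' + dl 0 1 + dr j) i (by simp [map_add]; omega)]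
      -- expand RHS terms by IH at j
      rw [show d + dr i = d' + dr i + dl j 2 by rw [← hd, add_right_comm],
          show d + dl (i+1) 1 = d' + dl (i+1) 1 + dl j 2 by rw [← hd, add_right_comm],
          show d + dl 0 1 + dr i = d' + dl 0 1 + dr i + dl j 2 by
            rw [← hd]; abel]
      rw [IH' 1 b (d' + dr i) j (by simp [map_add]; omega),
          IH' 0 (b+1) (d' + dl (i+1) 1) j (by simp [map_add]; omega),
          IH' 0 (b+1) (d' + dl 0 1 + dr i) j (by simp [map_add]; omega)]
      rw [show d' + dr i + dr j = d' + dr j + dr i by abel,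
          show d' + dr i + dl (j+1) 1 = d' + dl (j+1) 1 + dr i by abel,
          show d' + dr i + dl 0 1 + dr j = d' + dr j + dl 0 1 + dr i by abel,
          show d' + dl (i+1) 1 + dr j = d' + dr j + dl (i+1) 1 by abel,
          show d' + dl (i+1) 1 + dl (j+1) 1 = d' + dl (j+1) 1 + dl (i+1) 1 by abel,
          show d' + dl (i+1) 1 + dl 0 1 + dr j = d' + dl 0 1 + dr j + dl (i+1) 1 by abel,
          show d' + dl 0 1 + dr i + dr j = d' + dl 0 1 + dr j + dr i by abel,
          show d' + dl 0 1 + dr i + dl (j+1) 1 = d' + dl (j+1) 1 + dl 0 1 + dr i by abel,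
          show d' + dl 0 1 + dr i + dl 0 1 + dr j = d' + dl 0 1 + dr j + dl 0 1 + dr i by abel]
      abel

end S2

namespace S2

lemma Mtwo (x : M) : x + x = 0 := by
  rw [← two_smul ℕ x, ← Nat.cast_smul_eq_nsmul (ZMod 2)]
  have h2 : ((2:ℕ) : ZMod 2) = 0 := by decide
  rw [h2, zero_smul]

lemma nu_bsucc : ∀ (n a b : ℕ) (d : MotVar →₀ ℕ), 3*a + 2*wt d = n →
    nu a (b+1) d = ρ₂ • nu a b d := by
  intro n
  induction n using Nat.strong_induction_on with
  | _ n IH =>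
  intro a b d hn
  match a, hn with
  | a+1, hn =>
    rw [nu_succ, nu_succ]
    rw [IH (3*a + 2*wt d) (by omega) a b d rfl,
        IH (3*a + 2*wt (d + dl 0 1)) (by simp [map_add]; omega) a (b+1) (d + dl 0 1) rfl]
    rw [smul_comm, smul_add]
  | 0, hn =>
    by_cases h : ∃ j, 2 ≤ d (Sum.inl j)
    · obtain ⟨j, hj⟩ := h
      have hj' : 2 ≤ d (Sum.inl (Nat.find (⟨j, hj⟩ : ∃ m, 2 ≤ d (Sum.inl m)))) :=
        Nat.find_spec (⟨j, hj⟩ : ∃ m, 2 ≤ d (Sum.inl m))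
      set j₀ := Nat.find (⟨j, hj⟩ : ∃ m, 2 ≤ d (Sum.inl m)) with hj₀
      have hmin : ∀ m < j₀, d (Sum.inl m) ≤ 1 := by
        intro m hm
        have := Nat.find_min (⟨j, hj⟩ : ∃ m, 2 ≤ d (Sum.inl m)) hm
        omega
      have hwt := wt_sub d j₀ hj'
      rw [nu_min b d j₀ hj' hmin, nu_min (b+1) d j₀ hj' hmin]
      rw [IH (3*1 + 2*wt (d - dl j₀ 2 + dr j₀)) (by simp [map_add]; omega) 1 b _ rfl,
          IH (3*0 + 2*wt (d - dl j₀ 2 + dl (j₀+1) 1)) (by simp [map_add]; omega) 0 (b+1) _ rfl,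
          IH (3*0 + 2*wt (d - dl j₀ 2 + dl 0 1 + dr j₀)) (by simp [map_add]; omega) 0 (b+1) _ rfl,
          IH (3*0 + 2*wt (d - dl j₀ 2 + dl (j₀+1) 1)) (by simp [map_add]; omega) 0 b _ rfl,
          IH (3*0 + 2*wt (d - dl j₀ 2 + dl 0 1 + dr j₀)) (by simp [map_add]; omega) 0 b _ rfl]
      rw [smul_add, smul_add]
    · push_neg at h
      have h' : ∀ j, d (Sum.inl j) ≤ 1 := fun j => Nat.lt_succ_iff.mp (h j)
      rw [nu_base b d h', nu_base (b+1) d h', Finsupp.smul_single, smul_eq_mul, ← pow_succ']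


def nubar (p : MvPolynomial MotVar kk) : M :=
  (AddMonoidAlgebra.coeff p).sum fun d c => (AddMonoidAlgebra.coeff c).sum fun e z => z • nu (e 0) (e 1) d

lemma inner_zero (d : MotVar →₀ ℕ) :
    ((AddMonoidAlgebra.coeff (0 : kk)).sum fun e (z : ZMod 2) => z • nu (e 0) (e 1) d) = 0 :=
  Finsupp.sum_zero_index

lemma inner_add (d : MotVar →₀ ℕ) (c₁ c₂ : kk) :
    ((AddMonoidAlgebra.coeff (c₁ + c₂)).sum fun e (z : ZMod 2) => z • nu (e 0) (e 1) d)
      = ((AddMonoidAlgebra.coeff c₁).sum fun e (z : ZMod 2) => z • nu (e 0) (e 1) d)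
        + ((AddMonoidAlgebra.coeff c₂).sum fun e (z : ZMod 2) => z • nu (e 0) (e 1) d) :=
  Finsupp.sum_add_index' (fun _ => zero_smul _ _) (fun _ z₁ z₂ => add_smul _ _ _)

def NU : MvPolynomial MotVar kk →+ M :=
  AddMonoidHom.mk' nubar (fun _ _ =>
    Finsupp.sum_add_index' (fun d => inner_zero d) (fun d c₁ c₂ => inner_add d c₁ c₂))

lemma nubar_add (p q : MvPolynomial MotVar kk) : nubar (p + q) = nubar p + nubar q :=
  map_add NU p q

lemma nubar_sub (p q : MvPolynomial MotVar kk) : nubar (p - q) = nubar p - nubar q :=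
  map_sub NU p q

lemma nubar_monomial (d : MotVar →₀ ℕ) (e : Fin 2 →₀ ℕ) (z : ZMod 2) :
    nubar (monomial d (monomial e z)) = z • nu (e 0) (e 1) d := by
  rw [nubar, ← MvPolynomial.single_eq_monomial, ← MvPolynomial.single_eq_monomial]
  rw [AddMonoidAlgebra.coeff_single, Finsupp.sum_single_index (inner_zero d),
    AddMonoidAlgebra.coeff_single]
  exact Finsupp.sum_single_index (zero_smul _ _)

lemma X_as_monomial (v : MotVar) :
    (X v : MvPolynomial MotVar kk) = monomial (Finsupp.single v 1) 1 := by
  rw [← pow_one (X v), X_pow_eq_monomial]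

lemma Xk_as_monomial (v : Fin 2) : (X v : kk) = monomial (Finsupp.single v 1) 1 := by
  rw [← pow_one (X v), X_pow_eq_monomial]

lemma mono_mul_C (d : MotVar →₀ ℕ) (c a : kk) :
    monomial d c * C a = monomial d (c * a) := by
  rw [mul_comm, C_mul_monomial, mul_comm]

lemma mono_mul_CX (d : MotVar →₀ ℕ) (c a : kk) (v : MotVar) :
    monomial d c * (C a * X v) = monomial (d + Finsupp.single v 1) (c * a) := by
  rw [X_as_monomial, C_mul_monomial, mul_one, monomial_mul]

lemma mono_mul_CXX (d : MotVar →₀ ℕ) (c a : kk) (v w : MotVar) :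
    monomial d c * (C a * X v * X w)
      = monomial (d + Finsupp.single v 1 + Finsupp.single w 1) (c * a) := by
  rw [mul_assoc (C a), X_as_monomial, X_as_monomial, monomial_mul, one_mul, C_mul_monomial,
    mul_one, monomial_mul, ← add_assoc]

lemma mono_mul_Xsq (d : MotVar →₀ ℕ) (c : kk) (v : MotVar) :
    monomial d c * X v ^ 2 = monomial (d + Finsupp.single v 2) c := by
  rw [X_pow_eq_monomial, monomial_mul, mul_one]

lemma coeff_mul_X (e : Fin 2 →₀ ℕ) (z : ZMod 2) (j : Fin 2) :
    (monomial e z : kk) * X j = monomial (e + Finsupp.single j 1) z := by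
  rw [Xk_as_monomial, monomial_mul, mul_one]

lemma eval00 (e : Fin 2 →₀ ℕ) :
    (e + Finsupp.single (0 : Fin 2) 1 : Fin 2 →₀ ℕ) 0 = e 0 + 1 := by
  simp

lemma eval01 (e : Fin 2 →₀ ℕ) :
    (e + Finsupp.single (0 : Fin 2) 1 : Fin 2 →₀ ℕ) 1 = e 1 := by
  rw [Finsupp.add_apply, Finsupp.single_apply, if_neg (by decide), add_zero]

lemma eval10 (e : Fin 2 →₀ ℕ) :
    (e + Finsupp.single (1 : Fin 2) 1 : Fin 2 →₀ ℕ) 0 = e 0 := by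
  rw [Finsupp.add_apply, Finsupp.single_apply, if_neg (by decide), add_zero]

lemma eval11 (e : Fin 2 →₀ ℕ) :
    (e + Finsupp.single (1 : Fin 2) 1 : Fin 2 →₀ ℕ) 1 = e 1 + 1 := by
  simp

lemma coeff_mul_tau (e : Fin 2 →₀ ℕ) (z : ZMod 2) :
    (monomial e z : kk) * τ₂ = monomial (e + Finsupp.single (0 : Fin 2) 1) z :=
  coeff_mul_X e z 0

lemma coeff_mul_rho (e : Fin 2 →₀ ℕ) (z : ZMod 2) :
    (monomial e z : kk) * ρ₂ = monomial (e + Finsupp.single (1 : Fin 2) 1) z :=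
  coeff_mul_X e z 1

lemma single_inl_eq_dl (j n : ℕ) : (Finsupp.single (Sum.inl j) n : MotVar →₀ ℕ) = dl j n := rfl

lemma single_inr_eq_dr (j : ℕ) : (Finsupp.single (Sum.inr j) 1 : MotVar →₀ ℕ) = dr j := rfl

lemma K2 (p : MvPolynomial MotVar kk) : nubar (p * C ρ₂) = ρ₂ • nubar p := by
  induction p using MvPolynomial.induction_on' with
  | add p q hp hq => rw [add_mul, nubar_add, nubar_add, hp, hq, smul_add]
  | monomial d c =>
    induction c using MvPolynomial.induction_on' with
    | add c₁ c₂ h₁ h₂ =>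
      rw [map_add (monomial d), add_mul, nubar_add, nubar_add, h₁, h₂, smul_add]
    | monomial e z =>
      rw [mono_mul_C, coeff_mul_rho, nubar_monomial, nubar_monomial, eval10, eval11,
        nu_bsucc (3 * e 0 + 2 * wt d) (e 0) (e 1) d rfl, smul_comm]

lemma K1 (p : MvPolynomial MotVar kk) :
    nubar (p * (C τ₂ + C ρ₂ * X (Sum.inl 0))) = τ₂ • nubar p := by
  induction p using MvPolynomial.induction_on' with
  | add p q hp hq => rw [add_mul, nubar_add, nubar_add, hp, hq, smul_add]
  | monomial d c =>
    induction c using MvPolynomial.induction_on' with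
    | add c₁ c₂ h₁ h₂ =>
      rw [map_add (monomial d), add_mul, nubar_add, nubar_add, h₁, h₂, smul_add]
    | monomial e z =>
      rw [mul_add, nubar_add, mono_mul_C, coeff_mul_tau, mono_mul_CX, coeff_mul_rho,
        single_inl_eq_dl,
        nubar_monomial, nubar_monomial, nubar_monomial, eval00, eval01, eval10, eval11,
        nu_succ, smul_add, add_assoc, Mtwo, add_zero, smul_comm]

lemma K3 (p : MvPolynomial MotVar kk) (i : ℕ) :
    nubar (p * (X (Sum.inl i) ^ 2 - (C τ₂ * X (Sum.inr i) + C ρ₂ * X (Sum.inl (i+1))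
      + C ρ₂ * X (Sum.inl 0) * X (Sum.inr i)))) = 0 := by
  rw [mul_sub, nubar_sub, sub_eq_zero]
  induction p using MvPolynomial.induction_on' with
  | add p q hp hq => rw [add_mul, add_mul, nubar_add, nubar_add, hp, hq]
  | monomial d c =>
    induction c using MvPolynomial.induction_on' with
    | add c₁ c₂ h₁ h₂ =>
      rw [map_add (monomial d), add_mul, add_mul, nubar_add, nubar_add, h₁, h₂]
    | monomial e z =>
      rw [mul_add, mul_add, nubar_add, nubar_add, mono_mul_Xsq, mono_mul_CX, mono_mul_CX,
        mono_mul_CXX, coeff_mul_tau, coeff_mul_rho,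
        nubar_monomial, nubar_monomial, nubar_monomial, nubar_monomial,
        eval00, eval01, eval10, eval11,
        single_inl_eq_dl, single_inl_eq_dl, single_inl_eq_dl, single_inr_eq_dr,
        nuL (3 * e 0 + 2 * wt d) (e 0) (e 1) d i rfl, smul_add, smul_add]


lemma zmod2_cases : ∀ z : ZMod 2, z = 0 ∨ z = 1 := by decide

lemma nubar_zsmul (z : ZMod 2) (p : MvPolynomial MotVar kk) :
    nubar (z • p) = z • nubar p := by
  rcases zmod2_cases z with rfl | rfl
  · rw [zero_smul, zero_smul, show nubar 0 = 0 from map_zero NU]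
  · rw [one_smul, one_smul]

/-- The relation generators. -/
def gen (i : ℕ) : MvPolynomial MotVar kk :=
  X (Sum.inl i) ^ 2 - (C τ₂ * X (Sum.inr i) + C ρ₂ * X (Sum.inl (i+1))
    + C ρ₂ * X (Sum.inl 0) * X (Sum.inr i))

lemma NU_ideal (x : MvPolynomial MotVar kk) (hx : x ∈ Ideal.span (Set.range gen)) :
    nubar x = 0 := by
  rw [Ideal.span, Finsupp.mem_span_range_iff_exists_finsupp] at hx
  obtain ⟨c, rfl⟩ := hx
  rw [show nubar _ = _ from map_finsuppSum NU c fun i a => a • gen i]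
  rw [Finsupp.sum]
  apply Finset.sum_eq_zero
  intro i _
  rw [smul_eq_mul]
  exact K3 (c i) i

/-- The basis monomials. -/
def monPP (E R : ℕ →₀ ℕ) : MvPolynomial MotVar kk :=
  (E.prod fun i e => (X (Sum.inl i) : MvPolynomial MotVar kk) ^ e)
    * (R.prod fun i r => (X (Sum.inr i) : MvPolynomial MotVar kk) ^ r)

lemma prod_X_pow (s : MotVar →₀ ℕ) :
    (s.prod fun v e => (X v : MvPolynomial MotVar kk) ^ e) = monomial s 1 := by
  rw [monomial_eq, C_1, one_mul]

lemma monPP_eq (E R : ℕ →₀ ℕ) :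
    monPP E R = monomial (E.mapDomain Sum.inl + R.mapDomain Sum.inr) 1 := by
  have h1 : (E.prod fun i e => (X (Sum.inl i) : MvPolynomial MotVar kk) ^ e)
      = monomial (E.mapDomain Sum.inl) 1 := by
    rw [← prod_X_pow (E.mapDomain Sum.inl)]
    exact (Finsupp.prod_mapDomain_index_inj (M := ℕ) (N := MvPolynomial MotVar kk)
      (f := Sum.inl) (s := E) (h := fun v e => X v ^ e) Sum.inl_injective).symm
  have h2 : (R.prod fun i r => (X (Sum.inr i) : MvPolynomial MotVar kk) ^ r)
      = monomial (R.mapDomain Sum.inr) 1 := by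
    rw [← prod_X_pow (R.mapDomain Sum.inr)]
    exact (Finsupp.prod_mapDomain_index_inj (M := ℕ) (N := MvPolynomial MotVar kk)
      (f := Sum.inr) (s := R) (h := fun v e => X v ^ e) Sum.inr_injective).symm
  rw [monPP, h1, h2, monomial_mul, mul_one]

lemma split_inl (E R : ℕ →₀ ℕ) (j : ℕ) :
    (E.mapDomain Sum.inl + R.mapDomain Sum.inr : MotVar →₀ ℕ) (Sum.inl j) = E j := by
  rw [Finsupp.add_apply, Finsupp.mapDomain_apply Sum.inl_injective,
    Finsupp.mapDomain_notin_range _ _ (by rintro ⟨m, hm⟩; exact Sum.inl_ne_inr hm.symm),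
    add_zero]

lemma split_inr (E R : ℕ →₀ ℕ) (j : ℕ) :
    (E.mapDomain Sum.inl + R.mapDomain Sum.inr : MotVar →₀ ℕ) (Sum.inr j) = R j := by
  rw [Finsupp.add_apply, Finsupp.mapDomain_apply Sum.inr_injective,
    Finsupp.mapDomain_notin_range _ _ (by rintro ⟨m, hm⟩; exact Sum.inl_ne_inr hm),
    zero_add]

lemma K5 (E R : ℕ →₀ ℕ) (hE : ∀ s, E s ≤ 1) :
    nubar (monPP E R) = Finsupp.single ⟨(E, R), hE⟩ 1 := by
  rw [monPP_eq]
  set D := E.mapDomain Sum.inl + R.mapDomain Sum.inr with hD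
  have hDl : ∀ j, D (Sum.inl j) ≤ 1 := fun j => by rw [hD, split_inl]; exact hE j
  rw [show (1 : kk) = monomial 0 1 from by rw [← C_1]; rfl, nubar_monomial]
  rw [show ((0 : Fin 2 →₀ ℕ) 0 : ℕ) = 0 from rfl, show ((0 : Fin 2 →₀ ℕ) 1 : ℕ) = 0 from rfl,
    one_smul, nu_base 0 D hDl, pow_zero]
  congr 1
  have h1 : El D = E := by ext j; rw [El_apply, hD, split_inl]
  have h2 : Xr D = R := by ext j; rw [Xr_apply, hD, split_inr]
  apply Subtype.ext
  show (El D, Xr D) = (E, R)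
  rw [h1, h2]

/-- The canonical polynomial lift of `η_R`. -/
def Lc : kk →ₐ[ZMod 2] MvPolynomial MotVar kk :=
  aeval ![C τ₂ + C ρ₂ * X (Sum.inl 0), C ρ₂]

lemma K4 (c : kk) (p : MvPolynomial MotVar kk) : nubar (p * Lc c) = c • nubar p := by
  induction c using MvPolynomial.induction_on with
  | C z =>
    rw [show Lc (C z) = algebraMap (ZMod 2) (MvPolynomial MotVar kk) z from aeval_C _ z,
      mul_comm, ← Algebra.smul_def, nubar_zsmul, ← algebraMap_smul kk z (nubar p)]
    rfl
  | add c₁ c₂ h₁ h₂ => rw [map_add, mul_add, nubar_add, h₁, h₂, add_smul]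
  | mul_X c j ih =>
    have hj : j = 0 ∨ j = 1 := by revert j; decide
    rcases hj with rfl | rfl
    · rw [map_mul, show Lc (X 0) = C τ₂ + C ρ₂ * X (Sum.inl 0) from by
        rw [Lc, aeval_X]; rfl, ← mul_assoc, K1, ih, smul_smul, mul_comm τ₂ c]
      rfl
    · rw [map_mul, show Lc (X 1) = C ρ₂ from by rw [Lc, aeval_X]; rfl,
        ← mul_assoc, K2, ih, smul_smul, mul_comm ρ₂ c]
      rfl

end S2

namespace S2

lemma relIdeal_eq : relIdeal kk τ₂ ρ₂ = Ideal.span (Set.range gen) := rfl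

lemma monP_eq_monPP (E R : ℕ →₀ ℕ) : monP kk E R = monPP E R := rfl

lemma mkC (a : kk) : mkDSA kk τ₂ ρ₂ (C a) = algebraMap kk (DSA kk τ₂ ρ₂) a := rfl

lemma DSAtwo (x : DSA kk τ₂ ρ₂) : x + x = 0 := by
  rw [← two_smul ℕ x, ← Nat.cast_smul_eq_nsmul (ZMod 2)]
  have h2 : ((2:ℕ) : ZMod 2) = 0 := by decide
  rw [h2, zero_smul]

lemma mk_gen (i : ℕ) : mkDSA kk τ₂ ρ₂ (gen i) = 0 :=
  Ideal.Quotient.eq_zero_iff_mem.2 (relIdeal_eq ▸ Ideal.subset_span ⟨i, rfl⟩)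

lemma recomb (d : MotVar →₀ ℕ) :
    (El d).mapDomain Sum.inl + (Xr d).mapDomain Sum.inr = d := by
  ext v
  cases v with
  | inl j => rw [split_inl]; rfl
  | inr j => rw [split_inr]; rfl

section EtaR

variable (ηR : kk →ₐ[ZMod 2] DSA kk τ₂ ρ₂)

def FF (h : M) : DSA kk τ₂ ρ₂ :=
  h.sum fun p c => mkDSA kk τ₂ ρ₂ (monP kk p.1.1 p.1.2) * ηR c

lemma FF_add (h₁ h₂ : M) : FF ηR (h₁ + h₂) = FF ηR h₁ + FF ηR h₂ :=
  Finsupp.sum_add_index' (fun p => by rw [map_zero, mul_zero])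
    (fun p c₁ c₂ => by rw [map_add, mul_add])

lemma FF_single (p : Idx) (c : kk) :
    FF ηR (Finsupp.single p c) = mkDSA kk τ₂ ρ₂ (monP kk p.1.1 p.1.2) * ηR c :=
  Finsupp.sum_single_index (by rw [map_zero, mul_zero])

lemma FF_zero : FF ηR 0 = 0 := Finsupp.sum_zero_index

lemma FF_smul (c : kk) (h : M) : FF ηR (c • h) = ηR c * FF ηR h := by
  induction h using Finsupp.induction with
  | zero => rw [smul_zero, FF_zero, mul_zero]
  | single_add p x f hpf hx ih =>
    rw [smul_add, FF_add, FF_add, ih, Finsupp.smul_single, FF_single, smul_eq_mul,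
      map_mul, FF_single, mul_add]
    ring

variable (hτ : ηR τ₂ = algebraMap kk (DSA kk τ₂ ρ₂) τ₂ +
      algebraMap kk (DSA kk τ₂ ρ₂) ρ₂ * mkDSA kk τ₂ ρ₂ (tP kk 0))
    (hρ : ηR ρ₂ = algebraMap kk (DSA kk τ₂ ρ₂) ρ₂)

include hτ hρ in
lemma mk_Lc (c : kk) : mkDSA kk τ₂ ρ₂ (Lc c) = ηR c := by
  have key : (Ideal.Quotient.mkₐ (ZMod 2) (relIdeal kk τ₂ ρ₂)).comp Lc = ηR := by
    apply MvPolynomial.algHom_ext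
    intro j
    have hj : j = 0 ∨ j = 1 := by revert j; decide
    rcases hj with rfl | rfl
    · show mkDSA kk τ₂ ρ₂ (Lc τ₂) = ηR τ₂
      rw [show Lc τ₂ = C τ₂ + C ρ₂ * X (Sum.inl 0) from by rw [τ₂, Lc, aeval_X]; rfl,
        map_add, map_mul, mkC, mkC, hτ]
      rfl
    · show mkDSA kk τ₂ ρ₂ (Lc ρ₂) = ηR ρ₂
      rw [show Lc ρ₂ = C ρ₂ from by rw [ρ₂, Lc, aeval_X]; rfl, mkC, hρ]
  exact DFunLike.congr_fun key c

include hτ hρ in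
lemma nu_f : ∀ (n a b : ℕ) (d : MotVar →₀ ℕ), 3*a + 2*wt d = n →
    FF ηR (nu a b d) = mkDSA kk τ₂ ρ₂ (monomial d 1)
      * algebraMap kk (DSA kk τ₂ ρ₂) τ₂ ^ a * algebraMap kk (DSA kk τ₂ ρ₂) ρ₂ ^ b := by
  intro n
  induction n using Nat.strong_induction_on with
  | _ n IH =>
  intro a b d hn
  match a, hn with
  | a+1, hn =>
    rw [nu_succ, FF_add, FF_smul, IH (3*a+2*wt d) (by omega) a b d rfl,
        IH (3*a+2*wt (d + dl 0 1)) (by simp [map_add]; omega) a (b+1) (d + dl 0 1) rfl]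
    have hmono : (monomial (d + dl 0 1) (1:kk)) = monomial d 1 * X (Sum.inl 0) := by
      rw [X_as_monomial, monomial_mul, mul_one, single_inl_eq_dl]
    have htwo : (2 : DSA kk τ₂ ρ₂) = 0 := by
      have h2 := DSAtwo (1 : DSA kk τ₂ ρ₂)
      rwa [one_add_one_eq_two] at h2
    have hX0 : mkDSA kk τ₂ ρ₂ (X (Sum.inl 0)) = mkDSA kk τ₂ ρ₂ (tP kk 0) := rfl
    rw [hmono, map_mul, hX0]
    linear_combination (mkDSA kk τ₂ ρ₂ (monomial d 1)
        * algebraMap kk (DSA kk τ₂ ρ₂) τ₂ ^ a * algebraMap kk (DSA kk τ₂ ρ₂) ρ₂ ^ b) * hτ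
      + (algebraMap kk (DSA kk τ₂ ρ₂) ρ₂ * mkDSA kk τ₂ ρ₂ (tP kk 0)
        * mkDSA kk τ₂ ρ₂ (monomial d 1) * algebraMap kk (DSA kk τ₂ ρ₂) τ₂ ^ a
        * algebraMap kk (DSA kk τ₂ ρ₂) ρ₂ ^ b) * htwo
  | 0, hn =>
    by_cases h : ∃ j, 2 ≤ d (Sum.inl j)
    · have hj2 : 2 ≤ d (Sum.inl (Nat.find h)) := Nat.find_spec h
      set j₀ := Nat.find h with hj₀def
      have hmin : ∀ m < j₀, d (Sum.inl m) ≤ 1 := by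
        intro m hm
        have := Nat.find_min h hm
        omega
      set d' := d - dl j₀ 2 with hd'def
      have hd : d' + dl j₀ 2 = d := sub_dl_add d j₀ hj2
      have hwt : wt d' + 2 = wt d := wt_sub d j₀ hj2
      rw [nu_min b d j₀ hj2 hmin, FF_add, FF_add,
        IH (3*1+2*wt (d' + dr j₀)) (by simp [map_add]; omega) 1 b _ rfl,
        IH (3*0+2*wt (d' + dl (j₀+1) 1)) (by simp [map_add]; omega) 0 (b+1) _ rfl,
        IH (3*0+2*wt (d' + dl 0 1 + dr j₀)) (by simp [map_add]; omega) 0 (b+1) _ rfl]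
      have hm : (monomial d (1:kk)) = monomial d' 1 * X (Sum.inl j₀) ^ 2 := by
        rw [X_pow_eq_monomial, monomial_mul, mul_one, single_inl_eq_dl, hd]
      have hm1 : (monomial (d' + dr j₀) (1:kk)) = monomial d' 1 * X (Sum.inr j₀) := by
        rw [X_as_monomial, monomial_mul, mul_one, single_inr_eq_dr]
      have hm2 : (monomial (d' + dl (j₀+1) 1) (1:kk)) = monomial d' 1 * X (Sum.inl (j₀+1)) := by
        rw [X_as_monomial, monomial_mul, mul_one, single_inl_eq_dl]
      have hm3 : (monomial (d' + dl 0 1 + dr j₀) (1:kk))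
          = monomial d' 1 * (X (Sum.inl 0) * X (Sum.inr j₀)) := by
        rw [X_as_monomial, X_as_monomial, monomial_mul, one_mul, monomial_mul, mul_one,
          single_inl_eq_dl, single_inr_eq_dr, add_assoc]
      have hrel := mk_gen j₀
      rw [gen, map_sub, sub_eq_zero] at hrel
      rw [hm, hm1, hm2, hm3]
      simp only [map_mul, map_add, mkC] at hrel ⊢
      rw [hrel]
      ring
    · push_neg at h
      have h' : ∀ j, d (Sum.inl j) ≤ 1 := fun j => Nat.lt_succ_iff.mp (h j)
      rw [nu_base b d h', FF_single, monP_eq_monPP, monPP_eq, recomb, map_pow, hρ,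
        pow_zero, mul_one]

include hτ hρ in
lemma SEC (p : MvPolynomial MotVar kk) : FF ηR (nubar p) = mkDSA kk τ₂ ρ₂ p := by
  induction p using MvPolynomial.induction_on' with
  | add p q hp hq => rw [nubar_add, FF_add, hp, hq, map_add]
  | monomial d c =>
    induction c using MvPolynomial.induction_on' with
    | add c₁ c₂ h₁ h₂ => rw [map_add (monomial d), nubar_add, FF_add, h₁, h₂, map_add]
    | monomial e z =>
      rw [nubar_monomial]
      rcases zmod2_cases z with rfl | rfl
      · rw [zero_smul, FF_zero, show (monomial e (0:ZMod 2) : kk) = 0 from map_zero _,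
          map_zero (monomial d), map_zero]
      · rw [one_smul, nu_f ηR hτ hρ (3 * e 0 + 2 * wt d) (e 0) (e 1) d rfl]
        have hsplit : (monomial d (monomial e 1) : MvPolynomial MotVar kk)
            = monomial d 1 * C (monomial e 1) := by rw [mono_mul_C, one_mul]
        have he : (monomial e (1:ZMod 2) : kk) = τ₂ ^ (e 0) * ρ₂ ^ (e 1) := by
          rw [monomial_eq, C_1, one_mul, Finsupp.prod_fintype _ _ (fun j => pow_zero _),
            Fin.prod_univ_two]
          rfl
        rw [hsplit, map_mul, mkC, he, map_mul, map_pow, map_pow, ← mul_assoc]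

include hτ hρ in
lemma nubar_section (h : M) :
    nubar (h.sum fun p c => monP kk p.1.1 p.1.2 * Lc c) = h := by
  rw [show nubar _ = _ from map_finsuppSum NU h fun p c => monP kk p.1.1 p.1.2 * Lc c]
  have step : ∀ (p : Idx) (c : kk),
      nubar (monP kk p.1.1 p.1.2 * Lc c) = Finsupp.single p c := by
    intro p c
    rw [K4, monP_eq_monPP, K5 p.1.1 p.1.2 (fun s => p.2 s), Finsupp.smul_single,
      smul_eq_mul, mul_one]
  calc (h.sum fun p c => NU (monP kk p.1.1 p.1.2 * Lc c))
      = h.sum fun p c => Finsupp.single p c := by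
        apply Finsupp.sum_congr
        intro p _
        exact step p (h p)
    _ = h := Finsupp.sum_single h

include hτ hρ in
theorem statement2' :
    Function.Bijective
      (fun h : {p : (ℕ →₀ ℕ) × (ℕ →₀ ℕ) // ∀ s, p.1 s ≤ 1} →₀ kk =>
        h.sum fun p c => mkDSA kk τ₂ ρ₂ (monP kk p.1.1 p.1.2) * ηR c) := by
  show Function.Bijective (FF ηR)
  constructor
  · have key : ∀ h : M, FF ηR h = 0 → h = 0 := by
      intro h h0
      have hPol : FF ηR h = mkDSA kk τ₂ ρ₂ (h.sum fun p c => monP kk p.1.1 p.1.2 * Lc c) := by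
        rw [show mkDSA kk τ₂ ρ₂ _ = _ from
          map_finsuppSum (mkDSA kk τ₂ ρ₂) h fun p c => monP kk p.1.1 p.1.2 * Lc c, FF]
        apply Finsupp.sum_congr
        intro p _
        rw [map_mul, mk_Lc ηR hτ hρ]
      have hq0 : mkDSA kk τ₂ ρ₂ (h.sum fun p c => monP kk p.1.1 p.1.2 * Lc c) = 0 := by
        rw [← hPol]; exact h0
      have hq : (h.sum fun p c => monP kk p.1.1 p.1.2 * Lc c) ∈ relIdeal kk τ₂ ρ₂ :=
        Ideal.Quotient.eq_zero_iff_mem.mp hq0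
      have h1 : nubar (h.sum fun p c => monP kk p.1.1 p.1.2 * Lc c) = 0 :=
        NU_ideal _ (relIdeal_eq ▸ hq)
      rw [nubar_section ηR hτ hρ h] at h1
      exact h1
    intro h₁ h₂ hEq
    have h0 : FF ηR (h₁ + h₂) = 0 := by
      rw [FF_add, hEq]
      exact DSAtwo _
    have h12 : h₁ + h₂ = 0 := key _ h0
    calc h₁ = h₁ + (h₂ + h₂) := by rw [Mtwo, add_zero]
      _ = (h₁ + h₂) + h₂ := by rw [add_assoc]
      _ = h₂ := by rw [h12, zero_add]
  · intro x
    obtain ⟨p, rfl⟩ := Ideal.Quotient.mk_surjective x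
    exact ⟨nubar p, SEC ηR hτ hρ p⟩

end EtaR
end S2

/-- `𝒜`, regarded as a `k`-module via the right unit `η_R`
(the unique `F₂`-algebra homomorphism with `η_R(τ) = τ + ρ·τ₀` and `η_R(ρ) = ρ`),
is free with basis the monomials `τ^E ξ^R` with all `e_s ∈ {0,1}`: every element of `𝒜`
is uniquely a finite sum `Σ τ^E ξ^R · η_R(h_{E,R})` with `h_{E,R} ∈ k`. -/
theorem statement2 (ηR : kk →ₐ[ZMod 2] DSA kk τ₂ ρ₂)
    (hτ : ηR τ₂ = algebraMap kk (DSA kk τ₂ ρ₂) τ₂ +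
      algebraMap kk (DSA kk τ₂ ρ₂) ρ₂ * mkDSA kk τ₂ ρ₂ (tP kk 0))
    (hρ : ηR ρ₂ = algebraMap kk (DSA kk τ₂ ρ₂) ρ₂) :
    Function.Bijective
      (fun h : {p : (ℕ →₀ ℕ) × (ℕ →₀ ℕ) // ∀ s, p.1 s ≤ 1} →₀ kk =>
        h.sum fun p c => mkDSA kk τ₂ ρ₂ (monP kk p.1.1 p.1.2) * ηR c) :=
  S2.statement2' ηR hτ hρ

end
end

section
/- For every integer n ≥ 0, the images in A(n) of the monomials τ^E ξ^R with E = (e₀, …, e_n), R = (r₁, …, r_n), e_s ∈ {0,1} for 0 ≤ s ≤ n and 0 ≤ r_s < 2^{n+1−s} for 1 ≤ s ≤ n, form a basis of A(n) as a finitely generated free k-module. (Paper's Lemma 'left H-basis of A(n)_{∗,∗}', case ℓ = 2.) -/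
open MvPolynomial TensorProduct

noncomputable section

variable (k : Type) [CommRing k]

variable (τ ρ : k)

/-- The ideal `I(n) ⊆ 𝒜`, generated by the `τ_m` with `m ≥ n+1` and the `ξᵢ^{2^j}`
with `i ≥ 1`, `j ≥ 0`, `i + j ≥ n+1`. -/
def Iideal (n : ℤ) : Ideal (DSA k τ ρ) :=
  Ideal.span ({x | ∃ m : ℕ, n + 1 ≤ (m : ℤ) ∧ x = mkDSA k τ ρ (tP k m)} ∪
    {x | ∃ i j : ℕ, 1 ≤ i ∧ n + 1 ≤ (i : ℤ) + (j : ℤ) ∧ x = mkDSA k τ ρ (xP k i ^ 2 ^ j)})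

/-- The quotient `A(n) = 𝒜/I(n)`. -/
abbrev An (n : ℤ) : Type := DSA k τ ρ ⧸ Iideal k τ ρ n

/-- The index set for the monomial basis of `A(n)`: `E = (e₀, …, e_n)` with every
`e_s ∈ {0,1}`, and `R = (r₁, …, r_n)` with `0 ≤ r_s < 2^{n+1-s}` (recall `R i = r_{i+1}`,
so the condition reads `R i < 2^(n-i)`, which also forces `R i = 0` for `i ≥ n`). -/
def IdxA (n : ℕ) : Type :=
  {p : (ℕ →₀ ℕ) × (ℕ →₀ ℕ) //
    (∀ s, p.1 s ≤ 1) ∧ (∀ s, n < s → p.1 s = 0) ∧ (∀ i, p.2 i < 2 ^ (n - i))}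

namespace St3

set_option synthInstance.maxHeartbeats 1000000
set_option maxHeartbeats 1000000

attribute [local instance] Classical.propDecidable

abbrev D := MotVar →₀ ℕ

def eT (i : ℕ) : D := Finsupp.single (Sum.inl i) 1
def eX (i : ℕ) : D := Finsupp.single (Sum.inr i) 1

def wt (d : D) : ℕ := d.sum fun v e => Sum.elim (fun _ => 2 * e) (fun _ => e) v

lemma wt_add (d d' : D) : wt (d + d') = wt d + wt d' := by
  unfold wt
  rw [Finsupp.sum_add_index'] <;> rintro (i | i) <;> simp [mul_add]

lemma wt_single_inl (i e : ℕ) : wt (Finsupp.single (Sum.inl i) e) = 2 * e := by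
  unfold wt; rw [Finsupp.sum_single_index] <;> simp

lemma wt_single_inr (i e : ℕ) : wt (Finsupp.single (Sum.inr i) e) = e := by
  unfold wt; rw [Finsupp.sum_single_index] <;> simp

lemma sub_add_single {d : D} {v : MotVar} {e : ℕ} (h : e ≤ d v) :
    (d - Finsupp.single v e) + Finsupp.single v e = d :=
  tsub_add_cancel_of_le (Finsupp.single_le_iff.mpr h)

variable (n : ℕ)

def Bad (d : D) : Prop :=
  (∃ m, n < m ∧ 1 ≤ d (Sum.inl m)) ∨ (∃ i, 2 ^ (n - i) ≤ d (Sum.inr i))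

lemma bad_mono {d d' : D} (h : d ≤ d') (hb : Bad n d) : Bad n d' := by
  rcases hb with ⟨m, hm, he⟩ | ⟨i, hi⟩
  · exact Or.inl ⟨m, hm, he.trans (h _)⟩
  · exact Or.inr ⟨i, hi.trans (h _)⟩

def idx (d : D) (h1 : ¬ Bad n d) (h2 : ¬ ∃ i, 2 ≤ d (Sum.inl i)) : IdxA n := by
  refine ⟨Finsupp.sumFinsuppEquivProdFinsupp d, ?_, ?_, ?_⟩
  · intro s
    rw [Finsupp.fst_sumFinsuppEquivProdFinsupp]
    by_contra hc
    exact h2 ⟨s, by omega⟩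
  · intro s hs
    rw [Finsupp.fst_sumFinsuppEquivProdFinsupp]
    by_contra hc
    exact h1 (Or.inl ⟨s, hs, by omega⟩)
  · intro i
    rw [Finsupp.snd_sumFinsuppEquivProdFinsupp]
    by_contra hc
    exact h1 (Or.inr ⟨i, by omega⟩)

lemma wt_eT (i : ℕ) : wt (eT i) = 2 := by rw [eT, wt_single_inl]
lemma wt_eX (i : ℕ) : wt (eX i) = 1 := by rw [eX, wt_single_inr]

lemma wt_sub (d : D) {i : ℕ} (hi : 2 ≤ d (Sum.inl i)) :
    wt (d - Finsupp.single (Sum.inl i) 2) + 4 = wt d := by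
  conv_rhs => rw [← sub_add_single (v := Sum.inl i) (e := 2) hi]
  rw [wt_add, wt_single_inl]

def NF (d : D) : IdxA n →₀ k :=
  if hb : Bad n d then 0
  else if h : ∃ i, 2 ≤ d (Sum.inl i) then
    τ • NF (d - Finsupp.single (Sum.inl (sInf {i | 2 ≤ d (Sum.inl i)})) 2
          + eX (sInf {i | 2 ≤ d (Sum.inl i)}))
    + ρ • NF (d - Finsupp.single (Sum.inl (sInf {i | 2 ≤ d (Sum.inl i)})) 2
          + eT (sInf {i | 2 ≤ d (Sum.inl i)} + 1))
    + ρ • NF (d - Finsupp.single (Sum.inl (sInf {i | 2 ≤ d (Sum.inl i)})) 2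
          + eT 0 + eX (sInf {i | 2 ≤ d (Sum.inl i)}))
  else Finsupp.single (idx n d hb h) 1
termination_by wt d
decreasing_by
  all_goals
    simp only [wt_add, wt_eT, wt_eX]
    have hmem : 2 ≤ d (Sum.inl (sInf {i | 2 ≤ d (Sum.inl i)})) := Nat.sInf_mem h
    have := wt_sub d hmem
    omega

lemma NF_bad {d : D} (h : Bad n d) : NF k τ ρ n d = 0 := by
  rw [NF.eq_def, dif_pos h]

lemma NF_good {d : D} (h1 : ¬ Bad n d) (h2 : ¬ ∃ i, 2 ≤ d (Sum.inl i)) :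
    NF k τ ρ n d = Finsupp.single (idx n d h1 h2) 1 := by
  rw [NF.eq_def, dif_neg h1, dif_neg h2]

lemma NF_sq {d : D} (h1 : ¬ Bad n d) {i : ℕ} (hi : 2 ≤ d (Sum.inl i))
    (hmin : ∀ j < i, d (Sum.inl j) ≤ 1) :
    NF k τ ρ n d =
      τ • NF k τ ρ n (d - Finsupp.single (Sum.inl i) 2 + eX i)
      + ρ • NF k τ ρ n (d - Finsupp.single (Sum.inl i) 2 + eT (i + 1))
      + ρ • NF k τ ρ n (d - Finsupp.single (Sum.inl i) 2 + eT 0 + eX i) := by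
  have hex : ∃ j, 2 ≤ d (Sum.inl j) := ⟨i, hi⟩
  have hs : sInf {j | 2 ≤ d (Sum.inl j)} = i := by
    have hmem : 2 ≤ d (Sum.inl (sInf {j | 2 ≤ d (Sum.inl j)})) := Nat.sInf_mem hex
    have hle : sInf {j | 2 ≤ d (Sum.inl j)} ≤ i := Nat.sInf_le hi
    rcases lt_or_eq_of_le hle with hlt | heq
    · exact absurd hmem (by have := hmin _ hlt; omega)
    · exact heq
  rw [NF.eq_def, dif_neg h1, dif_pos hex]
  simp only [hs]


lemma self_le_add (d c : D) : d ≤ d + c := le_add_right le_rfl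

lemma NF_rel : ∀ w (d : D), wt d = w → ∀ i : ℕ,
    NF k τ ρ n (d + Finsupp.single (Sum.inl i) 2) =
      τ • NF k τ ρ n (d + eX i) + ρ • NF k τ ρ n (d + eT (i + 1))
      + ρ • NF k τ ρ n (d + eT 0 + eX i) := by
  intro w
  induction w using Nat.strong_induction_on with
  | _ w IH =>
  intro d hw i
  by_cases hbad : Bad n d
  · rw [NF_bad k τ ρ n (bad_mono n (self_le_add d _) hbad),
      NF_bad k τ ρ n (bad_mono n (self_le_add d _) hbad),
      NF_bad k τ ρ n (bad_mono n (self_le_add d _) hbad),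
      NF_bad k τ ρ n (bad_mono n ((self_le_add d _).trans (self_le_add _ _)) hbad)]
    simp
  by_cases hni : n < i
  · -- everything bad
    rw [NF_bad k τ ρ n (Or.inl ⟨i, hni, by simp⟩),
      NF_bad k τ ρ n (Or.inr ⟨i, by simp [eX, Nat.sub_eq_zero_of_le hni.le]⟩),
      NF_bad k τ ρ n (Or.inl ⟨i + 1, by omega, by simp [eT]⟩),
      NF_bad k τ ρ n (Or.inr ⟨i, by simp [eX, eT, Nat.sub_eq_zero_of_le hni.le]⟩)]
    simp
  -- i ≤ n
  have hnb2 : ¬ Bad n (d + Finsupp.single (Sum.inl i) 2) := by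
    intro hb
    apply hbad
    rcases hb with ⟨m, hm, he⟩ | ⟨l, hl⟩
    · rcases eq_or_ne m i with rfl | hne
      · omega
      · exact Or.inl ⟨m, hm, by simpa [Finsupp.single_apply, Ne.symm hne] using he⟩
    · exact Or.inr ⟨l, by simpa using hl⟩
  by_cases hmin : ∀ j < i, d (Sum.inl j) ≤ 1
  · -- reduce at i directly
    have h2 : 2 ≤ (d + Finsupp.single (Sum.inl i) 2 : D) (Sum.inl i) := by simp
    have hmin' : ∀ j < i, (d + Finsupp.single (Sum.inl i) 2 : D) (Sum.inl j) ≤ 1 := by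
      intro j hj
      simpa [Finsupp.single_apply, hj.ne'] using hmin j hj
    rw [NF_sq k τ ρ n hnb2 h2 hmin', add_tsub_cancel_right]
  · push_neg at hmin
    obtain ⟨j0, hj0i, hj02⟩ := hmin
    set S : Set ℕ := {j | 2 ≤ d (Sum.inl j)} with hS
    have hex : ∃ j, 2 ≤ d (Sum.inl j) := ⟨j0, hj02⟩
    set j := sInf S with hjdef
    have hj2 : 2 ≤ d (Sum.inl j) := Nat.sInf_mem hex
    have hji : j < i := lt_of_le_of_lt (Nat.sInf_le hj02) hj0i
    have hjmin : ∀ l < j, d (Sum.inl l) ≤ 1 := by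
      intro l hl
      by_contra hc
      exact absurd (Nat.sInf_le (show l ∈ S by simp [hS]; omega)) (by omega)
    set sj2 : D := Finsupp.single (Sum.inl j) 2 with hsj2
    set d' : D := d - sj2 with hd'
    have hd : d = d' + sj2 := (sub_add_single hj2).symm
    have hwd' : wt d' + 4 = wt d := wt_sub d hj2
    -- expand LHS at j
    have h2' : 2 ≤ (d + Finsupp.single (Sum.inl i) 2 : D) (Sum.inl j) := by
      simpa [Finsupp.single_apply, hji.ne'] using hj2
    have hmin' : ∀ l < j, (d + Finsupp.single (Sum.inl i) 2 : D) (Sum.inl l) ≤ 1 := by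
      intro l hl
      have hil : i ≠ l := by omega
      simpa [Finsupp.single_apply, hil] using hjmin l hl
    have hsub : d + Finsupp.single (Sum.inl i) 2 - sj2
        = d' + Finsupp.single (Sum.inl i) 2 := by
      rw [hd, add_right_comm, add_tsub_cancel_right]
    have hL := NF_sq k τ ρ n hnb2 h2' hmin'
    rw [hsub] at hL
    -- inner expansions of LHS (apply IH at i)
    have ihapp : ∀ c : D, wt c < wt d →
        NF k τ ρ n (c + Finsupp.single (Sum.inl i) 2) =
          τ • NF k τ ρ n (c + eX i) + ρ • NF k τ ρ n (c + eT (i + 1))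
          + ρ • NF k τ ρ n (c + eT 0 + eX i) := by
      intro c hc
      exact IH (wt c) (by omega) c rfl i
    have ihappj : ∀ c : D, wt c < wt d →
        NF k τ ρ n (c + sj2) =
          τ • NF k τ ρ n (c + eX j) + ρ • NF k τ ρ n (c + eT (j + 1))
          + ρ • NF k τ ρ n (c + eT 0 + eX j) := by
      intro c hc
      exact IH (wt c) (by omega) c rfl j
    have wX : wt (d' + eX j) < wt d := by rw [wt_add, wt_eX]; omega
    have wT : wt (d' + eT (j + 1)) < wt d := by rw [wt_add, wt_eT]; omega
    have wTX : wt (d' + eT 0 + eX j) < wt d := by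
      rw [wt_add, wt_add, wt_eT, wt_eX]; omega
    have e1 := ihapp _ wX
    have e2 := ihapp _ wT
    have e3 := ihapp _ wTX
    -- RHS expansions (apply IH at j)
    have wX' : wt (d' + eX i) < wt d := by rw [wt_add, wt_eX]; omega
    have wT' : wt (d' + eT (i + 1)) < wt d := by rw [wt_add, wt_eT]; omega
    have wTX' : wt (d' + eT 0 + eX i) < wt d := by
      rw [wt_add, wt_add, wt_eT, wt_eX]; omega
    have f1 : NF k τ ρ n (d' + sj2 + eX i) =
        τ • NF k τ ρ n (d' + eX i + eX j) + ρ • NF k τ ρ n (d' + eX i + eT (j + 1))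
        + ρ • NF k τ ρ n (d' + eX i + eT 0 + eX j) := by
      rw [show d' + sj2 + eX i = d' + eX i + sj2 by abel]
      exact ihappj _ wX'
    have f2 : NF k τ ρ n (d' + sj2 + eT (i + 1)) =
        τ • NF k τ ρ n (d' + eT (i + 1) + eX j)
        + ρ • NF k τ ρ n (d' + eT (i + 1) + eT (j + 1))
        + ρ • NF k τ ρ n (d' + eT (i + 1) + eT 0 + eX j) := by
      rw [show d' + sj2 + eT (i + 1) = d' + eT (i + 1) + sj2 by abel]
      exact ihappj _ wT'
    have f3 : NF k τ ρ n (d' + sj2 + eT 0 + eX i) =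
        τ • NF k τ ρ n (d' + eT 0 + eX i + eX j)
        + ρ • NF k τ ρ n (d' + eT 0 + eX i + eT (j + 1))
        + ρ • NF k τ ρ n (d' + eT 0 + eX i + eT 0 + eX j) := by
      rw [show d' + sj2 + eT 0 + eX i = d' + eT 0 + eX i + sj2 by abel]
      exact ihappj _ wTX'
    rw [hL]
    rw [show d' + Finsupp.single (Sum.inl i) 2 + eX j
          = d' + eX j + Finsupp.single (Sum.inl i) 2 by abel,
      show d' + Finsupp.single (Sum.inl i) 2 + eT (j + 1)
          = d' + eT (j + 1) + Finsupp.single (Sum.inl i) 2 by abel,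
      show d' + Finsupp.single (Sum.inl i) 2 + eT 0 + eX j
          = d' + eT 0 + eX j + Finsupp.single (Sum.inl i) 2 by abel,
      e1, e2, e3]
    conv_rhs => rw [hd]
    rw [f1, f2, f3]
    -- now pure module identity, after matching argument orders
    rw [show d' + eX i + eX j = d' + eX j + eX i by abel,
      show d' + eX i + eT (j + 1) = d' + eT (j + 1) + eX i by abel,
      show d' + eX i + eT 0 + eX j = d' + eT 0 + eX j + eX i by abel,
      show d' + eT (i + 1) + eX j = d' + eX j + eT (i + 1) by abel,
      show d' + eT (i + 1) + eT (j + 1) = d' + eT (j + 1) + eT (i + 1) by abel,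
      show d' + eT (i + 1) + eT 0 + eX j = d' + eT 0 + eX j + eT (i + 1) by abel,
      show d' + eT 0 + eX i + eX j = d' + eX j + eT 0 + eX i by abel,
      show d' + eT 0 + eX i + eT (j + 1) = d' + eT (j + 1) + eT 0 + eX i by abel,
      show d' + eT 0 + eX i + eT 0 + eX j = d' + eT 0 + eX j + eT 0 + eX i by abel]
    module

section SplitLemmas

lemma split_fst_add (a b : D) :
    (Finsupp.sumFinsuppEquivProdFinsupp (a + b)).1
      = (Finsupp.sumFinsuppEquivProdFinsupp a).1 + (Finsupp.sumFinsuppEquivProdFinsupp b).1 := by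
  ext x
  simp [Finsupp.fst_sumFinsuppEquivProdFinsupp]

lemma split_snd_add (a b : D) :
    (Finsupp.sumFinsuppEquivProdFinsupp (a + b)).2
      = (Finsupp.sumFinsuppEquivProdFinsupp a).2 + (Finsupp.sumFinsuppEquivProdFinsupp b).2 := by
  ext x
  simp [Finsupp.snd_sumFinsuppEquivProdFinsupp]

lemma split_single_inl (a : ℕ) (e : ℕ) :
    (Finsupp.sumFinsuppEquivProdFinsupp (Finsupp.single (Sum.inl a) e : D))
      = (Finsupp.single a e, 0) := by
  refine Prod.ext ?_ ?_ <;> ext x <;>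
    simp [Finsupp.fst_sumFinsuppEquivProdFinsupp, Finsupp.snd_sumFinsuppEquivProdFinsupp,
      Finsupp.single_apply]

lemma split_single_inr (a : ℕ) (e : ℕ) :
    (Finsupp.sumFinsuppEquivProdFinsupp (Finsupp.single (Sum.inr a) e : D))
      = (0, Finsupp.single a e) := by
  refine Prod.ext ?_ ?_ <;> ext x <;>
    simp [Finsupp.fst_sumFinsuppEquivProdFinsupp, Finsupp.snd_sumFinsuppEquivProdFinsupp,
      Finsupp.single_apply]

lemma monP_split (d : D) :
    monP k (Finsupp.sumFinsuppEquivProdFinsupp d).1 (Finsupp.sumFinsuppEquivProdFinsupp d).2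
      = monomial d 1 := by
  induction d using Finsupp.induction with
  | zero =>
    simp [monP, Finsupp.sumFinsuppEquivProdFinsupp]
  | single_add v e f hv he ih =>
    have key : ∀ g : D, monP k (Finsupp.sumFinsuppEquivProdFinsupp g).1
        (Finsupp.sumFinsuppEquivProdFinsupp g).2 = monomial g 1 → True := fun _ _ => trivial
    rw [split_fst_add, split_snd_add]
    have hmul : ∀ (E₁ E₂ R₁ R₂ : ℕ →₀ ℕ),
        monP k (E₁ + E₂) (R₁ + R₂) = monP k E₁ R₁ * monP k E₂ R₂ := by
      intro E₁ E₂ R₁ R₂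
      unfold monP
      rw [Finsupp.prod_add_index' (by intro a; exact pow_zero _) (by intro a b₁ b₂; exact pow_add _ _ _),
        Finsupp.prod_add_index' (by intro a; exact pow_zero _) (by intro a b₁ b₂; exact pow_add _ _ _)]
      ring
    rw [hmul, ih]
    have hsingle : monP k (Finsupp.sumFinsuppEquivProdFinsupp (Finsupp.single v e : D)).1
        (Finsupp.sumFinsuppEquivProdFinsupp (Finsupp.single v e : D)).2 = monomial (Finsupp.single v e) 1 := by
      rcases v with a | a
      · rw [split_single_inl]
        unfold monP
        dsimp only
        rw [Finsupp.prod_single_index (h := fun i e => tP k i ^ e) (pow_zero _),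
          Finsupp.prod_zero_index, mul_one]
        rw [show tP k a = X (Sum.inl a) from rfl, MvPolynomial.X_pow_eq_monomial]
      · rw [split_single_inr]
        unfold monP
        dsimp only
        rw [Finsupp.prod_single_index (h := fun i r => xP k (i + 1) ^ r) (pow_zero _),
          Finsupp.prod_zero_index, one_mul]
        rw [show xP k (a + 1) = X (Sum.inr a) from rfl, MvPolynomial.X_pow_eq_monomial]
    rw [hsingle, MvPolynomial.monomial_mul, one_mul, add_comm]

end SplitLemmas

def Ntil (p : MvPolynomial MotVar k) : IdxA n →₀ k := Finsupp.sum (AddMonoidAlgebra.coeff p) fun d c => c • NF k τ ρ n d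

lemma Ntil_monomial (d : D) (c : k) : Ntil k τ ρ n (monomial d c) = c • NF k τ ρ n d := by
  unfold Ntil
  rw [show AddMonoidAlgebra.coeff (monomial d c : MvPolynomial MotVar k) = Finsupp.single d c from rfl]
  exact Finsupp.sum_single_index (by simp)

lemma Ntil_add (p q : MvPolynomial MotVar k) :
    Ntil k τ ρ n (p + q) = Ntil k τ ρ n p + Ntil k τ ρ n q := by
  unfold Ntil; rw [AddMonoidAlgebra.coeff_add]; exact Finsupp.sum_add_index' (fun _ => by simp) (fun _ b₁ b₂ => add_smul b₁ b₂ _)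

def NtilH : MvPolynomial MotVar k →+ (IdxA n →₀ k) where
  toFun := Ntil k τ ρ n
  map_zero' := by unfold Ntil; simp
  map_add' := Ntil_add k τ ρ n

lemma Ntil_C_mul (c : k) (p : MvPolynomial MotVar k) :
    Ntil k τ ρ n (C c * p) = c • Ntil k τ ρ n p := by
  induction p using MvPolynomial.induction_on' with
  | monomial d a =>
    rw [C_mul_monomial, Ntil_monomial, Ntil_monomial, smul_smul]
  | add p q ihp ihq =>
    rw [mul_add, Ntil_add, Ntil_add, ihp, ihq, smul_add]

/-- The generating set of the kernel ideal, inside the polynomial ring. -/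
def gset : Set (MvPolynomial MotVar k) :=
  (Set.range fun i : ℕ =>
    tP k i ^ 2 - (C τ * xP k (i + 1) + C ρ * tP k (i + 1) + C ρ * tP k 0 * xP k (i + 1)))
  ∪ ({p | ∃ m : ℕ, n < m ∧ p = tP k m}
  ∪ {p | ∃ i j : ℕ, 1 ≤ i ∧ n + 1 ≤ i + j ∧ p = xP k i ^ 2 ^ j})

lemma grel_eq (i : ℕ) :
    tP k i ^ 2 - (C τ * xP k (i + 1) + C ρ * tP k (i + 1) + C ρ * tP k 0 * xP k (i + 1))
      = monomial (Finsupp.single (Sum.inl i) 2) 1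
        - (monomial (eX i) τ + monomial (eT (i + 1)) ρ + monomial (eT 0 + eX i) ρ) := by
  have hX : ∀ v : MotVar, (X v : MvPolynomial MotVar k) = monomial (Finsupp.single v 1) 1 :=
    fun v => rfl
  rw [show tP k i = X (Sum.inl i) from rfl, show xP k (i + 1) = X (Sum.inr i) from rfl,
    show tP k (i + 1) = X (Sum.inl (i + 1)) from rfl, show tP k 0 = X (Sum.inl 0) from rfl,
    MvPolynomial.X_pow_eq_monomial, hX (Sum.inr i), hX (Sum.inl (i + 1)), hX (Sum.inl 0),
    C_mul_monomial, C_mul_monomial, C_mul_monomial, monomial_mul]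
  simp only [eT, eX, mul_one]

lemma Ntil_mul_gen (q : MvPolynomial MotVar k) {g : MvPolynomial MotVar k}
    (hg : g ∈ gset k τ ρ n) : Ntil k τ ρ n (q * g) = 0 := by
  induction q using MvPolynomial.induction_on' with
  | add p q ihp ihq => rw [add_mul, Ntil_add, ihp, ihq, add_zero]
  | monomial d c =>
    rcases hg with ⟨i, rfl⟩ | ⟨m, hm, rfl⟩ | ⟨i, j, hi1, hij, rfl⟩
    · -- relation generator
      dsimp only
      rw [grel_eq]
      rw [mul_sub, mul_add, mul_add, MvPolynomial.monomial_mul, MvPolynomial.monomial_mul,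
        MvPolynomial.monomial_mul, MvPolynomial.monomial_mul]
      rw [show Ntil k τ ρ n = NtilH k τ ρ n from rfl, map_sub, map_add, map_add,
        show (NtilH k τ ρ n : MvPolynomial MotVar k → IdxA n →₀ k) = Ntil k τ ρ n from rfl,
        Ntil_monomial, Ntil_monomial, Ntil_monomial, Ntil_monomial]
      rw [NF_rel k τ ρ n (wt d) d rfl i, show d + (eT 0 + eX i) = d + eT 0 + eX i by abel]
      simp only [mul_one]
      module
    · -- tau generator
      rw [show tP k m = monomial (eT m) 1 from rfl, MvPolynomial.monomial_mul, Ntil_monomial,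
        NF_bad k τ ρ n (Or.inl ⟨m, hm, by simp [eT]⟩), smul_zero]
    · -- xi generator
      obtain ⟨a, rfl⟩ : ∃ a, i = a + 1 := ⟨i - 1, by omega⟩
      rw [show xP k (a + 1) = X (Sum.inr a) from rfl, MvPolynomial.X_pow_eq_monomial,
        MvPolynomial.monomial_mul, Ntil_monomial]
      have hbad : Bad n (d + Finsupp.single (Sum.inr a) (2 ^ j)) := by
        refine Or.inr ⟨a, ?_⟩
        have h1 : (n : ℕ) - a ≤ j := by omega
        have h2 : (2 : ℕ) ^ (n - a) ≤ 2 ^ j := Nat.pow_le_pow_right (by norm_num) h1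
        simp only [Finsupp.add_apply, Finsupp.single_apply, eq_self_iff_true, if_true]
        omega
      rw [NF_bad k τ ρ n hbad, smul_zero]

lemma Ntil_span (x : MvPolynomial MotVar k) (hx : x ∈ Ideal.span (gset k τ ρ n)) :
    Ntil k τ ρ n x = 0 := by
  have main : ∀ x ∈ Ideal.span (gset k τ ρ n), ∀ r : MvPolynomial MotVar k,
      Ntil k τ ρ n (r * x) = 0 := by
    intro x hx
    refine Submodule.span_induction ?_ ?_ ?_ ?_ hx
    · intro g hg r
      exact Ntil_mul_gen k τ ρ n r hg
    · intro r
      rw [mul_zero]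
      exact Finsupp.sum_zero_index
    · intro a b _ _ iha ihb r
      rw [mul_add, Ntil_add, iha, ihb, add_zero]
    · intro a b _ ihb r
      rw [smul_eq_mul, ← mul_assoc]
      exact ihb (r * a)
  simpa using main x hx 1

def Phi : MvPolynomial MotVar k →ₐ[k] An k τ ρ (n : ℤ) :=
  (Ideal.Quotient.mkₐ k (Iideal k τ ρ (n : ℤ))).comp (Ideal.Quotient.mkₐ k (relIdeal k τ ρ))

lemma Phi_apply (x : MvPolynomial MotVar k) :
    Phi k τ ρ n x = Ideal.Quotient.mk (Iideal k τ ρ (n : ℤ)) (mkDSA k τ ρ x) := rfl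

lemma Phi_gen {g : MvPolynomial MotVar k} (hg : g ∈ gset k τ ρ n) : Phi k τ ρ n g = 0 := by
  rcases hg with ⟨i, rfl⟩ | ⟨m, hm, rfl⟩ | ⟨i, j, hi1, hij, rfl⟩
  · dsimp only
    have : (tP k i ^ 2 - (C τ * xP k (i + 1) + C ρ * tP k (i + 1) + C ρ * tP k 0 * xP k (i + 1)))
        ∈ relIdeal k τ ρ := Ideal.subset_span ⟨i, rfl⟩
    rw [Phi_apply, show mkDSA k τ ρ _ = 0 from Ideal.Quotient.eq_zero_iff_mem.mpr this, map_zero]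
  · rw [Phi_apply]
    refine Ideal.Quotient.eq_zero_iff_mem.mpr (Ideal.subset_span (Or.inl ⟨m, ?_, rfl⟩))
    push_cast
    omega
  · rw [Phi_apply]
    refine Ideal.Quotient.eq_zero_iff_mem.mpr (Ideal.subset_span (Or.inr ⟨i, j, hi1, ?_, rfl⟩))
    push_cast
    omega

lemma Phi_ker {x : MvPolynomial MotVar k} (hx : Phi k τ ρ n x = 0) :
    x ∈ Ideal.span (gset k τ ρ n) := by
  rw [Phi_apply] at hx
  have hmem : mkDSA k τ ρ x ∈ Iideal k τ ρ (n : ℤ) := Ideal.Quotient.eq_zero_iff_mem.mp hx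
  have hle : Iideal k τ ρ (n : ℤ) ≤ Ideal.map (mkDSA k τ ρ) (Ideal.span (gset k τ ρ n)) := by
    rw [Iideal, Ideal.span_le]
    rintro y (⟨m, hm, rfl⟩ | ⟨i, j, hi1, hij, rfl⟩)
    · refine Ideal.mem_map_of_mem _ (Ideal.subset_span (Or.inr (Or.inl ⟨m, ?_, rfl⟩)))
      omega
    · refine Ideal.mem_map_of_mem _ (Ideal.subset_span (Or.inr (Or.inr ⟨i, j, hi1, ?_, rfl⟩)))
      omega
  have hcm : x ∈ Ideal.comap (mkDSA k τ ρ) (Ideal.map (mkDSA k τ ρ) (Ideal.span (gset k τ ρ n))) :=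
    Ideal.mem_comap.mpr (hle hmem)
  rw [Ideal.comap_map_of_surjective (mkDSA k τ ρ)
    (show Function.Surjective (mkDSA k τ ρ) from Ideal.Quotient.mk_surjective)] at hcm
  have hker : Ideal.comap (mkDSA k τ ρ) ⊥ ≤ Ideal.span (gset k τ ρ n) := by
    intro y hy
    have : y ∈ relIdeal k τ ρ := by
      have h0 : mkDSA k τ ρ y = 0 := by simpa [Ideal.mem_comap, Ideal.mem_bot] using hy
      exact Ideal.Quotient.eq_zero_iff_mem.mp h0
    refine Ideal.span_mono ?_ (by rwa [relIdeal] at this)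
    exact Set.subset_union_left
  rwa [sup_eq_left.mpr hker] at hcm

def bvec (p : IdxA n) : An k τ ρ (n : ℤ) := Phi k τ ρ n (monP k p.1.1 p.1.2)

def lin : (IdxA n →₀ k) →ₗ[k] An k τ ρ (n : ℤ) :=
  Finsupp.linearCombination k (bvec k τ ρ n)

lemma Phi_C_mul (c : k) (y : MvPolynomial MotVar k) :
    Phi k τ ρ n (C c * y) = c • Phi k τ ρ n y := by
  rw [map_mul, show (C c : MvPolynomial MotVar k) = algebraMap k _ c from rfl,
    AlgHom.commutes, ← Algebra.smul_def]

lemma span_main : ∀ w (d : D), wt d = w →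
    Phi k τ ρ n (monomial d 1) = lin k τ ρ n (NF k τ ρ n d) := by
  intro w
  induction w using Nat.strong_induction_on with
  | _ w IH =>
  intro d hw
  by_cases hbad : Bad n d
  · rw [NF_bad k τ ρ n hbad, map_zero]
    rcases hbad with ⟨m, hm, hdm⟩ | ⟨a, ha⟩
    · have : monomial d (1 : k) = monomial (d - eT m) 1 * tP k m := by
        rw [show tP k m = monomial (eT m) 1 from rfl, MvPolynomial.monomial_mul, one_mul,
          show d - eT m + eT m = d from by rw [eT]; exact sub_add_single hdm]
      rw [this, map_mul, Phi_gen k τ ρ n (Or.inr (Or.inl ⟨m, hm, rfl⟩))]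
      exact mul_zero (M₀ := An k τ ρ (n : ℤ)) _
    · have hfac : monomial d (1 : k)
          = monomial (d - Finsupp.single (Sum.inr a) (2 ^ (n - a))) 1 * xP k (a + 1) ^ 2 ^ (n - a) := by
        rw [show xP k (a + 1) = X (Sum.inr a) from rfl, MvPolynomial.X_pow_eq_monomial,
          MvPolynomial.monomial_mul, one_mul, sub_add_single ha]
      rw [hfac, map_mul,
        Phi_gen k τ ρ n (Or.inr (Or.inr ⟨a + 1, n - a, by omega, by omega, rfl⟩))]
      exact mul_zero (M₀ := An k τ ρ (n : ℤ)) _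
  by_cases hsq : ∃ i, 2 ≤ d (Sum.inl i)
  · set i := sInf {i | 2 ≤ d (Sum.inl i)} with hidef
    have hi : 2 ≤ d (Sum.inl i) := Nat.sInf_mem hsq
    have hmin : ∀ j < i, d (Sum.inl j) ≤ 1 := by
      intro l hl
      by_contra hc
      exact absurd (Nat.sInf_le (show l ∈ {i | 2 ≤ d (Sum.inl i)} by simp; omega)) (by omega)
    set d' : D := d - Finsupp.single (Sum.inl i) 2 with hd'def
    have hd : d = d' + Finsupp.single (Sum.inl i) 2 := (sub_add_single hi).symm
    have hwd : wt d' + 4 = wt d := wt_sub d hi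
    have hfac : monomial d (1 : k) = monomial d' 1 * tP k i ^ 2 := by
      rw [show tP k i = X (Sum.inl i) from rfl, MvPolynomial.X_pow_eq_monomial,
        MvPolynomial.monomial_mul, one_mul, ← hd]
    have hrel : Phi k τ ρ n (tP k i ^ 2)
        = Phi k τ ρ n (C τ * xP k (i + 1) + C ρ * tP k (i + 1) + C ρ * tP k 0 * xP k (i + 1)) := by
      rw [← sub_eq_zero, ← map_sub]
      exact Phi_gen k τ ρ n (Or.inl ⟨i, rfl⟩)
    have hm1 : monomial d' (1 : k) * (C τ * xP k (i + 1)) = C τ * monomial (d' + eX i) 1 := by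
      rw [show xP k (i + 1) = monomial (eX i) 1 from rfl]
      simp only [C_mul_monomial, MvPolynomial.monomial_mul, one_mul, mul_one]
    have hm2 : monomial d' (1 : k) * (C ρ * tP k (i + 1)) = C ρ * monomial (d' + eT (i + 1)) 1 := by
      rw [show tP k (i + 1) = monomial (eT (i + 1)) 1 from rfl]
      simp only [C_mul_monomial, MvPolynomial.monomial_mul, one_mul, mul_one]
    have hm3 : monomial d' (1 : k) * (C ρ * tP k 0 * xP k (i + 1))
        = C ρ * monomial (d' + eT 0 + eX i) 1 := by
      rw [show tP k 0 = monomial (eT 0) 1 from rfl, show xP k (i + 1) = monomial (eX i) 1 from rfl]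
      simp only [C_mul_monomial, MvPolynomial.monomial_mul, one_mul, mul_one]
      rw [show d' + (eT 0 + eX i) = d' + eT 0 + eX i by abel]
    have wX : wt (d' + eX i) < wt d := by rw [wt_add, wt_eX]; omega
    have wT : wt (d' + eT (i + 1)) < wt d := by rw [wt_add, wt_eT]; omega
    have wTX : wt (d' + eT 0 + eX i) < wt d := by rw [wt_add, wt_add, wt_eT, wt_eX]; omega
    rw [hfac, map_mul, hrel, ← map_mul, mul_add, mul_add, hm1, hm2, hm3, map_add, map_add,
      Phi_C_mul, Phi_C_mul, Phi_C_mul,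
      IH _ (by omega) (d' + eX i) rfl, IH _ (by omega) (d' + eT (i + 1)) rfl,
      IH _ (by omega) (d' + eT 0 + eX i) rfl,
      NF_sq k τ ρ n hbad hi hmin, ← hd'def]
    rw [map_add, map_add, map_smul, map_smul, map_smul]
  · rw [NF_good k τ ρ n hbad hsq, lin, Finsupp.linearCombination_single, one_smul]
    rw [← monP_split k d]
    rfl

lemma Ntil_monP (p : IdxA n) :
    Ntil k τ ρ n (monP k p.1.1 p.1.2) = Finsupp.single p 1 := by
  set d : D := Finsupp.sumFinsuppEquivProdFinsupp.symm p.1 with hddef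
  have hsplit : Finsupp.sumFinsuppEquivProdFinsupp d = p.1 := Equiv.apply_symm_apply _ _
  have hdl : ∀ s, d (Sum.inl s) = p.1.1 s := fun s =>
    Finsupp.sumFinsuppEquivProdFinsupp_symm_inl _ s
  have hdr : ∀ s, d (Sum.inr s) = p.1.2 s := fun s =>
    Finsupp.sumFinsuppEquivProdFinsupp_symm_inr _ s
  have h1 : ¬ Bad n d := by
    rintro (⟨m, hm, hdm2⟩ | ⟨a, ha⟩)
    · rw [hdl] at *
      have := p.2.2.1 m hm
      omega
    · rw [hdr] at ha
      have := p.2.2.2 a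
      omega
  have h2 : ¬ ∃ i, 2 ≤ d (Sum.inl i) := by
    rintro ⟨i, hi⟩
    rw [hdl] at hi
    have := p.2.1 i
    omega
  have hmon : monP k p.1.1 p.1.2 = monomial d 1 := by
    conv_lhs => rw [← hsplit]
    exact monP_split k d
  rw [hmon, Ntil_monomial, NF_good k τ ρ n h1 h2, one_smul]
  congr 1
  exact Subtype.ext hsplit

lemma lin_injective : Function.Injective (lin k τ ρ n) := by
  rw [injective_iff_map_eq_zero]
  intro x hx
  set y : MvPolynomial MotVar k := x.sum fun p c => C c * monP k p.1.1 p.1.2 with hydef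
  have hPy : Phi k τ ρ n y = lin k τ ρ n x := by
    rw [hydef, map_finsuppSum, lin, Finsupp.linearCombination_apply]
    exact Finsupp.sum_congr fun p _ => Phi_C_mul k τ ρ n _ _
  have hNy : Ntil k τ ρ n y = x := by
    rw [hydef, show Ntil k τ ρ n = NtilH k τ ρ n from rfl, map_finsuppSum]
    have : ∀ p ∈ x.support, NtilH k τ ρ n (C (x p) * monP k p.1.1 p.1.2)
        = Finsupp.single p (x p) := by
      intro p _
      show Ntil k τ ρ n _ = _
      rw [Ntil_C_mul, Ntil_monP, Finsupp.smul_single', mul_one]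
    rw [Finsupp.sum_congr this, Finsupp.sum_single]
  rw [← hNy]
  exact Ntil_span k τ ρ n y (Phi_ker k τ ρ n (by rw [hPy, hx]))

lemma lin_surjective : Function.Surjective (lin k τ ρ n) := by
  have hmem : ∀ x : MvPolynomial MotVar k, Phi k τ ρ n x ∈ LinearMap.range (lin k τ ρ n) := by
    intro x
    induction x using MvPolynomial.induction_on' with
    | monomial d c =>
      have : monomial d c = C c * monomial d 1 := by rw [C_mul_monomial, mul_one]
      rw [this, Phi_C_mul, span_main k τ ρ n (wt d) d rfl]
      exact ⟨c • NF k τ ρ n d, map_smul _ _ _⟩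
    | add p q ihp ihq =>
      rw [map_add]
      exact Submodule.add_mem _ ihp ihq
  intro y
  obtain ⟨z, rfl⟩ := Ideal.Quotient.mk_surjective y
  obtain ⟨x, rfl⟩ := Ideal.Quotient.mk_surjective z
  obtain ⟨v, hv⟩ := hmem x
  exact ⟨v, hv⟩

lemma idx_finite : Finite (IdxA n) := by
  have hf : Function.Injective (fun p : IdxA n =>
      ((fun s : Fin (n + 1) => (⟨p.1.1 s.val, by have := p.2.1 s.val; omega⟩ : Fin 2)),
       (fun s : Fin (n + 1) => (⟨p.1.2 s.val, by
          have h1 := p.2.2.2 s.val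
          have h2 : (2 : ℕ) ^ (n - s.val) ≤ 2 ^ (n + 1) := Nat.pow_le_pow_right (by norm_num) (by omega)
          omega⟩ : Fin (2 ^ (n + 1)))))) := by
    intro p q h
    obtain ⟨h1, h2⟩ := Prod.mk.injEq .. ▸ h
    apply Subtype.ext
    apply Prod.ext
    · ext s
      by_cases hs : s ≤ n
      · have := congrFun h1 ⟨s, by omega⟩
        simpa using this
      · rw [p.2.2.1 s (by omega), q.2.2.1 s (by omega)]
    · ext s
      by_cases hs : s ≤ n
      · have := congrFun h2 ⟨s, by omega⟩
        simpa using this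
      · have hp := p.2.2.2 s
        have hq := q.2.2.2 s
        have : n - s = 0 := by omega
        rw [this] at hp hq
        omega
  exact Finite.of_injective _ hf

end St3

/-- For every `n ≥ 0`, the images in `A(n)` of the monomials `τ^E ξ^R`
with `e_s ∈ {0,1}` for `0 ≤ s ≤ n` and `0 ≤ r_s < 2^{n+1-s}` for `1 ≤ s ≤ n` form a basis
of `A(n)` as a finitely generated free `k`-module. -/
theorem statement3 (k : Type) [CommRing k] (h2 : (2 : k) = 0) (τ ρ : k) (n : ℕ) :
    Finite (IdxA n) ∧
    ∃ b : Module.Basis (IdxA n) k (An k τ ρ n),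
      ∀ p : IdxA n,
        b p = Ideal.Quotient.mk (Iideal k τ ρ n) (mkDSA k τ ρ (monP k p.1.1 p.1.2)) := by
  refine ⟨St3.idx_finite n, ?_⟩
  have hbij : Function.Bijective (St3.lin k τ ρ n) :=
    ⟨St3.lin_injective k τ ρ n, St3.lin_surjective k τ ρ n⟩
  let e := LinearEquiv.ofBijective (St3.lin k τ ρ n) hbij
  refine ⟨Module.Basis.ofRepr e.symm, fun p => ?_⟩
  have hb : (Module.Basis.ofRepr e.symm) p = e.symm.symm (Finsupp.single p 1) := by
    rw [Module.Basis.coe_ofRepr]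
  rw [hb, LinearEquiv.symm_symm]
  show St3.lin k τ ρ n (Finsupp.single p 1) = _
  rw [St3.lin, Finsupp.linearCombination_single, one_smul]
  rfl

end
end

section
/- For every integer n ≥ 0, A(n) regarded as a k-module via the right unit π_n ∘ η_R (action h · x := π_n(η_R(h))·x) is free with basis the same monomials τ^E ξ^R with e_s ∈ {0,1} for 0 ≤ s ≤ n and 0 ≤ r_s < 2^{n+1−s} for 1 ≤ s ≤ n. (Paper's Lemma 'right H-basis of A(n)_{∗,∗}', case ℓ = 2.) -/
open MvPolynomial TensorProduct

set_option synthInstance.maxHeartbeats 400000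

noncomputable section

variable (k : Type) [CommRing k]

variable (τ ρ : k)

----------------------------------------------------------------
-- Auxiliary development
----------------------------------------------------------------
namespace St4

abbrev P : Type := MvPolynomial MotVar kk

abbrev Mdl (n : ℕ) : Type := IdxA n →₀ kk

/-- total degree in the τ variables -/
def τdeg (m : MotVar →₀ ℕ) : ℕ := m.sum fun v e => match v with | .inl _ => e | .inr _ => 0

lemma τdeg_add (a b : MotVar →₀ ℕ) : τdeg (a + b) = τdeg a + τdeg b := by
  unfold τdeg
  apply Finsupp.sum_add_index' (by intro v; cases v <;> rfl) (by intro v e e'; cases v <;> simp)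

lemma τdeg_single_inl (i e : ℕ) : τdeg (Finsupp.single (Sum.inl i : MotVar) e) = e := by
  unfold τdeg
  by_cases he : e = 0
  · simp [he]
  · rw [Finsupp.sum_single_index] <;> rfl

lemma τdeg_single_inr (i e : ℕ) : τdeg (Finsupp.single (Sum.inr i : MotVar) e) = 0 := by
  unfold τdeg
  by_cases he : e = 0
  · simp [he]
  · rw [Finsupp.sum_single_index] <;> rfl

/-- monomials killed in `A(n)` -/
def Dead (n : ℕ) (m : MotVar →₀ ℕ) : Prop :=
  (∃ i, n < i ∧ 1 ≤ m (Sum.inl i)) ∨ (∃ i, 2 ^ (n - i) ≤ m (Sum.inr i))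

variable {n : ℕ}

lemma sub_add_cancel_of_le {m s : MotVar →₀ ℕ} (h : s ≤ m) : m - s + s = m :=
  tsub_add_cancel_of_le h

lemma single_le_iff {v : MotVar} {e : ℕ} {m : MotVar →₀ ℕ} :
    Finsupp.single v e ≤ m ↔ e ≤ m v := by
  constructor
  · intro h; simpa using h v
  · intro h w
    rcases eq_or_ne w v with rfl | hw
    · simpa using h
    · simp [Finsupp.single_apply, Ne.symm hw]

open scoped Classical in
def nf (n : ℕ) (m : MotVar →₀ ℕ) : Mdl n :=
  if h : ∃ i, 2 ≤ m (Sum.inl i) then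
    let i := Nat.find h
    let m' := m - Finsupp.single (Sum.inl i) 2
    τ₂ • nf n (m' + Finsupp.single (Sum.inr i) 1)
      + ρ₂ • nf n (m' + Finsupp.single (Sum.inl (i + 1)) 1)
      + ρ₂ • nf n (m' + Finsupp.single (Sum.inl 0) 1 + Finsupp.single (Sum.inr i) 1)
  else if hd : Dead n m then 0
  else Finsupp.single
    ⟨(Finsupp.comapDomain Sum.inl m Sum.inl_injective.injOn,
      Finsupp.comapDomain Sum.inr m Sum.inr_injective.injOn),
      by
        refine ⟨fun s => ?_, fun s hs => ?_, fun i => ?_⟩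
        · simpa using not_lt.mp fun hc => h ⟨s, Nat.succ_le_of_lt (by simpa using hc)⟩
        · have h1 := not_le.mp fun hc => hd (Or.inl ⟨s, hs, by simpa using hc⟩)
          simp only [Finsupp.comapDomain_apply]
          omega
        · simpa using not_le.mp fun hc => hd (Or.inr ⟨i, by simpa using hc⟩)⟩ 1
  termination_by τdeg m
  decreasing_by
  all_goals {
    have h2 : (2 : ℕ) ≤ m (Sum.inl (Nat.find h)) := Nat.find_spec h
    have hle : Finsupp.single (Sum.inl (Nat.find h) : MotVar) 2 ≤ m := single_le_iff.mpr h2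
    have hm : (m - Finsupp.single (Sum.inl (Nat.find h)) 2) + Finsupp.single (Sum.inl (Nat.find h)) 2 = m :=
      sub_add_cancel_of_le hle
    have : τdeg m = τdeg (m - Finsupp.single (Sum.inl (Nat.find h)) 2) + 2 := by
      conv_lhs => rw [← hm]
      rw [τdeg_add, τdeg_single_inl]
    simp only [τdeg_add, τdeg_single_inl, τdeg_single_inr]
    omega
  }


lemma apply_inl_le_τdeg (m : MotVar →₀ ℕ) (j : ℕ) : m (Sum.inl j) ≤ τdeg m := by
  by_cases hm : Sum.inl j ∈ m.support
  · exact Finset.single_le_sum (f := fun v => (fun e => match v with | .inl _ => e | .inr _ => (0:ℕ)) (m v))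
      (fun v _ => by cases v <;> simp) hm |>.trans_eq rfl
  · simp [Finsupp.notMem_support_iff.mp hm]

lemma nf_congr {a b : MotVar →₀ ℕ} (h : a = b) : nf n a = nf n b := by rw [h]

lemma nf_expand_aux : ∀ (d : ℕ) (m : MotVar →₀ ℕ), τdeg m ≤ d → ∀ i : ℕ,
    nf n (m + Finsupp.single (Sum.inl i) 2) =
      τ₂ • nf n (m + Finsupp.single (Sum.inr i) 1)
      + ρ₂ • nf n (m + Finsupp.single (Sum.inl (i + 1)) 1)
      + ρ₂ • nf n (m + Finsupp.single (Sum.inl 0) 1 + Finsupp.single (Sum.inr i) 1) := by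
  intro d
  induction d with
  | zero =>
    intro m hm i
    set M0 := m + Finsupp.single (Sum.inl i) 2 with hM0
    have hex : ∃ i', 2 ≤ M0 (Sum.inl i') := ⟨i, by simp [hM0]⟩
    rw [nf, dif_pos hex]
    dsimp only
    rcases eq_or_ne (Nat.find hex) i with hji | hji
    · rw [hji]
      have : M0 - Finsupp.single (Sum.inl i) 2 = m := add_tsub_cancel_right m _
      rw [this]
    · exfalso
      have h2 : 2 ≤ M0 (Sum.inl (Nat.find hex)) := Nat.find_spec hex
      have : M0 (Sum.inl (Nat.find hex)) = m (Sum.inl (Nat.find hex)) := by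
        show (m + Finsupp.single (Sum.inl i) 2 : MotVar →₀ ℕ) (Sum.inl (Nat.find hex)) = _
        rw [Finsupp.add_apply, Finsupp.single_apply,
          if_neg (fun hc => hji (Sum.inl.inj hc).symm), add_zero]
      have := apply_inl_le_τdeg m (Nat.find hex)
      omega
  | succ d IH =>
    intro m hm i
    set M0 := m + Finsupp.single (Sum.inl i) 2 with hM0
    have hex : ∃ i', 2 ≤ M0 (Sum.inl i') := ⟨i, by simp [hM0]⟩
    rw [nf, dif_pos hex]
    dsimp only
    rcases eq_or_ne (Nat.find hex) i with hji | hji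
    · rw [hji]
      have : M0 - Finsupp.single (Sum.inl i) 2 = m := add_tsub_cancel_right m _
      rw [this]
    · set j := Nat.find hex with hj
      have h2 : 2 ≤ M0 (Sum.inl j) := Nat.find_spec hex
      have h2m : 2 ≤ m (Sum.inl j) := by
        have : M0 (Sum.inl j) = m (Sum.inl j) := by
          simp [hM0, Finsupp.single_apply, Ne.symm hji]
        omega
      set m₁ := m - Finsupp.single (Sum.inl j) 2 with hm₁def
      have hm₁ : m₁ + Finsupp.single (Sum.inl j) 2 = m :=
        sub_add_cancel_of_le (single_le_iff.mpr h2m)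
      have hτm₁ : τdeg m₁ + 2 = τdeg m := by
        conv_rhs => rw [← hm₁]
        rw [τdeg_add, τdeg_single_inl]
      have key : M0 - Finsupp.single (Sum.inl j) 2 = m₁ + Finsupp.single (Sum.inl i) 2 := by
        rw [hM0, ← hm₁, add_right_comm, add_tsub_cancel_right]
      rw [key]
      -- expand the three left arguments at i via IH
      have hd1 : τdeg (m₁ + Finsupp.single (Sum.inr j) 1) ≤ d := by
        rw [τdeg_add, τdeg_single_inr]; omega
      have hd2 : τdeg (m₁ + Finsupp.single (Sum.inl (j+1)) 1) ≤ d := by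
        rw [τdeg_add, τdeg_single_inl]; omega
      have hd3 : τdeg (m₁ + Finsupp.single (Sum.inl 0) 1 + Finsupp.single (Sum.inr j) 1) ≤ d := by
        rw [τdeg_add, τdeg_add, τdeg_single_inl, τdeg_single_inr]; omega
      have hd1' : τdeg (m₁ + Finsupp.single (Sum.inr i) 1) ≤ d := by
        rw [τdeg_add, τdeg_single_inr]; omega
      have hd2' : τdeg (m₁ + Finsupp.single (Sum.inl (i+1)) 1) ≤ d := by
        rw [τdeg_add, τdeg_single_inl]; omega
      have hd3' : τdeg (m₁ + Finsupp.single (Sum.inl 0) 1 + Finsupp.single (Sum.inr i) 1) ≤ d := by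
        rw [τdeg_add, τdeg_add, τdeg_single_inl, τdeg_single_inr]; omega
      rw [nf_congr (show m₁ + Finsupp.single (Sum.inl i) 2 + Finsupp.single (Sum.inr j) 1
            = (m₁ + Finsupp.single (Sum.inr j) 1) + Finsupp.single (Sum.inl i) 2 by abel),
          nf_congr (show m₁ + Finsupp.single (Sum.inl i) 2 + Finsupp.single (Sum.inl (j+1)) 1
            = (m₁ + Finsupp.single (Sum.inl (j+1)) 1) + Finsupp.single (Sum.inl i) 2 by abel),
          nf_congr (show m₁ + Finsupp.single (Sum.inl i) 2 + Finsupp.single (Sum.inl 0) 1 + Finsupp.single (Sum.inr j) 1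
            = (m₁ + Finsupp.single (Sum.inl 0) 1 + Finsupp.single (Sum.inr j) 1) + Finsupp.single (Sum.inl i) 2 by abel),
          IH _ hd1 i, IH _ hd2 i, IH _ hd3 i]
      -- expand the three right arguments at j via IH
      rw [nf_congr (show m + Finsupp.single (Sum.inr i) 1
            = (m₁ + Finsupp.single (Sum.inr i) 1) + Finsupp.single (Sum.inl j) 2 by rw [← hm₁]; abel),
          nf_congr (show m + Finsupp.single (Sum.inl (i+1)) 1
            = (m₁ + Finsupp.single (Sum.inl (i+1)) 1) + Finsupp.single (Sum.inl j) 2 by rw [← hm₁]; abel),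
          nf_congr (show m + Finsupp.single (Sum.inl 0) 1 + Finsupp.single (Sum.inr i) 1
            = (m₁ + Finsupp.single (Sum.inl 0) 1 + Finsupp.single (Sum.inr i) 1) + Finsupp.single (Sum.inl j) 2 by rw [← hm₁]; abel),
          IH _ hd1' j, IH _ hd2' j, IH _ hd3' j]
      simp only [smul_add, smul_smul]
      rw [nf_congr (show m₁ + Finsupp.single (Sum.inr i) 1 + Finsupp.single (Sum.inr j) 1
            = m₁ + Finsupp.single (Sum.inr j) 1 + Finsupp.single (Sum.inr i) 1 by abel),
          nf_congr (show m₁ + Finsupp.single (Sum.inr i) 1 + Finsupp.single (Sum.inl (j+1)) 1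
            = m₁ + Finsupp.single (Sum.inl (j+1)) 1 + Finsupp.single (Sum.inr i) 1 by abel),
          nf_congr (show m₁ + Finsupp.single (Sum.inr i) 1 + Finsupp.single (Sum.inl 0) 1 + Finsupp.single (Sum.inr j) 1
            = m₁ + Finsupp.single (Sum.inl 0) 1 + Finsupp.single (Sum.inr j) 1 + Finsupp.single (Sum.inr i) 1 by abel),
          nf_congr (show m₁ + Finsupp.single (Sum.inl (i+1)) 1 + Finsupp.single (Sum.inr j) 1
            = m₁ + Finsupp.single (Sum.inr j) 1 + Finsupp.single (Sum.inl (i+1)) 1 by abel),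
          nf_congr (show m₁ + Finsupp.single (Sum.inl (i+1)) 1 + Finsupp.single (Sum.inl (j+1)) 1
            = m₁ + Finsupp.single (Sum.inl (j+1)) 1 + Finsupp.single (Sum.inl (i+1)) 1 by abel),
          nf_congr (show m₁ + Finsupp.single (Sum.inl (i+1)) 1 + Finsupp.single (Sum.inl 0) 1 + Finsupp.single (Sum.inr j) 1
            = m₁ + Finsupp.single (Sum.inl 0) 1 + Finsupp.single (Sum.inr j) 1 + Finsupp.single (Sum.inl (i+1)) 1 by abel),
          nf_congr (show m₁ + Finsupp.single (Sum.inl 0) 1 + Finsupp.single (Sum.inr i) 1 + Finsupp.single (Sum.inr j) 1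
            = m₁ + Finsupp.single (Sum.inr j) 1 + Finsupp.single (Sum.inl 0) 1 + Finsupp.single (Sum.inr i) 1 by abel),
          nf_congr (show m₁ + Finsupp.single (Sum.inl 0) 1 + Finsupp.single (Sum.inr i) 1 + Finsupp.single (Sum.inl (j+1)) 1
            = m₁ + Finsupp.single (Sum.inl (j+1)) 1 + Finsupp.single (Sum.inl 0) 1 + Finsupp.single (Sum.inr i) 1 by abel),
          nf_congr (show m₁ + Finsupp.single (Sum.inl 0) 1 + Finsupp.single (Sum.inr i) 1 + Finsupp.single (Sum.inl 0) 1 + Finsupp.single (Sum.inr j) 1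
            = m₁ + Finsupp.single (Sum.inl 0) 1 + Finsupp.single (Sum.inr j) 1 + Finsupp.single (Sum.inl 0) 1 + Finsupp.single (Sum.inr i) 1 by abel)]
      module

lemma nf_expand (m : MotVar →₀ ℕ) (i : ℕ) :
    nf n (m + Finsupp.single (Sum.inl i) 2) =
      τ₂ • nf n (m + Finsupp.single (Sum.inr i) 1)
      + ρ₂ • nf n (m + Finsupp.single (Sum.inl (i + 1)) 1)
      + ρ₂ • nf n (m + Finsupp.single (Sum.inl 0) 1 + Finsupp.single (Sum.inr i) 1) :=
  nf_expand_aux (τdeg m) m le_rfl i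


lemma dead_mono {a b : MotVar →₀ ℕ} (h : a ≤ b) (hd : Dead n a) : Dead n b := by
  rcases hd with ⟨w, hw, hv⟩ | ⟨w, hv⟩
  · exact Or.inl ⟨w, hw, hv.trans (h _)⟩
  · exact Or.inr ⟨w, hv.trans (h _)⟩

lemma le_add_single (m : MotVar →₀ ℕ) (v : MotVar) (e : ℕ) : m ≤ m + Finsupp.single v e :=
  le_add_of_nonneg_right zero_le

lemma nf_dead_aux : ∀ (d : ℕ) (m : MotVar →₀ ℕ), τdeg m ≤ d → Dead n m → nf n m = 0 := by
  intro d
  induction d with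
  | zero =>
    intro m hm hd
    have hex : ¬∃ i, 2 ≤ m (Sum.inl i) := by
      rintro ⟨i, hi⟩
      have := apply_inl_le_τdeg m i
      omega
    rw [nf, dif_neg hex, dif_pos hd]
  | succ d IH =>
    intro m hm hd
    by_cases hex : ∃ i, 2 ≤ m (Sum.inl i)
    · rw [nf, dif_pos hex]
      dsimp only
      set j := Nat.find hex with hj
      have h2 : 2 ≤ m (Sum.inl j) := Nat.find_spec hex
      set m' := m - Finsupp.single (Sum.inl j) 2 with hm'def
      have hm' : m' + Finsupp.single (Sum.inl j) 2 = m :=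
        sub_add_cancel_of_le (single_le_iff.mpr h2)
      have hτ : τdeg m' + 2 = τdeg m := by
        conv_rhs => rw [← hm']
        rw [τdeg_add, τdeg_single_inl]
      have hτ1 : τdeg (m' + Finsupp.single (Sum.inr j) 1) ≤ d := by
        rw [τdeg_add, τdeg_single_inr]; omega
      have hτ2 : τdeg (m' + Finsupp.single (Sum.inl (j+1)) 1) ≤ d := by
        rw [τdeg_add, τdeg_single_inl]; omega
      have hτ3 : τdeg (m' + Finsupp.single (Sum.inl 0) 1 + Finsupp.single (Sum.inr j) 1) ≤ d := by
        rw [τdeg_add, τdeg_add, τdeg_single_inl, τdeg_single_inr]; omega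
      -- deadness of the three children
      have hdead : Dead n (m' + Finsupp.single (Sum.inr j) 1)
          ∧ Dead n (m' + Finsupp.single (Sum.inl (j+1)) 1)
          ∧ Dead n (m' + Finsupp.single (Sum.inl 0) 1 + Finsupp.single (Sum.inr j) 1) := by
        rcases hd with ⟨w, hw, hv⟩ | ⟨w, hv⟩
        · rcases eq_or_ne w j with rfl | hwj
          · refine ⟨Or.inr ⟨j, ?_⟩, Or.inl ⟨j+1, by omega, ?_⟩, Or.inr ⟨j, ?_⟩⟩
            · have : n - j = 0 := by omega
              rw [this, pow_zero, Finsupp.add_apply, Finsupp.single_apply, if_pos rfl]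
              omega
            · rw [Finsupp.add_apply, Finsupp.single_apply, if_pos rfl]; omega
            · have : n - j = 0 := by omega
              rw [this, pow_zero, Finsupp.add_apply, Finsupp.single_apply, if_pos rfl]
              omega
          · have hv' : 1 ≤ m' (Sum.inl w) := by
              rw [hm'def, Finsupp.tsub_apply, Finsupp.single_apply,
                if_neg (fun hc => hwj (Sum.inl.inj hc).symm)]
              omega
            have := fun (x : MotVar →₀ ℕ) (hx : m' ≤ x) => dead_mono hx (Or.inl ⟨w, hw, hv'⟩)
            exact ⟨this _ (le_add_single _ _ _), this _ (le_add_single _ _ _),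
              this _ ((le_add_single _ _ _).trans (le_add_single _ _ _))⟩
        · have hv' : 2 ^ (n - w) ≤ m' (Sum.inr w) := by
            rw [hm'def, Finsupp.tsub_apply, Finsupp.single_apply, if_neg (by simp)]
            omega
          have := fun (x : MotVar →₀ ℕ) (hx : m' ≤ x) => dead_mono hx (Or.inr ⟨w, hv'⟩)
          exact ⟨this _ (le_add_single _ _ _), this _ (le_add_single _ _ _),
            this _ ((le_add_single _ _ _).trans (le_add_single _ _ _))⟩
      rw [IH _ hτ1 hdead.1, IH _ hτ2 hdead.2.1, IH _ hτ3 hdead.2.2]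
      simp
    · rw [nf, dif_neg hex, dif_pos hd]

lemma nf_dead {m : MotVar →₀ ℕ} (hd : Dead n m) : nf n m = 0 :=
  nf_dead_aux (τdeg m) m le_rfl hd

/-- embedding of exponent pairs into `MotVar` exponents -/
def emb (p : (ℕ →₀ ℕ) × (ℕ →₀ ℕ)) : MotVar →₀ ℕ :=
  p.1.mapDomain Sum.inl + p.2.mapDomain Sum.inr

lemma emb_apply_inl (p : (ℕ →₀ ℕ) × (ℕ →₀ ℕ)) (s : ℕ) : emb p (Sum.inl s) = p.1 s := by
  rw [emb, Finsupp.add_apply, Finsupp.mapDomain_apply Sum.inl_injective,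
    Finsupp.mapDomain_notin_range _ _ (by simp), add_zero]

lemma emb_apply_inr (p : (ℕ →₀ ℕ) × (ℕ →₀ ℕ)) (s : ℕ) : emb p (Sum.inr s) = p.2 s := by
  rw [emb, Finsupp.add_apply, Finsupp.mapDomain_apply Sum.inr_injective,
    Finsupp.mapDomain_notin_range _ _ (by simp), zero_add]

lemma emb_comap (m : MotVar →₀ ℕ) :
    emb (Finsupp.comapDomain Sum.inl m Sum.inl_injective.injOn,
      Finsupp.comapDomain Sum.inr m Sum.inr_injective.injOn) = m := by
  ext v
  cases v with
  | inl s => rw [emb_apply_inl]; simp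
  | inr s => rw [emb_apply_inr]; simp

lemma nf_basis (p : IdxA n) : nf n (emb p.1) = Finsupp.single p 1 := by
  obtain ⟨h1, h2, h3⟩ := p.2
  have hex : ¬∃ i, 2 ≤ emb p.1 (Sum.inl i) := by
    rintro ⟨i, hi⟩
    rw [emb_apply_inl] at hi
    exact absurd (h1 i) (by omega)
  have hd : ¬Dead n (emb p.1) := by
    rintro (⟨w, hw, hv⟩ | ⟨w, hv⟩)
    · rw [emb_apply_inl] at hv
      rw [h2 w hw] at hv
      omega
    · rw [emb_apply_inr] at hv
      exact absurd (h3 w) (by omega)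
  rw [nf, dif_neg hex, dif_neg hd]
  congr 1
  apply Subtype.ext
  apply Prod.ext
  · ext s
    rw [Finsupp.comapDomain_apply, emb_apply_inl]
  · ext s
    rw [Finsupp.comapDomain_apply, emb_apply_inr]


instance (n : ℕ) : DecidableEq (IdxA n) := Classical.decEq _

/-- weights of the variables -/
def wv : MotVar → ℕ
  | .inl i => 2 ^ (i + 1) - 1
  | .inr i => 2 ^ (i + 2) - 2

def Wm (m : MotVar →₀ ℕ) : ℕ := m.sum fun v e => e * wv v

lemma Wm_add (a b : MotVar →₀ ℕ) : Wm (a + b) = Wm a + Wm b := by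
  unfold Wm
  apply Finsupp.sum_add_index' (by intro v; simp) (by intro v e e'; rw [add_mul])

lemma Wm_single (v : MotVar) (e : ℕ) : Wm (Finsupp.single v e) = e * wv v := by
  unfold Wm
  by_cases he : e = 0
  · simp [he]
  · rw [Finsupp.sum_single_index]; simp

lemma one_le_wv (v : MotVar) : 1 ≤ wv v := by
  cases v with
  | inl i =>
    have : (2:ℕ)^1 ≤ 2^(i+1) := Nat.pow_le_pow_right (by norm_num) (by omega)
    simp only [wv]; omega
  | inr i =>
    have : (2:ℕ)^2 ≤ 2^(i+2) := Nat.pow_le_pow_right (by norm_num) (by omega)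
    simp only [wv]; omega

lemma Wm_pos_of_ne_zero {m : MotVar →₀ ℕ} (h : m ≠ 0) : 1 ≤ Wm m := by
  obtain ⟨v, hv⟩ : ∃ v, m v ≠ 0 := by
    by_contra hc
    push_neg at hc
    exact h (Finsupp.ext fun v => hc v)
  have hvs : v ∈ m.support := Finsupp.mem_support_iff.mpr hv
  calc 1 ≤ m v * wv v := Nat.one_le_iff_ne_zero.mpr
        (Nat.mul_ne_zero hv (by have := one_le_wv v; omega))
    _ ≤ Wm m := Finset.single_le_sum (f := fun v => m v * wv v) (fun _ _ => Nat.zero_le _) hvs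

/-- the weight of a basis index -/
def W (p : IdxA n) : ℕ := Wm (emb p.1)

lemma mem_support_smul {c : kk} {x : Mdl n} {p : IdxA n}
    (h : p ∈ (c • x).support) : p ∈ x.support := by
  rw [Finsupp.mem_support_iff] at h ⊢
  intro hx
  apply h
  rw [Finsupp.smul_apply, hx, smul_zero]

lemma mem_support_add {x y : Mdl n} {p : IdxA n}
    (h : p ∈ (x + y).support) : p ∈ x.support ∨ p ∈ y.support := by
  rw [Finsupp.mem_support_iff] at h
  rw [Finsupp.mem_support_iff, Finsupp.mem_support_iff]
  by_contra hc
  push_neg at hc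
  rw [Finsupp.add_apply, hc.1, hc.2, add_zero] at h
  exact h rfl

lemma nf_W_aux : ∀ (d : ℕ) (m : MotVar →₀ ℕ), τdeg m ≤ d →
    ∀ p ∈ (nf n m).support, Wm m ≤ W p := by
  intro d
  induction d with
  | zero =>
    intro m hm p hp
    have hex : ¬∃ i, 2 ≤ m (Sum.inl i) := by
      rintro ⟨i, hi⟩
      have := apply_inl_le_τdeg m i
      omega
    by_cases hd : Dead n m
    · rw [nf_dead hd] at hp
      simp at hp
    · rw [nf, dif_neg hex, dif_neg hd] at hp
      have := Finsupp.support_single_subset hp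
      replace this := Finset.mem_singleton.mp this
      subst this
      exact (congrArg Wm (emb_comap m)).ge
  | succ d IH =>
    intro m hm p hp
    by_cases hex : ∃ i, 2 ≤ m (Sum.inl i)
    · obtain ⟨j, h2⟩ := hex
      set m' := m - Finsupp.single (Sum.inl j) 2 with hm'def
      have hm' : m' + Finsupp.single (Sum.inl j) 2 = m :=
        sub_add_cancel_of_le (single_le_iff.mpr h2)
      have hτ : τdeg m' + 2 = τdeg m := by
        conv_rhs => rw [← hm']
        rw [τdeg_add, τdeg_single_inl]
      have hrw : nf n m = τ₂ • nf n (m' + Finsupp.single (Sum.inr j) 1)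
          + ρ₂ • nf n (m' + Finsupp.single (Sum.inl (j + 1)) 1)
          + ρ₂ • nf n (m' + Finsupp.single (Sum.inl 0) 1 + Finsupp.single (Sum.inr j) 1) := by
        conv_lhs => rw [← hm']
        exact nf_expand m' j
      rw [hrw] at hp
      have pow_eq : (2:ℕ) ^ (j + 2) = 2 * 2 ^ (j + 1) := by ring
      have pow_pos : (1:ℕ) ≤ 2 ^ (j + 1) := Nat.one_le_two_pow
      have hWm : Wm m = Wm m' + 2 * (2 ^ (j+1) - 1) := by
        conv_lhs => rw [← hm']
        rw [Wm_add, Wm_single]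
        rfl
      have key : ∀ (x : MotVar →₀ ℕ), τdeg x ≤ d → Wm m ≤ Wm x →
          p ∈ (nf n x).support → Wm m ≤ W p := by
        intro x hτx hWx hpx
        exact le_trans hWx (IH _ hτx p hpx)
      rcases mem_support_add hp with hp' | hp'
      rcases mem_support_add hp' with hp'' | hp''
      · refine key _ (by rw [τdeg_add, τdeg_single_inr]; omega) ?_
          (mem_support_smul hp'')
        rw [Wm_add, Wm_single]
        show Wm m ≤ Wm m' + 1 * (2 ^ (j + 2) - 2)
        omega
      · refine key _ (by rw [τdeg_add, τdeg_single_inl]; omega) ?_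
          (mem_support_smul hp'')
        rw [Wm_add, Wm_single]
        show Wm m ≤ Wm m' + 1 * (2 ^ (j + 2) - 1)
        omega
      · refine key _ (by rw [τdeg_add, τdeg_add, τdeg_single_inl, τdeg_single_inr]; omega) ?_
          (mem_support_smul hp')
        rw [Wm_add, Wm_add, Wm_single, Wm_single]
        show Wm m ≤ Wm m' + 1 * (2 ^ (0 + 1) - 1) + 1 * (2 ^ (j + 2) - 2)
        omega
    · by_cases hd : Dead n m
      · rw [nf_dead hd] at hp
        simp at hp
      · rw [nf, dif_neg hex, dif_neg hd] at hp
        have := Finsupp.support_single_subset hp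
        replace this := Finset.mem_singleton.mp this
        subst this
        exact (congrArg Wm (emb_comap m)).ge

lemma nf_W {m : MotVar →₀ ℕ} {p : IdxA n} (hp : p ∈ (nf n m).support) : Wm m ≤ W p :=
  nf_W_aux (τdeg m) m le_rfl p hp

----------------------------------------------------------------
-- the polynomial-side normal form operator
----------------------------------------------------------------

def Nf (n : ℕ) (f : P) : Mdl n := (AddMonoidAlgebra.coeff f).sum fun m c => c • nf n m

lemma Nf_monomial (m : MotVar →₀ ℕ) (c : kk) : Nf n (monomial m c) = c • nf n m := by
  rw [Nf]
  exact sum_monomial_eq (zero_smul _ _)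

lemma Nf_zero : Nf n (0 : P) = 0 := by simp [Nf]

lemma Nf_add (f g : P) : Nf n (f + g) = Nf n f + Nf n g := by
  rw [Nf, Nf, Nf, AddMonoidAlgebra.coeff_add]
  exact Finsupp.sum_add_index' (fun _ => zero_smul _ _) (fun _ b c => add_smul b c _)

lemma Nf_smul (c : kk) (f : P) : Nf n (c • f) = c • Nf n f := by
  induction f using MvPolynomial.induction_on' with
  | add a b ha hb => rw [smul_add, Nf_add, Nf_add, ha, hb, smul_add]
  | monomial m b =>
    rw [smul_monomial, Nf_monomial,
      Nf_monomial, smul_eq_mul, mul_smul]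

lemma Nf_C_mul (c : kk) (f : P) : Nf n (C c * f) = c • Nf n f := by
  rw [← smul_eq_C_mul, Nf_smul]

lemma Nf_sub (f g : P) : Nf n (f - g) = Nf n f - Nf n g := by
  have h := Nf_add (n := n) (f - g) g
  rw [sub_add_cancel] at h
  rw [eq_sub_iff_add_eq, ← h]

def sgf (n : ℕ) (h : Mdl n) : P := h.sum fun p c => monomial (emb p.1) c

lemma sgf_single (p : IdxA n) (c : kk) :
    sgf n (Finsupp.single p c) = monomial (emb p.1) c :=
  Finsupp.sum_single_index (by simp)

lemma sgf_add (a b : Mdl n) : sgf n (a + b) = sgf n a + sgf n b :=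
  Finsupp.sum_add_index' (fun _ => by simp) (fun _ b c => by rw [map_add])

lemma sgf_zero : sgf n (0 : Mdl n) = 0 := rfl

lemma sgf_smul (c : kk) (a : Mdl n) : sgf n (c • a) = C c * sgf n a := by
  induction a using Finsupp.induction_linear with
  | zero => rw [smul_zero, sgf_zero, mul_zero]
  | add a b ha hb => rw [smul_add, sgf_add, sgf_add, ha, hb, mul_add]
  | single p b =>
    rw [Finsupp.smul_single, sgf_single, sgf_single, ← smul_eq_C_mul, smul_monomial,
      smul_eq_mul]

lemma Nf_sgf (h : Mdl n) : Nf n (sgf n h) = h := by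
  induction h using Finsupp.induction_linear with
  | zero => rw [sgf, Finsupp.sum_zero_index, Nf_zero]
  | add a b ha hb => rw [sgf_add, Nf_add, ha, hb]
  | single p c =>
    rw [sgf_single, Nf_monomial, nf_basis, Finsupp.smul_single, smul_eq_mul, mul_one]


----------------------------------------------------------------
-- the ideal J = ker(P → A(n))
----------------------------------------------------------------

def relP (i : ℕ) : P :=
  tP kk i ^ 2 - (C τ₂ * xP kk (i + 1) + C ρ₂ * tP kk (i + 1) + C ρ₂ * tP kk 0 * xP kk (i + 1))

def genSet (n : ℕ) : Set P :=
  Set.range relP ∪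
    ({x | ∃ m : ℕ, (n : ℤ) + 1 ≤ (m : ℤ) ∧ x = tP kk m} ∪
      {x | ∃ i j : ℕ, 1 ≤ i ∧ (n : ℤ) + 1 ≤ (i : ℤ) + (j : ℤ) ∧ x = xP kk i ^ 2 ^ j})

def JId (n : ℕ) : Ideal P := Ideal.span (genSet n)

lemma X_eq_mono (v : MotVar) : (X v : P) = monomial (Finsupp.single v 1) 1 := by
  rw [← X_pow_eq_monomial, pow_one]

lemma mono_mul_mono (m s : MotVar →₀ ℕ) :
    monomial m (1 : kk) * monomial s 1 = monomial (m + s) 1 := by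
  rw [monomial_mul, one_mul]

lemma mono_mul_C_mono (m s : MotVar →₀ ℕ) (c : kk) :
    monomial m (1 : kk) * (C c * monomial s 1) = C c * monomial (m + s) 1 := by
  rw [mul_left_comm, monomial_mul, one_mul]

lemma monomial_mul_relP (m' : MotVar →₀ ℕ) (j : ℕ) :
    monomial m' (1 : kk) * relP j =
      monomial (m' + Finsupp.single (Sum.inl j) 2) 1 -
        (C τ₂ * monomial (m' + Finsupp.single (Sum.inr j) 1) 1 +
          C ρ₂ * monomial (m' + Finsupp.single (Sum.inl (j + 1)) 1) 1 +
          C ρ₂ * monomial (m' + Finsupp.single (Sum.inl 0) 1 + Finsupp.single (Sum.inr j) 1) 1) := by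
  have hx : relP j = monomial (Finsupp.single (Sum.inl j : MotVar) 2) 1 -
      (C τ₂ * monomial (Finsupp.single (Sum.inr j : MotVar) 1) 1 +
        C ρ₂ * monomial (Finsupp.single (Sum.inl (j+1) : MotVar) 1) 1 +
        C ρ₂ * monomial (Finsupp.single (Sum.inl 0 : MotVar) 1 + Finsupp.single (Sum.inr j : MotVar) 1) 1) := by
    rw [relP]
    show (X (Sum.inl j):P)^2 - (C τ₂ * X (Sum.inr j) + C ρ₂ * X (Sum.inl (j+1))
        + C ρ₂ * X (Sum.inl 0) * X (Sum.inr j)) = _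
    rw [X_pow_eq_monomial]
    simp only [X_eq_mono]
    rw [mul_assoc (C ρ₂), mono_mul_mono]
  rw [hx, mul_sub, mul_add, mul_add, mono_mul_mono, mono_mul_C_mono, mono_mul_C_mono,
    mono_mul_C_mono, ← add_assoc]

lemma Nf_mul_relP (f : P) (i : ℕ) : Nf n (f * relP i) = 0 := by
  induction f using MvPolynomial.induction_on' with
  | add p q hp hq => rw [add_mul, Nf_add, hp, hq, add_zero]
  | monomial m c =>
    have hmc : (monomial m c : P) = C c * monomial m 1 := by
      rw [← smul_eq_C_mul, smul_monomial, smul_eq_mul, mul_one]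
    rw [hmc, mul_assoc, Nf_C_mul, monomial_mul_relP, Nf_sub, Nf_add, Nf_add,
      Nf_C_mul, Nf_C_mul, Nf_C_mul, Nf_monomial, Nf_monomial, Nf_monomial, Nf_monomial,
      one_smul, one_smul, one_smul, one_smul, nf_expand]
    simp only [smul_sub, smul_add]
    abel

lemma Nf_dead_monomial {m : MotVar →₀ ℕ} (hd : Dead n m) (c : kk) :
    Nf n (monomial m c) = 0 := by
  rw [Nf_monomial, nf_dead hd, smul_zero]

lemma Nf_mul_tP (f : P) {m : ℕ} (hm : n < m) : Nf n (f * tP kk m) = 0 := by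
  induction f using MvPolynomial.induction_on' with
  | add p q hp hq => rw [add_mul, Nf_add, hp, hq, add_zero]
  | monomial u c =>
    rw [show (tP kk m : P) = monomial (Finsupp.single (Sum.inl m) 1) 1 from X_eq_mono _,
      monomial_mul]
    refine Nf_dead_monomial (Or.inl ⟨m, hm, ?_⟩) _
    rw [Finsupp.add_apply, Finsupp.single_apply, if_pos rfl]
    omega

lemma Nf_mul_xP (f : P) {w j : ℕ} (hw : n - w ≤ j) : Nf n (f * X (Sum.inr w) ^ 2 ^ j) = 0 := by
  induction f using MvPolynomial.induction_on' with
  | add p q hp hq => rw [add_mul, Nf_add, hp, hq, add_zero]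
  | monomial u c =>
    rw [X_pow_eq_monomial, monomial_mul]
    refine Nf_dead_monomial (Or.inr ⟨w, ?_⟩) _
    rw [Finsupp.add_apply, Finsupp.single_apply, if_pos rfl]
    have : (2:ℕ) ^ (n - w) ≤ 2 ^ j := Nat.pow_le_pow_right (by norm_num) hw
    omega

lemma Nf_J {x : P} (hx : x ∈ JId n) : ∀ f : P, Nf n (f * x) = 0 := by
  induction hx using Submodule.span_induction with
  | mem g hg =>
    rcases hg with ⟨i, rfl⟩ | ⟨m, hm, rfl⟩ | ⟨i, j, hi1, hij, rfl⟩
    · exact fun f => Nf_mul_relP f i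
    · exact fun f => Nf_mul_tP f (by exact_mod_cast hm)
    · obtain ⟨w, rfl⟩ := Nat.exists_eq_add_of_le hi1
      intro f
      have hw : n - w ≤ j := by
        have : (n : ℤ) + 1 ≤ (1 + w : ℕ) + (j : ℕ) := by exact_mod_cast hij
        have : n + 1 ≤ 1 + w + j := by exact_mod_cast this
        omega
      have : xP kk (1 + w) = X (Sum.inr w) := by
        rw [show 1 + w = w + 1 from by omega]
        rfl
      rw [this]
      exact Nf_mul_xP f hw
  | zero => intro f; rw [mul_zero, Nf_zero]
  | add x y _ _ hx hy => intro f; rw [mul_add, Nf_add, hx, hy, add_zero]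
  | smul a x _ hx => intro f; rw [smul_eq_mul, ← mul_assoc]; exact hx _


lemma relP_mem (j : ℕ) : relP j ∈ genSet n := Or.inl ⟨j, rfl⟩

lemma dead_monomial_mem {m : MotVar →₀ ℕ} (hd : Dead n m) : (monomial m 1 : P) ∈ JId n := by
  rcases hd with ⟨w, hw, hv⟩ | ⟨w, hv⟩
  · have hle : Finsupp.single (Sum.inl w : MotVar) 1 ≤ m := single_le_iff.mpr hv
    have heq : monomial (m - Finsupp.single (Sum.inl w) 1) (1:kk) * tP kk w = monomial m 1 := by
      rw [show (tP kk w : P) = monomial (Finsupp.single (Sum.inl w) 1) 1 from X_eq_mono _,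
        mono_mul_mono, sub_add_cancel_of_le hle]
    rw [← heq]
    refine Ideal.mul_mem_left _ _ (Ideal.subset_span (Or.inr (Or.inl ⟨w, ?_, rfl⟩)))
    omega
  · have hle : Finsupp.single (Sum.inr w : MotVar) (2 ^ (n - w)) ≤ m := single_le_iff.mpr hv
    have heq : monomial (m - Finsupp.single (Sum.inr w) (2 ^ (n - w))) (1:kk)
        * xP kk (w + 1) ^ 2 ^ (n - w) = monomial m 1 := by
      rw [show (xP kk (w+1) : P) ^ 2 ^ (n-w) = monomial (Finsupp.single (Sum.inr w) (2^(n-w))) 1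
          from X_pow_eq_monomial,
        mono_mul_mono, sub_add_cancel_of_le hle]
    rw [← heq]
    refine Ideal.mul_mem_left _ _ (Ideal.subset_span (Or.inr (Or.inr ⟨w+1, n-w, by omega, ?_, rfl⟩)))
    omega

lemma key_C_aux : ∀ (d : ℕ) (m : MotVar →₀ ℕ), τdeg m ≤ d →
    (monomial m (1:kk) : P) - sgf n (nf n m) ∈ JId n := by
  intro d
  induction d with
  | zero =>
    intro m hm
    have hex : ¬∃ i, 2 ≤ m (Sum.inl i) := by
      rintro ⟨i, hi⟩
      have := apply_inl_le_τdeg m i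
      omega
    by_cases hdead : Dead n m
    · rw [nf_dead hdead, sgf_zero, sub_zero]
      exact dead_monomial_mem hdead
    · rw [nf, dif_neg hex, dif_neg hdead]; erw [sgf_single]
      show (monomial m 1 : P) - monomial (emb (Finsupp.comapDomain Sum.inl m Sum.inl_injective.injOn,
        Finsupp.comapDomain Sum.inr m Sum.inr_injective.injOn)) 1 ∈ JId n
      rw [emb_comap, sub_self]
      exact zero_mem _
  | succ d IH =>
    intro m hm
    by_cases hex : ∃ i, 2 ≤ m (Sum.inl i)
    · obtain ⟨j, h2⟩ := hex
      set m' := m - Finsupp.single (Sum.inl j) 2 with hm'def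
      have hm' : m' + Finsupp.single (Sum.inl j) 2 = m :=
        sub_add_cancel_of_le (single_le_iff.mpr h2)
      have hτ : τdeg m' + 2 = τdeg m := by
        conv_rhs => rw [← hm']
        rw [τdeg_add, τdeg_single_inl]
      have hnf : nf n m = τ₂ • nf n (m' + Finsupp.single (Sum.inr j) 1)
          + ρ₂ • nf n (m' + Finsupp.single (Sum.inl (j + 1)) 1)
          + ρ₂ • nf n (m' + Finsupp.single (Sum.inl 0) 1 + Finsupp.single (Sum.inr j) 1) := by
        conv_lhs => rw [← hm']
        exact nf_expand m' j
      have I1 := IH (m' + Finsupp.single (Sum.inr j) 1) (by rw [τdeg_add, τdeg_single_inr]; omega)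
      have I2 := IH (m' + Finsupp.single (Sum.inl (j+1)) 1) (by rw [τdeg_add, τdeg_single_inl]; omega)
      have I3 := IH (m' + Finsupp.single (Sum.inl 0) 1 + Finsupp.single (Sum.inr j) 1)
        (by rw [τdeg_add, τdeg_add, τdeg_single_inl, τdeg_single_inr]; omega)
      have hrel : monomial m' 1 * relP j ∈ JId n :=
        Ideal.mul_mem_left _ _ (Ideal.subset_span (relP_mem j))
      have hexp : monomial m' (1:kk) * relP j =
          monomial m 1 -
            (C τ₂ * monomial (m' + Finsupp.single (Sum.inr j) 1) 1 +
              C ρ₂ * monomial (m' + Finsupp.single (Sum.inl (j + 1)) 1) 1 +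
              C ρ₂ * monomial (m' + Finsupp.single (Sum.inl 0) 1 + Finsupp.single (Sum.inr j) 1) 1) := by
        rw [monomial_mul_relP, hm']
      rw [hnf, sgf_add, sgf_add, sgf_smul, sgf_smul, sgf_smul]
      have lhs_eq : (monomial m 1 : P) -
          (C τ₂ * sgf n (nf n (m' + Finsupp.single (Sum.inr j) 1)) +
            C ρ₂ * sgf n (nf n (m' + Finsupp.single (Sum.inl (j + 1)) 1)) +
            C ρ₂ * sgf n (nf n (m' + Finsupp.single (Sum.inl 0) 1 + Finsupp.single (Sum.inr j) 1))) =
          monomial m' 1 * relP j +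
            (C τ₂ * (monomial (m' + Finsupp.single (Sum.inr j) 1) 1 -
                sgf n (nf n (m' + Finsupp.single (Sum.inr j) 1))) +
              C ρ₂ * (monomial (m' + Finsupp.single (Sum.inl (j + 1)) 1) 1 -
                sgf n (nf n (m' + Finsupp.single (Sum.inl (j + 1)) 1))) +
              C ρ₂ * (monomial (m' + Finsupp.single (Sum.inl 0) 1 + Finsupp.single (Sum.inr j) 1) 1 -
                sgf n (nf n (m' + Finsupp.single (Sum.inl 0) 1 + Finsupp.single (Sum.inr j) 1)))) := by
        rw [hexp]
        ring
      rw [lhs_eq]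
      exact add_mem hrel (add_mem (add_mem (Ideal.mul_mem_left _ _ I1)
        (Ideal.mul_mem_left _ _ I2)) (Ideal.mul_mem_left _ _ I3))
    · by_cases hdead : Dead n m
      · rw [nf_dead hdead, sgf_zero, sub_zero]
        exact dead_monomial_mem hdead
      · rw [nf, dif_neg hex, dif_neg hdead]; erw [sgf_single]
        show (monomial m 1 : P) - monomial (emb (Finsupp.comapDomain Sum.inl m Sum.inl_injective.injOn,
          Finsupp.comapDomain Sum.inr m Sum.inr_injective.injOn)) 1 ∈ JId n
        rw [emb_comap, sub_self]
        exact zero_mem _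

lemma key_C_poly (f : P) : f - sgf n (Nf n f) ∈ JId n := by
  induction f using MvPolynomial.induction_on' with
  | monomial m c =>
    have hmc : (monomial m c : P) = C c * monomial m 1 := by
      rw [← smul_eq_C_mul, smul_monomial, smul_eq_mul, mul_one]
    rw [Nf_monomial, sgf_smul, hmc, ← mul_sub]
    exact Ideal.mul_mem_left _ _ (key_C_aux (τdeg m) m le_rfl)
  | add p q hp hq =>
    rw [Nf_add, sgf_add]
    have : p + q - (sgf n (Nf n p) + sgf n (Nf n q))
        = (p - sgf n (Nf n p)) + (q - sgf n (Nf n q)) := by ring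
    rw [this]
    exact add_mem hp hq


----------------------------------------------------------------
-- the quotient map  q : P → A(n)  and its kernel
----------------------------------------------------------------

def qh (n : ℕ) : P →+* An kk τ₂ ρ₂ (n : ℤ) :=
  (Ideal.Quotient.mk (Iideal kk τ₂ ρ₂ (n : ℤ))).comp (mkDSA kk τ₂ ρ₂)

lemma qh_surjective : Function.Surjective (qh n) := by
  intro x
  obtain ⟨y, rfl⟩ := Ideal.Quotient.mk_surjective x
  obtain ⟨z, rfl⟩ := Ideal.Quotient.mk_surjective y
  exact ⟨z, rfl⟩

/-- the non-relation generators, downstairs -/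
def S2 (n : ℕ) : Set P :=
  {x | ∃ m : ℕ, (n : ℤ) + 1 ≤ (m : ℤ) ∧ x = tP kk m} ∪
    {x | ∃ i j : ℕ, 1 ≤ i ∧ (n : ℤ) + 1 ≤ (i : ℤ) + (j : ℤ) ∧ x = xP kk i ^ 2 ^ j}

lemma Iideal_eq_map : Iideal kk τ₂ ρ₂ (n : ℤ) = Ideal.map (mkDSA kk τ₂ ρ₂) (Ideal.span (S2 n)) := by
  rw [Iideal, Ideal.map_span]
  congr 1
  ext y
  constructor
  · rintro (⟨m, hm, rfl⟩ | ⟨i, j, h1, h2, rfl⟩)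
    · exact ⟨tP kk m, Or.inl ⟨m, hm, rfl⟩, rfl⟩
    · exact ⟨xP kk i ^ 2 ^ j, Or.inr ⟨i, j, h1, h2, rfl⟩, rfl⟩
  · rintro ⟨x, (⟨m, hm, rfl⟩ | ⟨i, j, h1, h2, rfl⟩), rfl⟩
    · exact Or.inl ⟨m, hm, rfl⟩
    · exact Or.inr ⟨i, j, h1, h2, rfl⟩

lemma ker_qh : RingHom.ker (qh n) = JId n := by
  have h1 : RingHom.ker (qh n) = Ideal.comap (mkDSA kk τ₂ ρ₂) (Iideal kk τ₂ ρ₂ (n : ℤ)) := by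
    ext x
    rw [RingHom.mem_ker, Ideal.mem_comap, qh, RingHom.comp_apply,
      Ideal.Quotient.eq_zero_iff_mem]
  rw [h1, Iideal_eq_map,
    Ideal.comap_map_of_surjective (mkDSA kk τ₂ ρ₂) Ideal.Quotient.mk_surjective]
  have hker : Ideal.comap (mkDSA kk τ₂ ρ₂) ⊥ = relIdeal kk τ₂ ρ₂ := by
    rw [← RingHom.ker_eq_comap_bot]
    exact Ideal.mk_ker
  rw [hker, show relIdeal kk τ₂ ρ₂ = Ideal.span (Set.range relP) from rfl,
    ← Ideal.span_union, JId, genSet, Set.union_comm]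
  rfl

lemma mem_JId_iff (f : P) : f ∈ JId n ↔ qh n f = 0 := by
  rw [← ker_qh, RingHom.mem_ker]

lemma qh_eq_of_sub_mem {f g : P} (h : f - g ∈ JId n) : qh n f = qh n g := by
  rw [mem_JId_iff, map_sub, sub_eq_zero] at h
  exact h

lemma qh_sgf_nf (f : P) : qh n f = qh n (sgf n (Nf n f)) :=
  qh_eq_of_sub_mem (key_C_poly f)

----------------------------------------------------------------
-- monP is the monomial attached to emb
----------------------------------------------------------------

lemma prod_X_pow (g : ℕ → MotVar) (E : ℕ →₀ ℕ) :
    (E.prod fun i e => (X (g i) : P) ^ e) = monomial (E.mapDomain g) 1 := by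
  induction E using Finsupp.induction with
  | zero => rw [Finsupp.prod_zero_index, Finsupp.mapDomain_zero, monomial_zero', C_1]
  | single_add a b E ha hb ih =>
    rw [Finsupp.prod_add_index' (fun i => pow_zero _) (fun i b c => pow_add _ _ _),
      Finsupp.prod_single_index (h := fun i e => (X (g i) : P) ^ e) (pow_zero _), ih,
      Finsupp.mapDomain_add, Finsupp.mapDomain_single, X_pow_eq_monomial, mono_mul_mono]

lemma monP_eq (E R : ℕ →₀ ℕ) : monP kk E R = monomial (emb (E, R)) 1 := by
  rw [monP]
  have h1 : (E.prod fun i e => tP kk i ^ e) = monomial (E.mapDomain Sum.inl) 1 :=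
    prod_X_pow Sum.inl E
  have h2 : (R.prod fun i r => xP kk (i + 1) ^ r) = monomial (R.mapDomain Sum.inr) 1 :=
    prod_X_pow Sum.inr R
  rw [h1, h2, mono_mul_mono]
  rfl


----------------------------------------------------------------
-- the twist H : kk → P, τ ↦ τ + ρ τ₀, ρ ↦ ρ
----------------------------------------------------------------

def Hmap : kk →ₐ[ZMod 2] P :=
  aeval fun i : Fin 2 => if i = 0 then C τ₂ + C ρ₂ * X (Sum.inl 0) else C ρ₂

lemma Hmap_X0 : Hmap (X 0) = C τ₂ + C ρ₂ * X (Sum.inl 0) := by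
  rw [Hmap, aeval_X]
  simp

lemma Hmap_X1 : Hmap (X 1) = C ρ₂ := by
  rw [Hmap, aeval_X]
  simp

lemma constantCoeff_Hmap (c : kk) : constantCoeff (Hmap c) = c := by
  induction c using MvPolynomial.induction_on with
  | C a => rw [Hmap, aeval_C, MvPolynomial.algebraMap_apply, MvPolynomial.algebraMap_eq, constantCoeff_C]
  | add p q hp hq => rw [map_add, map_add, hp, hq]
  | mul_X p i hp =>
    rw [map_mul, map_mul, hp]
    congr 1
    fin_cases i
    · show constantCoeff (Hmap (X 0)) = X 0
      rw [Hmap_X0]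
      show _ = τ₂
      simp [τ₂]
    · show constantCoeff (Hmap (X 1)) = X 1
      rw [Hmap_X1]
      show _ = ρ₂
      simp [ρ₂]

lemma Hsub_support_ne_zero {c : kk} {m : MotVar →₀ ℕ} (h : m ∈ (Hmap c - C c).support) :
    m ≠ 0 := by
  rintro rfl
  rw [MvPolynomial.mem_support_iff] at h
  apply h
  rw [← constantCoeff_eq, map_sub, constantCoeff_Hmap, constantCoeff_C, sub_self]

----------------------------------------------------------------
-- the twisted operator  T  and its unipotence
----------------------------------------------------------------

def Bf (n : ℕ) (h : Mdl n) : P := h.sum fun p c => monomial (emb p.1) 1 * Hmap c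

def Tmap (n : ℕ) (h : Mdl n) : Mdl n := Nf n (Bf n h)

def Umap (n : ℕ) (h : Mdl n) : Mdl n := Tmap n h - h

lemma Bf_zero : Bf n 0 = 0 := rfl

lemma Bf_add (a b : Mdl n) : Bf n (a + b) = Bf n a + Bf n b :=
  Finsupp.sum_add_index' (fun p => by rw [map_zero, mul_zero])
    (fun p b c => by rw [map_add, mul_add])

lemma Bf_single (p : IdxA n) (c : kk) : Bf n (Finsupp.single p c) = monomial (emb p.1) 1 * Hmap c :=
  Finsupp.sum_single_index (by rw [map_zero, mul_zero])

lemma Tmap_add (a b : Mdl n) : Tmap n (a + b) = Tmap n a + Tmap n b := by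
  rw [Tmap, Tmap, Tmap, Bf_add, Nf_add]

lemma Umap_add (a b : Mdl n) : Umap n (a + b) = Umap n a + Umap n b := by
  rw [Umap, Umap, Umap, Tmap_add]
  abel

lemma Umap_zero : Umap n 0 = 0 := by
  rw [Umap, Tmap, Bf_zero, Nf_zero, sub_zero]

/-- the difference part of `Bf` -/
def Df (n : ℕ) (h : Mdl n) : P := h.sum fun p c => monomial (emb p.1) 1 * (Hmap c - C c)

lemma Df_single (p : IdxA n) (c : kk) :
    Df n (Finsupp.single p c) = monomial (emb p.1) 1 * (Hmap c - C c) :=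
  Finsupp.sum_single_index (by rw [map_zero, map_zero, sub_zero, mul_zero])

lemma Umap_eq_Nf_Df (h : Mdl n) : Umap n h = Nf n (Df n h) := by
  induction h using Finsupp.induction_linear with
  | zero => rw [Umap_zero]; rfl
  | add a b ha hb =>
    rw [Umap_add, ha, hb, ← Nf_add]
    congr 1
    exact (Finsupp.sum_add_index' (fun p => by rw [map_zero, map_zero, sub_zero, mul_zero])
      (fun p b c => by rw [map_add, map_add]; ring)).symm
  | single p c =>
    rw [Umap, Tmap, Bf_single, Df_single, mul_sub, Nf_sub]
    congr 1
    rw [show (monomial (emb p.1) 1 : P) * C c = C c * monomial (emb p.1) 1 from mul_comm _ _,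
      Nf_C_mul, Nf_monomial, one_smul, nf_basis, Finsupp.smul_single, smul_eq_mul, mul_one]

lemma Nf_support {f : P} {p : IdxA n} (hp : p ∈ (Nf n f).support) :
    ∃ m ∈ f.support, p ∈ (nf n m).support := by
  have := Finsupp.support_sum hp
  rw [Finset.mem_biUnion] at this
  obtain ⟨m, hm, hpm⟩ := this
  exact ⟨m, hm, mem_support_smul hpm⟩

open scoped Pointwise in
lemma Df_support {h : Mdl n} {m : MotVar →₀ ℕ} (hm : m ∈ (Df n h).support) :
    ∃ q ∈ h.support, W q + 1 ≤ Wm m := by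
  rw [Df, Finsupp.sum] at hm
  have := MvPolynomial.support_sum hm
  rw [Finset.mem_biUnion] at this
  obtain ⟨q, hq, hmq⟩ := this
  refine ⟨q, hq, ?_⟩
  have := MvPolynomial.support_mul _ _ hmq
  rw [Finset.mem_add] at this
  obtain ⟨m₁, hm₁, m₂, hm₂, rfl⟩ := this
  have h1 : m₁ = emb q.1 := by
    have := support_monomial_subset hm₁
    simpa using this
  have h2 : 1 ≤ Wm m₂ := Wm_pos_of_ne_zero (Hsub_support_ne_zero hm₂)
  rw [Wm_add, h1]
  have : W q = Wm (emb q.1) := rfl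
  omega

lemma Umap_support {h : Mdl n} {p : IdxA n} (hp : p ∈ (Umap n h).support) :
    ∃ q ∈ h.support, W q + 1 ≤ W p := by
  rw [Umap_eq_Nf_Df] at hp
  obtain ⟨m, hm, hpm⟩ := Nf_support hp
  obtain ⟨q, hq, hqm⟩ := Df_support hm
  exact ⟨q, hq, le_trans hqm (nf_W hpm)⟩

lemma Umap_iter_support : ∀ (k : ℕ) (h : Mdl n) (p : IdxA n),
    p ∈ ((Umap n)^[k] h).support → ∃ q ∈ h.support, W q + k ≤ W p := by
  intro k
  induction k with
  | zero => exact fun h p hp => ⟨p, hp, by omega⟩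
  | succ k IH =>
    intro h p hp
    rw [Function.iterate_succ_apply'] at hp
    obtain ⟨q', hq', hWq'⟩ := Umap_support hp
    obtain ⟨q, hq, hWq⟩ := IH h q' hq'
    exact ⟨q, hq, by omega⟩

/-- bound for the weights of basis indices -/
def Bnd (n : ℕ) : ℕ := (n + 1) * 2 ^ (n + 1) + n * 2 ^ (n + 2)

lemma W_le_Bnd (p : IdxA n) : W p ≤ Bnd n := by
  obtain ⟨h1, h2, h3⟩ := p.2
  have hW : W p = (p.1.1.sum fun i e => e * wv (Sum.inl i)) +
      (p.1.2.sum fun i e => e * wv (Sum.inr i)) := by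
    rw [W, emb, Wm_add]
    congr 1
    · exact Finsupp.sum_mapDomain_index (fun i => by simp) (fun i a b => add_mul _ _ _)
    · exact Finsupp.sum_mapDomain_index (fun i => by simp) (fun i a b => add_mul _ _ _)
  have hE : (p.1.1.sum fun i e => e * wv (Sum.inl i)) ≤ (n + 1) * 2 ^ (n + 1) := by
    have hsub : p.1.1.support ⊆ Finset.range (n + 1) := by
      intro i hi
      rw [Finset.mem_range]
      by_contra hc
      exact absurd (h2 i (by omega)) (Finsupp.mem_support_iff.mp hi)
    calc p.1.1.sum (fun i e => e * wv (Sum.inl i)) ≤ p.1.1.support.card * 2 ^ (n + 1) := by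
          apply Finset.sum_le_card_nsmul
          intro i hi
          have hin : i < n + 1 := Finset.mem_range.mp (hsub hi)
          have : wv (Sum.inl i) ≤ 2 ^ (n + 1) := by
            have : (2:ℕ) ^ (i + 1) ≤ 2 ^ (n + 1) := Nat.pow_le_pow_right (by norm_num) (by omega)
            exact le_trans (Nat.sub_le _ _) this
          have he := h1 i
          calc p.1.1 i * wv (Sum.inl i) ≤ 1 * wv (Sum.inl i) := Nat.mul_le_mul_right _ he
            _ ≤ 2 ^ (n + 1) := by rw [one_mul]; exact this
      _ ≤ (n + 1) * 2 ^ (n + 1) := by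
          have := Finset.card_le_card hsub
          rw [Finset.card_range] at this
          exact Nat.mul_le_mul_right _ this
  have hR : (p.1.2.sum fun i e => e * wv (Sum.inr i)) ≤ n * 2 ^ (n + 2) := by
    have hsub : p.1.2.support ⊆ Finset.range n := by
      intro i hi
      rw [Finset.mem_range]
      by_contra hc
      have := h3 i
      have hni : n - i = 0 := by omega
      rw [hni, pow_zero] at this
      exact absurd (by omega : p.1.2 i = 0) (Finsupp.mem_support_iff.mp hi)
    calc p.1.2.sum (fun i e => e * wv (Sum.inr i)) ≤ p.1.2.support.card * 2 ^ (n + 2) := by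
          apply Finset.sum_le_card_nsmul
          intro i hi
          have hin : i < n := Finset.mem_range.mp (hsub hi)
          have hri : p.1.2 i ≤ 2 ^ (n - i) := le_of_lt (h3 i)
          have hwv : wv (Sum.inr i) ≤ 2 ^ (i + 2) := by
            exact Nat.sub_le _ _
          calc p.1.2 i * wv (Sum.inr i) ≤ 2 ^ (n - i) * 2 ^ (i + 2) :=
                Nat.mul_le_mul hri hwv
            _ = 2 ^ (n - i + (i + 2)) := (pow_add 2 _ _).symm
            _ = 2 ^ (n + 2) := by congr 1; omega
      _ ≤ n * 2 ^ (n + 2) := by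
          have := Finset.card_le_card hsub
          rw [Finset.card_range] at this
          exact Nat.mul_le_mul_right _ this
  rw [hW]
  rw [Bnd]
  omega

lemma Umap_iter_eq_zero (h : Mdl n) : (Umap n)^[Bnd n + 1] h = 0 := by
  have hs : ∀ p, p ∉ ((Umap n)^[Bnd n + 1] h).support := by
    intro p hp
    obtain ⟨q, _, hW⟩ := Umap_iter_support (Bnd n + 1) h p hp
    have := W_le_Bnd p
    omega
  exact Finsupp.support_eq_empty.mp (Finset.eq_empty_iff_forall_notMem.mpr hs)

lemma two_zero (x : Mdl n) : x + x = 0 := by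
  have h2 : (1 + 1 : kk) = 0 := by
    rw [← C_1, ← C_add, show (1 + 1 : ZMod 2) = 0 from rfl, C_0]
  calc x + x = ((1 : kk) + 1) • x := by rw [add_smul, one_smul]
    _ = 0 := by rw [h2, zero_smul]

lemma neg_eq_self (x : Mdl n) : -x = x :=
  neg_eq_of_add_eq_zero_left (two_zero x)


lemma Tmap_eq (h : Mdl n) : Tmap n h = h + Umap n h := by
  rw [Umap]
  abel

lemma Umap_sum {ι : Type*} (s : Finset ι) (f : ι → Mdl n) :
    Umap n (∑ i ∈ s, f i) = ∑ i ∈ s, Umap n (f i) := by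
  classical
  induction s using Finset.induction_on with
  | empty => rw [Finset.sum_empty, Finset.sum_empty, Umap_zero]
  | @insert a s hx ih =>
    rw [Finset.sum_insert hx, Finset.sum_insert hx, Umap_add, ih]

lemma Tmap_sub (a b : Mdl n) : Tmap n (a - b) = Tmap n a - Tmap n b := by
  have h := Tmap_add (n := n) (a - b) b
  rw [sub_add_cancel] at h
  rw [eq_sub_iff_add_eq, ← h]

lemma Tmap_injective : Function.Injective (Tmap n) := by
  intro a b hab
  have hx : Tmap n (a - b) = 0 := by rw [Tmap_sub, hab, sub_self]
  set x := a - b with hxdef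
  have hUx : Umap n x = x := by
    have h1 : x + Umap n x = 0 := by rw [← Tmap_eq, hx]
    have h2 : Umap n x = -x := by
      rw [neg_eq_of_add_eq_zero_right h1]
    rw [h2, neg_eq_self]
  have hk : ∀ k, (Umap n)^[k] x = x := by
    intro k
    induction k with
    | zero => rfl
    | succ k ih => rw [Function.iterate_succ_apply, hUx, ih]
  have : x = 0 := by rw [← hk (Bnd n + 1), Umap_iter_eq_zero]
  rw [hxdef, sub_eq_zero] at this
  exact this

lemma Tmap_surjective : Function.Surjective (Tmap n) := by
  intro g
  refine ⟨∑ k ∈ Finset.range (Bnd n + 1), (Umap n)^[k] g, ?_⟩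
  rw [Tmap_eq, Umap_sum]
  have hS2 : ∀ k, Umap n ((Umap n)^[k] g) = (Umap n)^[k+1] g := fun k =>
    (Function.iterate_succ_apply' _ _ _).symm
  rw [Finset.sum_congr rfl (fun k _ => hS2 k),
    Finset.sum_range_succ' (fun k => (Umap n)^[k] g) (Bnd n),
    Finset.sum_range_succ (fun k => (Umap n)^[k+1] g) (Bnd n),
    Umap_iter_eq_zero, add_zero]
  show (∑ k ∈ Finset.range (Bnd n), (Umap n)^[k+1] g) + g
      + (∑ k ∈ Finset.range (Bnd n), (Umap n)^[k+1] g) = g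
  set S := ∑ k ∈ Finset.range (Bnd n), (Umap n)^[k+1] g
  calc S + g + S = g + (S + S) := by abel
    _ = g := by rw [two_zero, add_zero]

end St4

open St4 in
lemma etaR_eq (ηR : kk →ₐ[ZMod 2] DSA kk τ₂ ρ₂)
    (hτ : ηR τ₂ = algebraMap kk (DSA kk τ₂ ρ₂) τ₂ +
      algebraMap kk (DSA kk τ₂ ρ₂) ρ₂ * mkDSA kk τ₂ ρ₂ (tP kk 0))
    (hρ : ηR ρ₂ = algebraMap kk (DSA kk τ₂ ρ₂) ρ₂) (c : kk) :
    ηR c = mkDSA kk τ₂ ρ₂ (Hmap c) := by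
  have hAM : ∀ x : kk, algebraMap kk (DSA kk τ₂ ρ₂) x = mkDSA kk τ₂ ρ₂ (C x) := by
    intro x
    rw [← MvPolynomial.algebraMap_eq, mkDSA, Ideal.Quotient.mk_algebraMap]
  induction c using MvPolynomial.induction_on with
  | C a => rw [← MvPolynomial.algebraMap_eq, AlgHom.commutes, AlgHom.commutes, mkDSA, Ideal.Quotient.mk_algebraMap]
  | add p q hp hq => rw [map_add, map_add, map_add, hp, hq]
  | mul_X p i hp =>
    rw [map_mul, map_mul, map_mul, hp]
    congr 1
    fin_cases i
    · show ηR τ₂ = mkDSA kk τ₂ ρ₂ (Hmap (X 0))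
      rw [hτ, Hmap_X0, map_add, map_mul, hAM, hAM]
      rfl
    · show ηR ρ₂ = mkDSA kk τ₂ ρ₂ (Hmap (X 1))
      rw [hρ, Hmap_X1, hAM]


open St4 in
/-- For every `n ≥ 0`, `A(n)` regarded as a `k`-module via the right
unit `π_n ∘ η_R` is free with basis the monomials `τ^E ξ^R` with `e_s ∈ {0,1}` for
`0 ≤ s ≤ n` and `0 ≤ r_s < 2^{n+1-s}` for `1 ≤ s ≤ n`: every element of `A(n)` is
uniquely a finite sum `Σ τ^E ξ^R · π_n(η_R(h_{E,R}))`. -/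
theorem statement4 (ηR : kk →ₐ[ZMod 2] DSA kk τ₂ ρ₂)
    (hτ : ηR τ₂ = algebraMap kk (DSA kk τ₂ ρ₂) τ₂ +
      algebraMap kk (DSA kk τ₂ ρ₂) ρ₂ * mkDSA kk τ₂ ρ₂ (tP kk 0))
    (hρ : ηR ρ₂ = algebraMap kk (DSA kk τ₂ ρ₂) ρ₂) (n : ℕ) :
    Function.Bijective
      (fun h : IdxA n →₀ kk =>
        h.sum fun p c =>
          Ideal.Quotient.mk (Iideal kk τ₂ ρ₂ n) (mkDSA kk τ₂ ρ₂ (monP kk p.1.1 p.1.2)) *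
            Ideal.Quotient.mk (Iideal kk τ₂ ρ₂ n) (ηR c)) := by
  have hfun : (fun h : IdxA n →₀ kk =>
      h.sum fun p c =>
        Ideal.Quotient.mk (Iideal kk τ₂ ρ₂ n) (mkDSA kk τ₂ ρ₂ (monP kk p.1.1 p.1.2)) *
          Ideal.Quotient.mk (Iideal kk τ₂ ρ₂ n) (ηR c)) = fun h => qh n (Bf n h) := by
    funext h
    rw [Bf, map_finsuppSum]
    apply Finsupp.sum_congr
    intro p _
    rw [map_mul]
    congr 1
    · have hm : monP kk p.1.1 p.1.2 = monomial (emb p.1) 1 := monP_eq p.1.1 p.1.2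
      rw [hm]
      rfl
    · rw [etaR_eq ηR hτ hρ]
      rfl
  rw [hfun]
  have h2 : (fun h : Mdl n => qh n (Bf n h)) = (fun x => qh n (sgf n x)) ∘ (Tmap n) :=
    funext fun h => qh_sgf_nf (Bf n h)
  rw [h2]
  refine Function.Bijective.comp ⟨?_, ?_⟩ ⟨Tmap_injective, Tmap_surjective⟩
  · intro x y hxy
    have hmem : sgf n x - sgf n y ∈ JId n := by
      rw [mem_JId_iff, map_sub, sub_eq_zero]
      exact hxy
    have h0 : Nf n (sgf n x - sgf n y) = 0 := by
      have := Nf_J hmem (1 : P)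
      rwa [one_mul] at this
    rw [Nf_sub, Nf_sgf, Nf_sgf, sub_eq_zero] at h0
    exact h0
  · intro x
    obtain ⟨f, rfl⟩ := qh_surjective x
    exact ⟨Nf n f, (qh_sgf_nf f).symm⟩

end
end
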